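/- arXiv:2002.06858 — 7 statements merged into one kernel-verified Lean document; each statement's English description precedes it below -/
import Mathlib

section
/- Let α ∈ (0,1] and β = √(1−α²). Suppose f : ℝ → ℝ³ is twice continuously differentiable, satisfies |f(x)| = 1 for all x ∈ ℝ, and solves the shrinker-profile equation α f''(x) + α|f'(x)|² f(x) + β (f × f')'(x) − (x/2) f'(x) = 0 for all x ∈ ℝ. Then there exists a constant c ≥ 0 such that |f'(x)| = c·e^{α x²/4} for all x ∈ ℝ. -/
noncomputable section

open Real

abbrev E3 := EuclideanSpace ℝ (Fin 3)

/-- The usual cross product on `ℝ³`. -/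
def cross3 (u v : E3) : E3 :=
  (WithLp.equiv 2 (Fin 3 → ℝ)).symm
    ![u 1 * v 2 - u 2 * v 1, u 2 * v 0 - u 0 * v 2, u 0 * v 1 - u 1 * v 0]

lemma cross3_apply (u v : E3) (i : Fin 3) : cross3 u v i =
    ![u 1 * v 2 - u 2 * v 1, u 2 * v 0 - u 0 * v 2, u 0 * v 1 - u 1 * v 0] i := rfl

lemma inner3 (u v : E3) : (inner ℝ u v : ℝ) = u 0 * v 0 + u 1 * v 1 + u 2 * v 2 := by
  simp [PiLp.inner_apply, Fin.sum_univ_three, mul_comm]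

lemma cross3_cyclic (u v w : E3) : (inner ℝ (cross3 u v) w : ℝ) = -(inner ℝ (cross3 u w) v : ℝ) := by
  simp [inner3, cross3_apply, Fin.sum_univ_three]; ring

lemma cross3_lagrange (u v w : E3) : (inner ℝ (cross3 u w) (cross3 u v) : ℝ) =
    (inner ℝ u u : ℝ) * (inner ℝ w v) - (inner ℝ u v : ℝ) * (inner ℝ w u) := by
  simp only [inner3]; simp [cross3_apply]; ring

lemma cross3_inner_left (u v : E3) : (inner ℝ (cross3 u v) u : ℝ) = 0 := by
  simp [inner3, cross3_apply, Fin.sum_univ_three]; ring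

lemma cross3_inner_right (u v : E3) : (inner ℝ (cross3 u v) v : ℝ) = 0 := by
  simp [inner3, cross3_apply, Fin.sum_univ_three]; ring

lemma cross3_self (v : E3) : cross3 v v = 0 := by
  ext i; fin_cases i <;> simp [cross3_apply] <;> ring

/-- `cross3` as a bilinear map. -/
def crossLM : E3 →ₗ[ℝ] E3 →ₗ[ℝ] E3 :=
  LinearMap.mk₂ ℝ cross3
    (fun u u' v => by ext i; fin_cases i <;>
      simp [cross3_apply, PiLp.add_apply] <;> ring)
    (fun c u v => by ext i; fin_cases i <;>
      simp [cross3_apply, PiLp.smul_apply, smul_eq_mul] <;> ring)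
    (fun u v v' => by ext i; fin_cases i <;>
      simp [cross3_apply, PiLp.add_apply] <;> ring)
    (fun c u v => by ext i; fin_cases i <;>
      simp [cross3_apply, PiLp.smul_apply, smul_eq_mul] <;> ring)

/-- `cross3` as a continuous bilinear map. -/
def crossCLM : E3 →L[ℝ] E3 →L[ℝ] E3 :=
  LinearMap.toContinuousLinearMap
    (((LinearMap.toContinuousLinearMap :
        (E3 →ₗ[ℝ] E3) ≃ₗ[ℝ] (E3 →L[ℝ] E3)) : (E3 →ₗ[ℝ] E3) →ₗ[ℝ] (E3 →L[ℝ] E3)).comp crossLM)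

lemma crossCLM_apply (u v : E3) : crossCLM u v = cross3 u v := rfl

lemma hasDerivAt_cross {f g : ℝ → E3} {f' g' : E3} {x : ℝ}
    (hf : HasDerivAt f f' x) (hg : HasDerivAt g g' x) :
    HasDerivAt (fun y => cross3 (f y) (g y)) (cross3 f' (g x) + cross3 (f x) g') x := by
  have h1 : HasDerivAt (fun y => crossCLM (f y)) (crossCLM f') x :=
    crossCLM.hasFDerivAt.comp_hasDerivAt x hf
  have := h1.clm_apply hg
  simpa [crossCLM_apply] using this

theorem stmt0 (α β : ℝ) (hα : α ∈ Set.Ioc (0 : ℝ) 1) (hβ : β = Real.sqrt (1 - α ^ 2))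
    (f : ℝ → E3) (hf : ContDiff ℝ 2 f) (hunit : ∀ x : ℝ, ‖f x‖ = 1)
    (heq : ∀ x : ℝ,
      α • deriv (deriv f) x + (α * ‖deriv f x‖ ^ 2) • f x
        + β • deriv (fun y => cross3 (f y) (deriv f y)) x - (x / 2) • deriv f x = 0) :
    ∃ c : ℝ, 0 ≤ c ∧ ∀ x : ℝ, ‖deriv f x‖ = c * Real.exp (α * x ^ 2 / 4) := by
  obtain ⟨hα0, hα1⟩ := hα
  have hβ2 : β ^ 2 = 1 - α ^ 2 := by
    rw [hβ, Real.sq_sqrt]; nlinarith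
  -- differentiability
  have h2 : ContDiff ℝ ((1 : ℕ∞) + 1) f := by norm_num; exact_mod_cast hf
  have hdf : Differentiable ℝ f := hf.differentiable two_ne_zero
  have hcdf' : ContDiff ℝ 1 (deriv f) := (contDiff_succ_iff_deriv.mp h2).2.2
  have hdf' : Differentiable ℝ (deriv f) := hcdf'.differentiable one_ne_zero
  have Hf : ∀ x, HasDerivAt f (deriv f x) x := fun x => (hdf x).hasDerivAt
  have Hf' : ∀ x, HasDerivAt (deriv f) (deriv (deriv f) x) x := fun x => (hdf' x).hasDerivAt
  -- orthogonality ⟪f, f'⟫ = 0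
  have horth : ∀ x, (inner ℝ (f x) (deriv f x) : ℝ) = 0 := by
    intro x
    have h1 : HasDerivAt (fun y => (inner ℝ (f y) (f y) : ℝ))
        ((inner ℝ (f x) (deriv f x) : ℝ) + inner ℝ (deriv f x) (f x)) x :=
      HasDerivAt.inner ℝ (Hf x) (Hf x)
    have h2 : (fun y => (inner ℝ (f y) (f y) : ℝ)) = fun _ => (1 : ℝ) := by
      funext y
      rw [real_inner_self_eq_norm_mul_norm, hunit y, one_mul]
    rw [h2] at h1
    have h3 := h1.unique (hasDerivAt_const x 1)
    have hcomm := real_inner_comm (f x) (deriv f x)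
    linarith
  -- derivative of the cross term
  have hc : ∀ x, deriv (fun y => cross3 (f y) (deriv f y)) x
      = cross3 (f x) (deriv (deriv f) x) := by
    intro x
    have := (hasDerivAt_cross (Hf x) (Hf' x)).deriv
    rwa [cross3_self, zero_add] at this
  -- the squared speed g and its derivative
  set g : ℝ → ℝ := fun x => (inner ℝ (deriv f x) (deriv f x) : ℝ) with hg_def
  have hgnorm : ∀ x, g x = ‖deriv f x‖ ^ 2 := fun x => real_inner_self_eq_norm_sq _
  have Hg : ∀ x, HasDerivAt g (2 * (inner ℝ (deriv f x) (deriv (deriv f) x) : ℝ)) x := by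
    intro x
    have h1 := HasDerivAt.inner ℝ (Hf' x) (Hf' x)
    have : (inner ℝ (deriv f x) (deriv (deriv f) x) : ℝ)
        + inner ℝ (deriv (deriv f) x) (deriv f x)
        = 2 * (inner ℝ (deriv f x) (deriv (deriv f) x) : ℝ) := by
      rw [real_inner_comm (deriv (deriv f) x) (deriv f x)]; ring
    rw [this] at h1
    exact h1
  -- take inner ℝ products of the equation
  have key : ∀ x (w : E3),
      α * (inner ℝ (deriv (deriv f) x) w : ℝ)
        + (α * ‖deriv f x‖ ^ 2) * (inner ℝ (f x) w : ℝ)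
        + β * (inner ℝ (cross3 (f x) (deriv (deriv f) x)) w : ℝ)
        - (x / 2) * (inner ℝ (deriv f x) w : ℝ) = 0 := by
    intro x w
    have h0 := congrArg (fun v : E3 => (inner ℝ v w : ℝ)) (heq x)
    simp only [inner_add_left, inner_sub_left, real_inner_smul_left, inner_zero_left,
      hc x, RCLike.star_def, starRingEnd_apply, star_trivial] at h0
    exact h0
  -- ODE for g: g' = α x g
  have hode : ∀ x, (inner ℝ (deriv f x) (deriv (deriv f) x) : ℝ) = α * x * g x / 2 := by
    intro x
    set I : ℝ := (inner ℝ (deriv f x) (deriv (deriv f) x) : ℝ) with hI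
    set D : ℝ := (inner ℝ (cross3 (f x) (deriv (deriv f) x)) (deriv f x) : ℝ) with hD
    -- equation dotted with f'
    have e1 := key x (deriv f x)
    have k1 : (inner ℝ (deriv (deriv f) x) (deriv f x) : ℝ) = I :=
      (real_inner_comm _ _).trans hI.symm
    have k2 : (inner ℝ (deriv f x) (deriv f x) : ℝ) = g x := rfl
    rw [k1, k2, horth x, ← hD] at e1
    have e1' : α * I + β * D - x / 2 * g x = 0 := by linarith
    -- equation dotted with cross3 f f'
    have e2 := key x (cross3 (f x) (deriv f x))
    have c1 : (inner ℝ (f x) (cross3 (f x) (deriv f x)) : ℝ) = 0 := by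
      rw [real_inner_comm]; exact cross3_inner_left _ _
    have c2 : (inner ℝ (deriv f x) (cross3 (f x) (deriv f x)) : ℝ) = 0 := by
      rw [real_inner_comm]; exact cross3_inner_right _ _
    have c3 : (inner ℝ (cross3 (f x) (deriv (deriv f) x)) (cross3 (f x) (deriv f x)) : ℝ)
        = (inner ℝ (deriv f x) (deriv (deriv f) x) : ℝ) := by
      rw [cross3_lagrange, real_inner_self_eq_norm_mul_norm, hunit x, horth x,
        real_inner_comm (deriv (deriv f) x) (deriv f x)]
      ring
    have c4 : (inner ℝ (deriv (deriv f) x) (cross3 (f x) (deriv f x)) : ℝ) = -D := by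
      rw [real_inner_comm, cross3_cyclic, hD]
    rw [c1, c2, c3, c4, ← hI] at e2
    -- e2 : α * (-D) + stuff * 0 + β * I - (x/2) * 0 = 0
    have hDval : α * D = β * I := by linarith
    have hfin : (α ^ 2 + β ^ 2) * I = α * (x / 2) * g x := by
      linear_combination α * e1' - β * hDval
    rw [hβ2] at hfin
    linear_combination hfin
  have Hg' : ∀ x, HasDerivAt g (α * x * g x) x := by
    intro x
    have := Hg x
    rw [hode x] at this
    simpa [mul_div_assoc] using (by linarith : 2 * (α * x * g x / 2) = α * x * g x) ▸ this
  -- the auxiliary constant function h = g · exp(-αx²/2)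
  set h : ℝ → ℝ := fun x => g x * Real.exp (-(α * x ^ 2 / 2)) with hh_def
  have Hh : ∀ x, HasDerivAt h 0 x := by
    intro x
    have hp : HasDerivAt (fun y : ℝ => -(α * y ^ 2 / 2)) (-(α * x)) x := by
      have := ((hasDerivAt_pow 2 x).const_mul α).div_const 2
      have h2 := this.neg
      refine h2.congr_deriv ?_
      push_cast
      ring
    have he : HasDerivAt (fun y : ℝ => Real.exp (-(α * y ^ 2 / 2)))
        (Real.exp (-(α * x ^ 2 / 2)) * (-(α * x))) x := hp.exp
    have := (Hg' x).mul he
    refine this.congr_deriv ?_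
    ring
  have hconst : ∀ x, h x = h 0 := by
    intro x
    exact is_const_of_deriv_eq_zero (fun y => (Hh y).differentiableAt)
      (fun y => (Hh y).deriv) x 0
  have hgval : ∀ x, g x = g 0 * Real.exp (α * x ^ 2 / 2) := by
    intro x
    have hx : g x * Real.exp (-(α * x ^ 2 / 2)) = g 0 := by
      have h1 := hconst x
      simp only [hh_def] at h1
      norm_num at h1
      exact h1
    have h2 := congrArg (fun t => t * Real.exp (α * x ^ 2 / 2)) hx
    rw [mul_assoc, ← Real.exp_add, neg_add_cancel, Real.exp_zero, mul_one] at h2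
    exact h2
  refine ⟨‖deriv f 0‖, norm_nonneg _, fun x => ?_⟩
  have hsq : ‖deriv f x‖ ^ 2 = (‖deriv f 0‖ * Real.exp (α * x ^ 2 / 4)) ^ 2 := by
    rw [← hgnorm x, hgval x, hgnorm 0, mul_pow]
    congr 1
    rw [← Real.exp_nat_mul]
    congr 1
    push_cast
    ring
  have := congrArg Real.sqrt hsq
  rwa [Real.sqrt_sq (norm_nonneg _), Real.sqrt_sq (by positivity)] at this
end
end

section
/- Fix α ∈ (0,1], β = √(1−α²) and c > 0. Let (m, n, b) : ℝ → ℝ³ × ℝ³ × ℝ³ solve the Serret–Frenet system m' = k n, n' = −k m + τ b, b' = −τ n with k(x) = c·e^{α x²/4}, τ(x) = −βx/2, and initial conditions m(0) = (1,0,0), n(0) = (0,1,0), b(0) = (0,0,1). Write m = (m₁, m₂, m₃). Then m₁ is even and m₂ and m₃ are odd: for all x ∈ ℝ, m₁(−x) = m₁(x), m₂(−x) = −m₂(x), and m₃(−x) = −m₃(x). -/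
noncomputable section

open Real

/-- The reflection `diag(1,-1,-1)` on `ℝ³`. -/
noncomputable def Rmap : E3 →L[ℝ] E3 :=
  LinearMap.toContinuousLinearMap
  { toFun := fun v => WithLp.toLp 2 (fun i => if i = 0 then v i else -v i)
    map_add' := by
      intro v w
      ext i
      by_cases h : i = 0 <;> simp [h] <;> ring
    map_smul' := by
      intro a v
      ext i
      by_cases h : i = 0 <;> simp [h] }

lemma Rmap_apply (v : E3) (i : Fin 3) : Rmap v i = if i = 0 then v i else -v i := rfl

set_option maxHeartbeats 1000000 in
theorem stmt5 (α β c : ℝ) (hα : α ∈ Set.Ioc (0 : ℝ) 1) (hβ : β = Real.sqrt (1 - α ^ 2))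
    (hc : 0 < c) (m n b : ℝ → E3)
    (hmdiff : Differentiable ℝ m) (hndiff : Differentiable ℝ n) (hbdiff : Differentiable ℝ b)
    (hm : ∀ x : ℝ, deriv m x = (c * Real.exp (α * x ^ 2 / 4)) • n x)
    (hn : ∀ x : ℝ, deriv n x
      = -((c * Real.exp (α * x ^ 2 / 4)) • m x) + (-(β * x / 2)) • b x)
    (hb : ∀ x : ℝ, deriv b x = -((-(β * x / 2)) • n x))
    (hm0 : m 0 = EuclideanSpace.single (0 : Fin 3) (1 : ℝ))
    (hn0 : n 0 = EuclideanSpace.single (1 : Fin 3) (1 : ℝ))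
    (hb0 : b 0 = EuclideanSpace.single (2 : Fin 3) (1 : ℝ)) :
    ∀ x : ℝ, m (-x) 0 = m x 0 ∧ m (-x) 1 = -(m x 1) ∧ m (-x) 2 = -(m x 2) := by
  intro x
  obtain ⟨hα0, hα1⟩ := hα
  have hβ0 : 0 ≤ β := hβ ▸ Real.sqrt_nonneg _
  set T : ℝ := |x| + 1 with hTdef
  have hT0 : 0 < T := by positivity
  -- clamped coefficients
  set kc : ℝ → ℝ := fun t => c * Real.exp (α * min (t ^ 2) (T ^ 2) / 4) with hkcdef
  set τc : ℝ → ℝ := fun t => -(β * (max (-T) (min T t)) / 2) with hτcdef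
  set kb : ℝ := c * Real.exp (α * T ^ 2 / 4) with hkbdef
  set τb : ℝ := β * T / 2 with hτbdef
  have hkb0 : 0 < kb := by rw [hkbdef]; positivity
  have hτb0 : 0 ≤ τb := by
    rw [hτbdef]; exact div_nonneg (mul_nonneg hβ0 hT0.le) (by norm_num)
  have hkb : ∀ t, |kc t| ≤ kb := by
    intro t
    have hpos : 0 < kc t := by rw [hkcdef]; positivity
    rw [abs_of_pos hpos, hkcdef, hkbdef]
    show c * Real.exp (α * min (t ^ 2) (T ^ 2) / 4) ≤ c * Real.exp (α * T ^ 2 / 4)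
    gcongr <;> first
      | exact hα0.le
      | exact min_le_right _ _
  have hτb : ∀ t, |τc t| ≤ τb := by
    intro t
    have hu : |max (-T) (min T t)| ≤ T := by
      rw [abs_le]
      exact ⟨le_max_left _ _, max_le (by linarith) (min_le_left _ _)⟩
    rw [hτcdef, hτbdef]
    simp only
    rw [abs_neg, abs_div, abs_mul, abs_of_nonneg hβ0]
    have h2 : |(2 : ℝ)| = 2 := by norm_num
    rw [h2]
    nlinarith [abs_nonneg (max (-T) (min T t))]
  -- the vector field
  set v : ℝ → (E3 × E3 × E3) → (E3 × E3 × E3) := fun t y =>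
    (kc t • y.2.1, -(kc t • y.1) + τc t • y.2.2, -(τc t • y.2.1)) with hvdef
  have hco : (((kb + τb).toNNReal : NNReal) : ℝ) = kb + τb :=
    Real.coe_toNNReal _ (by positivity)
  have hv : ∀ t, LipschitzWith (kb + τb).toNNReal (v t) := by
    intro t
    apply LipschitzWith.of_dist_le_mul
    intro y z
    have d1 : dist y.1 z.1 ≤ dist y z := by
      rw [Prod.dist_eq]; exact le_max_left _ _
    have d2 : dist y.2.1 z.2.1 ≤ dist y z := by
      calc dist y.2.1 z.2.1 ≤ dist y.2 z.2 := by rw [Prod.dist_eq]; exact le_max_left _ _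
        _ ≤ dist y z := by rw [Prod.dist_eq]; exact le_max_right _ _
    have d3 : dist y.2.2 z.2.2 ≤ dist y z := by
      calc dist y.2.2 z.2.2 ≤ dist y.2 z.2 := by rw [Prod.dist_eq]; exact le_max_right _ _
        _ ≤ dist y z := by rw [Prod.dist_eq]; exact le_max_right _ _
    have dnn : (0 : ℝ) ≤ dist y z := dist_nonneg
    rw [hco, hvdef]
    simp only
    rw [Prod.dist_eq, Prod.dist_eq]
    have hknn : (0 : ℝ) ≤ |kc t| := abs_nonneg _
    have hτnn : (0 : ℝ) ≤ |τc t| := abs_nonneg _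
    refine max_le ?_ (max_le ?_ ?_)
    · rw [dist_smul₀, Real.norm_eq_abs]
      nlinarith [hkb t, dist_nonneg (x := y.2.1) (y := z.2.1)]
    · calc dist (-(kc t • y.1) + τc t • y.2.2) (-(kc t • z.1) + τc t • z.2.2)
          ≤ dist (-(kc t • y.1)) (-(kc t • z.1)) + dist (τc t • y.2.2) (τc t • z.2.2) :=
            dist_add_add_le _ _ _ _
        _ = |kc t| * dist y.1 z.1 + |τc t| * dist y.2.2 z.2.2 := by
            rw [dist_neg_neg, dist_smul₀, dist_smul₀, Real.norm_eq_abs, Real.norm_eq_abs]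
        _ ≤ (kb + τb) * dist y z := by
            nlinarith [hkb t, hτb t, dist_nonneg (x := y.1) (y := z.1),
              dist_nonneg (x := y.2.2) (y := z.2.2)]
    · rw [dist_neg_neg, dist_smul₀, Real.norm_eq_abs]
      nlinarith [hτb t, dist_nonneg (x := y.2.1) (y := z.2.1)]
  -- coefficients agree with the true ones on the interval
  have hkeq : ∀ t ∈ Set.Ioo (-T) T, kc t = c * Real.exp (α * t ^ 2 / 4) := by
    intro t ht
    have : min (t ^ 2) (T ^ 2) = t ^ 2 := min_eq_left (by nlinarith [ht.1, ht.2])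
    rw [hkcdef]; simp only [this]
  have hτeq : ∀ t ∈ Set.Ioo (-T) T, τc t = -(β * t / 2) := by
    intro t ht
    have h1 : min T t = t := min_eq_right ht.2.le
    have h2 : max (-T) t = t := max_eq_right ht.1.le
    rw [hτcdef]; simp only [h1, h2]
  -- the two solutions
  set F : ℝ → E3 × E3 × E3 :=
    fun t => (Rmap (m (-t)), (-Rmap (n (-t)), -Rmap (b (-t)))) with hFdef
  set G : ℝ → E3 × E3 × E3 := fun t => (m t, (n t, b t)) with hGdef
  have hFc : Continuous F := by
    rw [hFdef]
    exact ((Rmap.continuous.comp (hmdiff.continuous.comp continuous_neg)).prodMk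
      (((Rmap.continuous.comp (hndiff.continuous.comp continuous_neg)).neg).prodMk
        ((Rmap.continuous.comp (hbdiff.continuous.comp continuous_neg)).neg))
    )
  have hGc : Continuous G := by
    rw [hGdef]
    exact hmdiff.continuous.prodMk (hndiff.continuous.prodMk hbdiff.continuous)
  have hG' : ∀ t ∈ Set.Ioo (-T) T, HasDerivAt G (v t (G t)) t := by
    intro t ht
    have h1 : HasDerivAt m ((c * Real.exp (α * t ^ 2 / 4)) • n t) t :=
      hm t ▸ (hmdiff t).hasDerivAt
    have h2 : HasDerivAt n (-((c * Real.exp (α * t ^ 2 / 4)) • m t) + (-(β * t / 2)) • b t) t :=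
      hn t ▸ (hndiff t).hasDerivAt
    have h3 : HasDerivAt b (-((-(β * t / 2)) • n t)) t := hb t ▸ (hbdiff t).hasDerivAt
    have := HasDerivAt.prodMk h1 (HasDerivAt.prodMk h2 h3)
    rw [hGdef, hvdef]
    simp only
    rw [hkeq t ht, hτeq t ht]
    exact this
  have hF' : ∀ t ∈ Set.Ioo (-T) T, HasDerivAt F (v t (F t)) t := by
    intro t ht
    have hmn : HasDerivAt (fun s : ℝ => m (-s))
        ((-1 : ℝ) • ((c * Real.exp (α * (-t) ^ 2 / 4)) • n (-t))) t := by
      have h1 : HasDerivAt m ((c * Real.exp (α * (-t) ^ 2 / 4)) • n (-t)) (-t) :=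
        hm (-t) ▸ (hmdiff (-t)).hasDerivAt
      exact HasDerivAt.scomp t h1 (hasDerivAt_neg t)
    have hnn : HasDerivAt (fun s : ℝ => n (-s))
        ((-1 : ℝ) • (-((c * Real.exp (α * (-t) ^ 2 / 4)) • m (-t))
          + (-(β * (-t) / 2)) • b (-t))) t := by
      have h1 : HasDerivAt n
          (-((c * Real.exp (α * (-t) ^ 2 / 4)) • m (-t)) + (-(β * (-t) / 2)) • b (-t)) (-t) :=
        hn (-t) ▸ (hndiff (-t)).hasDerivAt
      exact HasDerivAt.scomp t h1 (hasDerivAt_neg t)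
    have hbn : HasDerivAt (fun s : ℝ => b (-s))
        ((-1 : ℝ) • (-((-(β * (-t) / 2)) • n (-t)))) t := by
      have h1 : HasDerivAt b (-((-(β * (-t) / 2)) • n (-t))) (-t) :=
        hb (-t) ▸ (hbdiff (-t)).hasDerivAt
      exact HasDerivAt.scomp t h1 (hasDerivAt_neg t)
    have h1 : HasDerivAt (fun s : ℝ => Rmap (m (-s)))
        (Rmap ((-1 : ℝ) • ((c * Real.exp (α * (-t) ^ 2 / 4)) • n (-t)))) t :=
      Rmap.hasFDerivAt.comp_hasDerivAt t hmn
    have h2 : HasDerivAt (fun s : ℝ => -Rmap (n (-s)))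
        (-(Rmap ((-1 : ℝ) • (-((c * Real.exp (α * (-t) ^ 2 / 4)) • m (-t))
          + (-(β * (-t) / 2)) • b (-t))))) t :=
      (Rmap.hasFDerivAt.comp_hasDerivAt t hnn).neg
    have h3 : HasDerivAt (fun s : ℝ => -Rmap (b (-s)))
        (-(Rmap ((-1 : ℝ) • (-((-(β * (-t) / 2)) • n (-t)))))) t :=
      (Rmap.hasFDerivAt.comp_hasDerivAt t hbn).neg
    have hD := HasDerivAt.prodMk h1 (HasDerivAt.prodMk h2 h3)
    rw [hFdef, hvdef]
    simp only
    have hveq : (kc t • (-Rmap (n (-t))),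
        (-(kc t • Rmap (m (-t))) + τc t • (-Rmap (b (-t))),
          -(τc t • (-Rmap (n (-t)))))) =
        (Rmap ((-1 : ℝ) • ((c * Real.exp (α * (-t) ^ 2 / 4)) • n (-t))),
          (-(Rmap ((-1 : ℝ) • (-((c * Real.exp (α * (-t) ^ 2 / 4)) • m (-t))
            + (-(β * (-t) / 2)) • b (-t)))),
            -(Rmap ((-1 : ℝ) • (-((-(β * (-t) / 2)) • n (-t))))))) := by
      have ht2 : (-t) ^ 2 = t ^ 2 := by ring
      rw [ht2, hkeq t ht, hτeq t ht]
      simp only [Prod.mk.injEq]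
      refine ⟨?_, ?_, ?_⟩
      · rw [map_smul, map_smul]
        module
      · rw [map_smul, map_add, map_neg, map_smul, map_smul]
        module
      · rw [map_smul, map_neg, map_smul]
        module
    rw [hveq]
    exact hD
  have heq0 : F 0 = G 0 := by
    rw [hFdef, hGdef]
    simp only [neg_zero, hm0, hn0, hb0, Prod.mk.injEq]
    refine ⟨?_, ?_, ?_⟩
    · ext i
      fin_cases i <;> simp [Rmap_apply, EuclideanSpace.single_apply]
    · ext i
      fin_cases i <;> simp [Rmap_apply, EuclideanSpace.single_apply]
    · ext i
      fin_cases i <;> simp [Rmap_apply, EuclideanSpace.single_apply]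
  have h0mem : (0 : ℝ) ∈ Set.Ioo (-T) T := ⟨by linarith, by linarith⟩
  have huniq : Set.EqOn F G (Set.Icc (-T) T) :=
    ODE_solution_unique_of_mem_Icc (v := v) (K := (kb + τb).toNNReal)
      (s := fun _ => Set.univ)
      (fun t _ => (hv t).lipschitzOnWith) h0mem hFc.continuousOn hF'
      (fun _ _ => Set.mem_univ _) hGc.continuousOn hG'
      (fun _ _ => Set.mem_univ _) heq0
  have hxmem : x ∈ Set.Icc (-T) T :=
    ⟨by rw [hTdef]; nlinarith [neg_abs_le x], by rw [hTdef]; nlinarith [le_abs_self x]⟩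
  have hFG := huniq hxmem
  rw [hFdef, hGdef] at hFG
  simp only [Prod.mk.injEq] at hFG
  obtain ⟨h1, -, -⟩ := hFG
  have h10 : Rmap (m (-x)) 0 = m x 0 := by rw [h1]
  have h11 : Rmap (m (-x)) 1 = m x 1 := by rw [h1]
  have h12 : Rmap (m (-x)) 2 = m x 2 := by rw [h1]
  rw [Rmap_apply, if_pos rfl] at h10
  rw [Rmap_apply, if_neg (by decide)] at h11
  rw [Rmap_apply, if_neg (by decide)] at h12
  exact ⟨h10, by linarith, by linarith⟩
end
end

section
/- Fix α ∈ (0,1], β = √(1−α²), c > 0 and T ∈ ℝ. Let (m, n, b) solve the Serret–Frenet system m' = k n, n' = −k m + τ b, b' = −τ n with k(x) = c·e^{α x²/4}, τ(x) = −βx/2, and initial conditions m(0) = (1,0,0), n(0) = (0,1,0), b(0) = (0,0,1), and write m = (m₁,m₂,m₃), n = (n₁,n₂,n₃). For j ∈ {1,2,3} the limit W_j := lim_{x→∞} e^{i c Φ_α(x)} (m_j(x) + i n_j(x)) exists in ℂ; write W_j = ρ_j e^{i φ_j} with ρ_j ≥ 0. Set ρ_j⁻ = ρ_j for j = 1 and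 ρ_j⁻ = −ρ_j for j ∈ {2,3}. Then for every x > 0 and j ∈ {1,2,3}, lim_{t→T⁻} [ m_j(x/√(T−t)) − ρ_j cos(c Φ_α(x/√(T−t)) − φ_j) ] = 0, and for every x < 0 and j ∈ {1,2,3}, lim_{t→T⁻} [ m_j(x/√(T−t)) − ρ_j⁻ cos(c Φ_α(−x/√(T−t)) − φ_j) ] = 0. -/
noncomputable section

open Real MeasureTheory Filter

/-- `Φ_α(x) = ∫₀ˣ e^{α s²/4} ds`. -/
def Phi (α x : ℝ) : ℝ := ∫ s in (0 : ℝ)..x, Real.exp (α * s ^ 2 / 4)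

namespace Stmt8Aux

open scoped RealInnerProductSpace

lemma energy_const (k τ : ℝ → ℝ) (m n b : ℝ → E3)
    (hm' : ∀ x, HasDerivAt m (k x • n x) x)
    (hn' : ∀ x, HasDerivAt n (-(k x • m x) + τ x • b x) x)
    (hb' : ∀ x, HasDerivAt b (-(τ x • n x)) x) (x : ℝ) :
    ⟪m x, m x⟫ + ⟪n x, n x⟫ + ⟪b x, b x⟫
      = ⟪m 0, m 0⟫ + ⟪n 0, n 0⟫ + ⟪b 0, b 0⟫ := by
  have key : ∀ y, HasDerivAt (fun t => ⟪m t, m t⟫ + ⟪n t, n t⟫ + ⟪b t, b t⟫) 0 y := by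
    intro y
    have h1 := (hm' y).inner ℝ (hm' y)
    have h2 := (hn' y).inner ℝ (hn' y)
    have h3 := (hb' y).inner ℝ (hb' y)
    have h := (h1.add h2).add h3
    refine h.congr_deriv (Eq.symm ?_)
    simp only [inner_add_left, inner_add_right, inner_smul_left, inner_smul_right,
      inner_neg_left, inner_neg_right, RCLike.conj_to_real]
    rw [real_inner_comm (m y) (n y), real_inner_comm (n y) (b y)]
    ring
  exact is_const_of_deriv_eq_zero (fun t => (key t).differentiableAt)
    (fun t => (key t).deriv) x 0



lemma hasDerivAt_of_eq {F : Type*} [NormedAddCommGroup F] [NormedSpace ℝ F] {f g : ℝ → F}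
    {f' g' : F} {x : ℝ} (h : HasDerivAt f f' x) (hf : g = f) (hd : g' = f') :
    HasDerivAt g g' x := hf ▸ hd ▸ h

lemma hasDerivAt_Phi (α x : ℝ) : HasDerivAt (Phi α) (Real.exp (α * x ^ 2 / 4)) x := by
  have cont : Continuous fun s : ℝ => Real.exp (α * s ^ 2 / 4) := by fun_prop
  exact intervalIntegral.integral_hasDerivAt_right (cont.intervalIntegrable 0 x)
    (cont.stronglyMeasurableAtFilter _ _) cont.continuousAt

lemma hasDerivAt_E (α c x : ℝ) :
    HasDerivAt (fun x : ℝ => Complex.exp (Complex.I * ((c * Phi α x : ℝ) : ℂ)))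
      (Complex.I * ((c * Real.exp (α * x ^ 2 / 4) : ℝ) : ℂ)
        * Complex.exp (Complex.I * ((c * Phi α x : ℝ) : ℂ))) x := by
  have h1 : HasDerivAt (fun x : ℝ => ((c * Phi α x : ℝ) : ℂ))
      ((c * Real.exp (α * x ^ 2 / 4) : ℝ) : ℂ) x :=
    HasDerivAt.ofReal_comp ((hasDerivAt_Phi α x).const_mul c)
  have h2 := (h1.const_mul Complex.I).cexp
  convert h2 using 1
  ring

lemma norm_E (α c x : ℝ) : ‖Complex.exp (Complex.I * ((c * Phi α x : ℝ) : ℂ))‖ = 1 := by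
  rw [Complex.norm_exp]
  simp

lemma tendsto_aux {α c β : ℝ} (hα : 0 < α) (hα1 : α ≤ 1) (hc : 0 < c) (hβ0 : 0 ≤ β)
    (mj nj bj : ℝ → ℝ)
    (hmj : ∀ x, HasDerivAt mj (c * Real.exp (α * x ^ 2 / 4) * nj x) x)
    (hnj : ∀ x, HasDerivAt nj
      (-(c * Real.exp (α * x ^ 2 / 4) * mj x) + -(β * x / 2) * bj x) x)
    (hbj : ∀ x, HasDerivAt bj (β * x / 2 * nj x) x)
    (hnb : ∀ x, |nj x| ≤ 2) (hbb : ∀ x, |bj x| ≤ 2) :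
    ∃ w : ℂ, Tendsto (fun x : ℝ =>
      Complex.exp (Complex.I * ((c * Phi α x : ℝ) : ℂ)) * ((mj x : ℂ) + Complex.I * (nj x : ℂ)))
      atTop (nhds w) := by
  -- derivative of f
  have hf : ∀ x : ℝ, HasDerivAt
      (fun x : ℝ => Complex.exp (Complex.I * ((c * Phi α x : ℝ) : ℂ))
        * ((mj x : ℂ) + Complex.I * (nj x : ℂ)))
      (Complex.I * ((-(β * x / 2) : ℝ) : ℂ)
        * Complex.exp (Complex.I * ((c * Phi α x : ℝ) : ℂ)) * (bj x : ℂ)) x := by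
    intro x
    have h := (hasDerivAt_E α c x).mul
      (((hmj x).ofReal_comp).add (((hnj x).ofReal_comp).const_mul Complex.I))
    refine h.congr_deriv (Eq.symm ?_)
    rw [Pi.add_apply]
    set X : ℂ := Complex.exp (Complex.I * ((c * Phi α x : ℝ) : ℂ)) with hX
    push_cast [-Complex.ofReal_exp]
    linear_combination (-(((c : ℂ) * Real.exp (α * x ^ 2 / 4)) * X * (nj x : ℂ))) * Complex.I_mul_I
  -- the correction function p and its derivative
  set p : ℝ → ℝ := fun x => -(β * x / (2 * c)) * Real.exp (-(α * x ^ 2 / 4)) with hp_def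
  set p' : ℝ → ℝ := fun x =>
    (-(β / (2 * c)) + α * β * x ^ 2 / (4 * c)) * Real.exp (-(α * x ^ 2 / 4)) with hp'_def
  have hp : ∀ x, HasDerivAt p (p' x) x := by
    intro x
    have h1 : HasDerivAt (fun x : ℝ => -(β * x / (2 * c))) (-(β / (2 * c))) x := by
      have h0 := (hasDerivAt_id x).const_mul (-(β / (2 * c)))
      refine Stmt8Aux.hasDerivAt_of_eq h0 ?_ ?_
      · funext y; simp only [id_eq]; ring
      · ring
    have h2 : HasDerivAt (fun x : ℝ => Real.exp (-(α * x ^ 2 / 4)))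
        (Real.exp (-(α * x ^ 2 / 4)) * (-(α * x / 2))) x := by
      have hin : HasDerivAt (fun x : ℝ => -(α * x ^ 2 / 4)) (-(α * x / 2)) x := by
        have h3 := (hasDerivAt_pow 2 x).const_mul (-(α / 4))
        refine Stmt8Aux.hasDerivAt_of_eq h3 ?_ ?_
        · funext y; ring
        · simp; ring
      exact hin.exp
    have h := h1.mul h2
    refine h.congr_deriv (Eq.symm ?_)
    simp only [hp'_def, hp_def]
    ring
  have hpk : ∀ x, p x * (c * Real.exp (α * x ^ 2 / 4)) = -(β * x / 2) := by
    intro x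
    have he : Real.exp (-(α * x ^ 2 / 4)) * Real.exp (α * x ^ 2 / 4) = 1 := by
      rw [← Real.exp_add]; norm_num
    have h2 : p x * (c * Real.exp (α * x ^ 2 / 4))
        = (-(β * x / (2 * c)) * c) * (Real.exp (-(α * x ^ 2 / 4)) * Real.exp (α * x ^ 2 / 4)) := by
      rw [hp_def]; ring
    rw [h2, he, mul_one]
    field_simp
  -- F and its derivative G
  set F : ℝ → ℂ := fun x =>
    Complex.exp (Complex.I * ((c * Phi α x : ℝ) : ℂ)) * ((mj x : ℂ) + Complex.I * (nj x : ℂ))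
      - ((p x : ℝ) : ℂ) * Complex.exp (Complex.I * ((c * Phi α x : ℝ) : ℂ)) * (bj x : ℂ)
    with hF_def
  set G : ℝ → ℂ := fun x =>
    -(Complex.exp (Complex.I * ((c * Phi α x : ℝ) : ℂ)))
      * ((p' x * bj x + p x * (β * x / 2) * nj x : ℝ) : ℂ) with hG_def
  have hF : ∀ x, HasDerivAt F (G x) x := by
    intro x
    have h := (hf x).sub
      ((((hp x).ofReal_comp).mul (hasDerivAt_E α c x)).mul ((hbj x).ofReal_comp))
    refine h.congr_deriv (Eq.symm ?_)
    rw [Pi.mul_apply]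
    have hpk' : ((p x : ℝ) : ℂ) * ((c * Real.exp (α * x ^ 2 / 4) : ℝ) : ℂ)
        = ((-(β * x / 2) : ℝ) : ℂ) := by exact_mod_cast congrArg (fun r : ℝ => (r : ℂ)) (hpk x)
    simp only [hG_def]
    set X : ℂ := Complex.exp (Complex.I * ((c * Phi α x : ℝ) : ℂ)) with hX
    push_cast [-Complex.ofReal_exp] at hpk' ⊢
    linear_combination (Complex.I * X * (bj x : ℂ)) * hpk'
  -- continuity facts
  have dPhi : Differentiable ℝ (Phi α) := fun x => (hasDerivAt_Phi α x).differentiableAt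
  have cPhi : Continuous (Phi α) := dPhi.continuous
  have dmj : Differentiable ℝ mj := fun x => (hmj x).differentiableAt
  have cmj : Continuous mj := dmj.continuous
  have dnj : Differentiable ℝ nj := fun x => (hnj x).differentiableAt
  have cnj : Continuous nj := dnj.continuous
  have dbj : Differentiable ℝ bj := fun x => (hbj x).differentiableAt
  have cbj : Continuous bj := dbj.continuous
  have dp : Differentiable ℝ p := fun x => (hp x).differentiableAt
  have cp : Continuous p := dp.continuous
  have cp' : Continuous p' := by rw [hp'_def]; fun_prop
  have cE : Continuous fun x : ℝ => Complex.exp (Complex.I * ((c * Phi α x : ℝ) : ℂ)) := by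
    exact Complex.continuous_exp.comp
      (continuous_const.mul (Complex.continuous_ofReal.comp (continuous_const.mul cPhi)))
  have contG : Continuous G := by
    rw [hG_def]
    exact (cE.neg).mul (Complex.continuous_ofReal.comp
      ((cp'.mul cbj).add ((cp.mul (by fun_prop)).mul cnj)))
  -- pointwise bound for G on (0, ∞)
  set C : ℝ := (β + β ^ 2) / c with hC
  have habs : ∀ x : ℝ, x ∈ Set.Ioi (0:ℝ) →
      ‖G x‖ ≤ C * Real.exp (-(α * x ^ 2 / 4)) + C * (x ^ 2 * Real.exp (-(α * x ^ 2 / 4))) := by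
    intro x hx
    have hx0 : (0:ℝ) < x := hx
    set Ex : ℝ := Real.exp (-(α * x ^ 2 / 4)) with hEx
    have hExpos : 0 < Ex := Real.exp_pos _
    have hGx : ‖G x‖ = |p' x * bj x + p x * (β * x / 2) * nj x| := by
      rw [hG_def]
      rw [norm_mul, norm_neg, norm_E α c x, one_mul, Complex.norm_real, Real.norm_eq_abs]
    have h1 : |p' x| ≤ (β / (2 * c) + α * β * x ^ 2 / (4 * c)) * Ex := by
      rw [hp'_def]
      simp only []
      rw [abs_mul, abs_of_pos hExpos]
      refine mul_le_mul_of_nonneg_right ?_ hExpos.le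
      refine (abs_add_le _ _).trans ?_
      rw [abs_neg, abs_of_nonneg (by positivity), abs_of_nonneg (by positivity)]
    have h2 : |p x| = β * x / (2 * c) * Ex := by
      rw [hp_def]
      simp only []
      rw [abs_mul, abs_neg, abs_of_nonneg (by positivity), abs_of_pos hExpos]
    have h3 : |p' x * bj x + p x * (β * x / 2) * nj x|
        ≤ |p' x| * 2 + |p x| * (β * x / 2) * 2 := by
      refine (abs_add_le _ _).trans ?_
      have e1 : |p' x * bj x| ≤ |p' x| * 2 := by
        rw [abs_mul]; exact mul_le_mul_of_nonneg_left (hbb x) (abs_nonneg _)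
      have e2 : |p x * (β * x / 2) * nj x| ≤ |p x| * (β * x / 2) * 2 := by
        rw [abs_mul, abs_mul, abs_of_nonneg (show (0:ℝ) ≤ β * x / 2 by positivity)]
        exact mul_le_mul_of_nonneg_left (hnb x) (by positivity)
      linarith
    have key : 2 * (β / (2 * c) + α * β * x ^ 2 / (4 * c)) + β * x * (β * x / (2 * c))
        ≤ (β + β ^ 2) * (1 + x ^ 2) / c := by
      have e0 : 2 * (β / (2 * c) + α * β * x ^ 2 / (4 * c)) + β * x * (β * x / (2 * c))
          = (2 * β + α * β * x ^ 2 + β ^ 2 * x ^ 2) / (2 * c) := by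
        field_simp; ring
      rw [e0, div_le_div_iff₀ (by positivity) hc]
      nlinarith [mul_nonneg (mul_nonneg (mul_nonneg (sub_nonneg.2 hα1) hβ0) (sq_nonneg x)) hc.le,
        mul_nonneg (mul_nonneg (mul_nonneg hβ0 hβ0) (sq_nonneg x)) hc.le,
        mul_nonneg hβ0 hc.le, mul_nonneg (mul_nonneg hβ0 hβ0) hc.le]
    have h6 : (2 * (β / (2 * c) + α * β * x ^ 2 / (4 * c)) + β * x * (β * x / (2 * c))) * Ex
        ≤ ((β + β ^ 2) * (1 + x ^ 2) / c) * Ex :=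
      mul_le_mul_of_nonneg_right key hExpos.le
    rw [hGx]
    have h7 : C * Ex + C * (x ^ 2 * Ex) = ((β + β ^ 2) * (1 + x ^ 2) / c) * Ex := by
      rw [hC]; ring
    rw [h7]
    calc |p' x * bj x + p x * (β * x / 2) * nj x|
        ≤ |p' x| * 2 + |p x| * (β * x / 2) * 2 := h3
      _ ≤ ((β / (2 * c) + α * β * x ^ 2 / (4 * c)) * Ex) * 2
            + (β * x / (2 * c) * Ex) * (β * x / 2) * 2 := by
          have := mul_le_mul_of_nonneg_right h1 (by norm_num : (0:ℝ) ≤ 2)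
          have h2' := h2
          nlinarith [mul_le_mul_of_nonneg_right h1 (by norm_num : (0:ℝ) ≤ 2), hβ0, hx0.le,
            mul_nonneg hβ0 hx0.le]
      _ = (2 * (β / (2 * c) + α * β * x ^ 2 / (4 * c)) + β * x * (β * x / (2 * c))) * Ex := by
          ring
      _ ≤ _ := h6
  -- integrability of G on (0, ∞)
  have i1 : Integrable (fun x : ℝ => Real.exp (-(α * x ^ 2 / 4))) := by
    have h := integrable_exp_neg_mul_sq (show (0:ℝ) < α/4 by positivity)
    simpa [show ∀ x:ℝ, -(α/4) * x^2 = -(α * x^2/4) from fun x => by ring] using h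
  have i2 : Integrable (fun x : ℝ => x ^ 2 * Real.exp (-(α * x ^ 2 / 4))) := by
    have h := integrable_rpow_mul_exp_neg_mul_sq (show (0:ℝ) < α/4 by positivity)
      (s := 2) (by norm_num)
    have e1 : ∀ x:ℝ, x ^ (2:ℝ) = x ^ 2 := fun x => by
      rw [show (2:ℝ) = ((2:ℕ):ℝ) by norm_num, Real.rpow_natCast]
    simpa [e1, show ∀ x:ℝ, -(α/4) * x^2 = -(α * x^2/4) from fun x => by ring] using h
  have hGint : IntegrableOn G (Set.Ioi (0:ℝ)) := by
    refine Integrable.mono' (((i1.const_mul C).add (i2.const_mul C)).integrableOn)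
      (contG.aestronglyMeasurable.restrict) ?_
    rw [ae_restrict_iff' measurableSet_Ioi]
    exact ae_of_all _ habs
  -- limit of F
  have hFlim : Tendsto F atTop (nhds (F 0 + ∫ t in Set.Ioi (0:ℝ), G t)) := by
    have h1 : Tendsto (fun x : ℝ => ∫ t in (0:ℝ)..x, G t) atTop
        (nhds (∫ t in Set.Ioi (0:ℝ), G t)) :=
      intervalIntegral_tendsto_integral_Ioi 0 hGint tendsto_id
    have h2 : ∀ x : ℝ, F x = F 0 + ∫ t in (0:ℝ)..x, G t := by
      intro x
      have h3 := intervalIntegral.integral_eq_sub_of_hasDerivAt (f := F) (f' := G)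
        (fun t _ => hF t) (contG.intervalIntegrable 0 x)
      rw [h3]; ring
    exact Tendsto.congr (fun x => (h2 x).symm) (tendsto_const_nhds.add h1)
  -- the correction term tends to 0
  have keyx : Tendsto (fun x : ℝ => x * Real.exp (-(α * x ^ 2 / 4))) atTop (nhds 0) := by
    refine squeeze_zero' (Filter.eventually_atTop.2 ⟨0, fun x hx => by positivity⟩)
      (Filter.eventually_atTop.2 ⟨1, fun x hx => ?_⟩)
      (tendsto_const_nhds.div_atTop (f := fun _ => (4:ℝ)/α) tendsto_id)
    have hx0 : (0:ℝ) < x := lt_of_lt_of_le one_pos hx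
    have hq : α * x ^ 2 / 4 ≤ Real.exp (α * x ^ 2 / 4) := by
      nlinarith [Real.add_one_le_exp (α * x ^ 2 / 4)]
    have hE : Real.exp (-(α * x ^ 2 / 4)) ≤ (α * x ^ 2 / 4)⁻¹ := by
      rw [Real.exp_neg]
      exact inv_anti₀ (by positivity) hq
    calc x * Real.exp (-(α * x ^ 2 / 4)) ≤ x * (α * x ^ 2 / 4)⁻¹ :=
          mul_le_mul_of_nonneg_left hE hx0.le
      _ = (4/α) / x := by field_simp
  have hcorr : Tendsto (fun x : ℝ => ((p x : ℝ) : ℂ)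
      * Complex.exp (Complex.I * ((c * Phi α x : ℝ) : ℂ)) * (bj x : ℂ)) atTop (nhds 0) := by
    refine squeeze_zero_norm'
      (a := fun x => (β / c) * (x * Real.exp (-(α * x ^ 2 / 4))))
      (Filter.eventually_atTop.2 ⟨0, fun x hx => ?_⟩) ?_
    · rw [norm_mul, norm_mul, Complex.norm_real, norm_E, mul_one, Complex.norm_real,
        Real.norm_eq_abs, Real.norm_eq_abs]
      have h2 : |p x| = β * x / (2 * c) * Real.exp (-(α * x ^ 2 / 4)) := by
        rw [hp_def]
        simp only []
        rw [abs_mul, abs_neg, abs_of_nonneg (by positivity), abs_of_pos (Real.exp_pos _)]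
      calc |p x| * |bj x| ≤ |p x| * 2 := mul_le_mul_of_nonneg_left (hbb x) (abs_nonneg _)
        _ = (β / c) * (x * Real.exp (-(α * x ^ 2 / 4))) := by rw [h2]; ring
    · have := keyx.const_mul (β / c)
      simpa using this
  refine ⟨F 0 + ∫ t in Set.Ioi (0:ℝ), G t, ?_⟩
  have hfe : (fun x : ℝ => Complex.exp (Complex.I * ((c * Phi α x : ℝ) : ℂ))
      * ((mj x : ℂ) + Complex.I * (nj x : ℂ)))
      = fun x => F x + ((p x : ℝ) : ℂ)
        * Complex.exp (Complex.I * ((c * Phi α x : ℝ) : ℂ)) * (bj x : ℂ) := by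
    funext x; rw [hF_def]; ring
  rw [hfe]
  simpa using hFlim.add hcorr



lemma abs_coord_le (y : EuclideanSpace ℝ (Fin 3)) (j : Fin 3) : |y j| ≤ ‖y‖ := by
  have h := abs_real_inner_le_norm (EuclideanSpace.single j (1:ℝ)) y
  simpa [EuclideanSpace.inner_single_left, EuclideanSpace.norm_single] using h

lemma main_atTop {α c : ℝ} (mj nj : ℝ → ℝ) {w : ℂ}
    (hW : Tendsto (fun x : ℝ => Complex.exp (Complex.I * ((c * Phi α x : ℝ) : ℂ))
      * ((mj x : ℂ) + Complex.I * (nj x : ℂ))) atTop (nhds w)) :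
    Tendsto (fun y : ℝ => mj y - ‖w‖ * Real.cos (c * Phi α y - Complex.arg w))
      atTop (nhds 0) := by
  set ρ : ℝ := ‖w‖ with hρ
  set φ : ℝ := Complex.arg w with hφ
  have hid : ∀ y : ℝ, mj y - ρ * Real.cos (c * Phi α y - φ)
      = (Complex.exp (-(Complex.I * ((c * Phi α y : ℝ) : ℂ)))
          * ((Complex.exp (Complex.I * ((c * Phi α y : ℝ) : ℂ))
            * ((mj y : ℂ) + Complex.I * (nj y : ℂ))) - w)).re := by
    intro y
    rw [mul_sub]
    have e1 : Complex.exp (-(Complex.I * ((c * Phi α y : ℝ) : ℂ)))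
        * (Complex.exp (Complex.I * ((c * Phi α y : ℝ) : ℂ))
          * ((mj y : ℂ) + Complex.I * (nj y : ℂ)))
        = (mj y : ℂ) + Complex.I * (nj y : ℂ) := by
      rw [← mul_assoc, ← Complex.exp_add, neg_add_cancel, Complex.exp_zero, one_mul]
    have e2 : (Complex.exp (-(Complex.I * ((c * Phi α y : ℝ) : ℂ))) * w).re
        = ρ * Real.cos (φ - c * Phi α y) := by
      conv_lhs => rw [← Complex.norm_mul_exp_arg_mul_I w]
      rw [← hρ, ← hφ]
      rw [show -(Complex.I * ((c * Phi α y : ℝ) : ℂ)) = ((-(c * Phi α y) : ℝ) : ℂ) * Complex.I by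
        push_cast; ring]
      rw [show Complex.exp (((-(c * Phi α y) : ℝ) : ℂ) * Complex.I)
          * ((ρ : ℂ) * Complex.exp ((φ : ℂ) * Complex.I))
          = (ρ : ℂ) * Complex.exp (((φ - c * Phi α y : ℝ) : ℂ) * Complex.I) by
        rw [show Complex.exp (((-(c * Phi α y) : ℝ) : ℂ) * Complex.I)
            * ((ρ : ℂ) * Complex.exp ((φ : ℂ) * Complex.I))
            = (ρ : ℂ) * (Complex.exp ((φ : ℂ) * Complex.I)
              * Complex.exp (((-(c * Phi α y) : ℝ) : ℂ) * Complex.I)) from by ring,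
          ← Complex.exp_add]
        congr 2
        push_cast
        ring]
      rw [Complex.re_ofReal_mul, Complex.exp_ofReal_mul_I_re]
    rw [Complex.sub_re, e1, e2]
    have e3 : ((mj y : ℂ) + Complex.I * (nj y : ℂ)).re = mj y := by simp
    rw [e3]
    have e4 : Real.cos (φ - c * Phi α y) = Real.cos (c * Phi α y - φ) := by
      rw [← Real.cos_neg, neg_sub]
    rw [e4]
  have hnorm : Tendsto (fun y : ℝ => ‖Complex.exp (Complex.I * ((c * Phi α y : ℝ) : ℂ))
      * ((mj y : ℂ) + Complex.I * (nj y : ℂ)) - w‖) atTop (nhds 0) := by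
    have h := hW.sub (tendsto_const_nhds (x := w))
    rw [sub_self] at h
    simpa using h.norm
  refine squeeze_zero_norm (fun y => ?_) hnorm
  rw [hid y]
  calc ‖(Complex.exp (-(Complex.I * ((c * Phi α y : ℝ) : ℂ)))
        * ((Complex.exp (Complex.I * ((c * Phi α y : ℝ) : ℂ))
          * ((mj y : ℂ) + Complex.I * (nj y : ℂ))) - w)).re‖
      ≤ ‖Complex.exp (-(Complex.I * ((c * Phi α y : ℝ) : ℂ)))
        * ((Complex.exp (Complex.I * ((c * Phi α y : ℝ) : ℂ))
          * ((mj y : ℂ) + Complex.I * (nj y : ℂ))) - w)‖ := by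
        rw [Real.norm_eq_abs]
        exact Complex.abs_re_le_norm _
    _ = ‖Complex.exp (Complex.I * ((c * Phi α y : ℝ) : ℂ))
          * ((mj y : ℂ) + Complex.I * (nj y : ℂ)) - w‖ := by
        rw [norm_mul]
        have : ‖Complex.exp (-(Complex.I * ((c * Phi α y : ℝ) : ℂ)))‖ = 1 := by
          rw [Complex.norm_exp]; simp
        rw [this, one_mul]

lemma tendsto_scale {T x : ℝ} (hx : 0 < x) :
    Tendsto (fun t : ℝ => x / Real.sqrt (T - t)) (nhdsWithin T (Set.Iio T)) atTop := by
  have h1 : Tendsto (fun t : ℝ => T - t) (nhdsWithin T (Set.Iio T))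
      (nhdsWithin 0 (Set.Ioi 0)) := by
    apply tendsto_nhdsWithin_of_tendsto_nhds_of_eventually_within
    · have h : Tendsto (fun t : ℝ => T - t) (nhds T) (nhds (T - T)) :=
        (continuous_const.sub continuous_id).tendsto T
      rw [sub_self] at h
      exact h.mono_left nhdsWithin_le_nhds
    · exact eventually_mem_nhdsWithin.mono fun t ht => Set.mem_Ioi.2 (sub_pos.2 ht)
  have h2 : Tendsto Real.sqrt (nhdsWithin 0 (Set.Ioi 0)) (nhdsWithin 0 (Set.Ioi 0)) := by
    apply tendsto_nhdsWithin_of_tendsto_nhds_of_eventually_within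
    · exact (Real.continuous_sqrt.tendsto' 0 0 Real.sqrt_zero).mono_left nhdsWithin_le_nhds
    · exact eventually_mem_nhdsWithin.mono fun t ht => Real.sqrt_pos.2 ht
  have h3 := tendsto_inv_nhdsGT_zero.comp (h2.comp h1)
  have h4 := Filter.Tendsto.const_mul_atTop hx h3
  refine h4.congr fun t => ?_
  simp [Function.comp, div_eq_mul_inv]

def eps3 : Fin 3 → ℝ := ![1, -1, -1]

def Sref : E3 →L[ℝ] E3 :=
  LinearMap.toContinuousLinearMap
  { toFun := fun y => (WithLp.equiv 2 (Fin 3 → ℝ)).symm fun i => eps3 i * y i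
    map_add' := by
      intro y z; ext i
      simp [mul_add]
    map_smul' := by
      intro a y; ext i
      simp [PiLp.smul_apply, smul_eq_mul]
      ring }

@[simp] lemma Sref_apply (y : E3) (i : Fin 3) : Sref y i = eps3 i * y i := rfl


end Stmt8Aux

theorem stmt8 (α β c T : ℝ) (hα : α ∈ Set.Ioc (0 : ℝ) 1) (hβ : β = Real.sqrt (1 - α ^ 2))
    (hc : 0 < c) (m n b : ℝ → E3)
    (hmdiff : Differentiable ℝ m) (hndiff : Differentiable ℝ n) (hbdiff : Differentiable ℝ b)
    (hm : ∀ x : ℝ, deriv m x = (c * Real.exp (α * x ^ 2 / 4)) • n x)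
    (hn : ∀ x : ℝ, deriv n x
      = -((c * Real.exp (α * x ^ 2 / 4)) • m x) + (-(β * x / 2)) • b x)
    (hb : ∀ x : ℝ, deriv b x = -((-(β * x / 2)) • n x))
    (hm0 : m 0 = EuclideanSpace.single (0 : Fin 3) (1 : ℝ))
    (hn0 : n 0 = EuclideanSpace.single (1 : Fin 3) (1 : ℝ))
    (hb0 : b 0 = EuclideanSpace.single (2 : Fin 3) (1 : ℝ)) :
    ∃ W : Fin 3 → ℂ,
      (∀ j : Fin 3,
        Tendsto (fun x : ℝ =>
            Complex.exp (Complex.I * ((c * Phi α x : ℝ) : ℂ))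
              * ((m x j : ℂ) + Complex.I * (n x j : ℂ)))
          atTop (nhds (W j))) ∧
      ∃ ρ φ : Fin 3 → ℝ,
        (∀ j : Fin 3, 0 ≤ ρ j ∧
          W j = ((ρ j : ℝ) : ℂ) * Complex.exp (Complex.I * ((φ j : ℝ) : ℂ))) ∧
        (∀ x : ℝ, 0 < x → ∀ j : Fin 3,
          Tendsto (fun t : ℝ =>
              m (x / Real.sqrt (T - t)) j
                - ρ j * Real.cos (c * Phi α (x / Real.sqrt (T - t)) - φ j))
            (nhdsWithin T (Set.Iio T)) (nhds 0)) ∧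
        (∀ x : ℝ, x < 0 → ∀ j : Fin 3,
          Tendsto (fun t : ℝ =>
              m (x / Real.sqrt (T - t)) j
                - (if j = 0 then ρ j else -ρ j)
                  * Real.cos (c * Phi α (-x / Real.sqrt (T - t)) - φ j))
            (nhdsWithin T (Set.Iio T)) (nhds 0)) := by
  classical
  obtain ⟨hα0, hα1⟩ := hα
  have hβ0 : 0 ≤ β := hβ ▸ Real.sqrt_nonneg _
  -- vector-valued derivatives
  have hm' : ∀ x, HasDerivAt m ((c * Real.exp (α * x ^ 2 / 4)) • n x) x := fun x => by
    rw [← hm x]; exact (hmdiff x).hasDerivAt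
  have hn' : ∀ x, HasDerivAt n
      (-((c * Real.exp (α * x ^ 2 / 4)) • m x) + (-(β * x / 2)) • b x) x := fun x => by
    rw [← hn x]; exact (hndiff x).hasDerivAt
  have hb' : ∀ x, HasDerivAt b (-((-(β * x / 2)) • n x)) x := fun x => by
    rw [← hb x]; exact (hbdiff x).hasDerivAt
  -- energy conservation : sum of squared norms is 3
  have henergy := Stmt8Aux.energy_const (fun x => c * Real.exp (α * x ^ 2 / 4))
    (fun x => -(β * x / 2)) m n b hm' hn' hb'
  have hval : (inner ℝ (m 0) (m 0) : ℝ) + (inner ℝ (n 0) (n 0) : ℝ) + (inner ℝ (b 0) (b 0) : ℝ)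
      = 3 := by
    rw [hm0, hn0, hb0]
    simp [EuclideanSpace.inner_single_left, EuclideanSpace.single_apply]
    norm_num
  -- norm bounds
  have hnormm : ∀ x, ‖m x‖ ≤ 2 := by
    intro x
    have h := henergy x
    rw [hval] at h
    have h1 : (inner ℝ (m x) (m x) : ℝ) = ‖m x‖ ^ 2 := real_inner_self_eq_norm_sq (m x)
    nlinarith [real_inner_self_nonneg (x := n x), real_inner_self_nonneg (x := b x),
      norm_nonneg (m x)]
  have hnormn : ∀ x, ‖n x‖ ≤ 2 := by
    intro x
    have h := henergy x
    rw [hval] at h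
    have h1 : (inner ℝ (n x) (n x) : ℝ) = ‖n x‖ ^ 2 := real_inner_self_eq_norm_sq (n x)
    nlinarith [real_inner_self_nonneg (x := m x), real_inner_self_nonneg (x := b x),
      norm_nonneg (n x)]
  have hnormb : ∀ x, ‖b x‖ ≤ 2 := by
    intro x
    have h := henergy x
    rw [hval] at h
    have h1 : (inner ℝ (b x) (b x) : ℝ) = ‖b x‖ ^ 2 := real_inner_self_eq_norm_sq (b x)
    nlinarith [real_inner_self_nonneg (x := m x), real_inner_self_nonneg (x := n x),
      norm_nonneg (b x)]
  have hnb : ∀ x (j : Fin 3), |n x j| ≤ 2 := fun x j =>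
    (Stmt8Aux.abs_coord_le (n x) j).trans (hnormn x)
  have hbb : ∀ x (j : Fin 3), |b x j| ≤ 2 := fun x j =>
    (Stmt8Aux.abs_coord_le (b x) j).trans (hnormb x)
  -- coordinate derivatives
  have hmc : ∀ (j : Fin 3) x, HasDerivAt (fun y => m y j)
      (c * Real.exp (α * x ^ 2 / 4) * n x j) x := by
    intro j x
    have h := (EuclideanSpace.proj j).hasFDerivAt.comp_hasDerivAt x (hm' x)
    simpa [Function.comp_def] using h
  have hnc : ∀ (j : Fin 3) x, HasDerivAt (fun y => n y j)
      (-(c * Real.exp (α * x ^ 2 / 4) * m x j) + -(β * x / 2) * b x j) x := by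
    intro j x
    have h := (EuclideanSpace.proj j).hasFDerivAt.comp_hasDerivAt x (hn' x)
    simpa [Function.comp_def] using h
  have hbc : ∀ (j : Fin 3) x, HasDerivAt (fun y => b y j) (β * x / 2 * n x j) x := by
    intro j x
    have h := (EuclideanSpace.proj j).hasFDerivAt.comp_hasDerivAt x (hb' x)
    simp [Function.comp_def] at h
    refine h.congr_deriv (Eq.symm ?_)
    try ring
  -- convergence of the oscillatory quantity for each coordinate
  have hconv : ∀ j : Fin 3, ∃ w : ℂ, Tendsto (fun x : ℝ =>
      Complex.exp (Complex.I * ((c * Phi α x : ℝ) : ℂ))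
        * ((m x j : ℂ) + Complex.I * (n x j : ℂ))) atTop (nhds w) := fun j =>
    Stmt8Aux.tendsto_aux hα0 hα1 hc hβ0 _ _ _ (hmc j) (hnc j) (hbc j)
      (fun x => hnb x j) (fun x => hbb x j)
  choose W hW using hconv
  -- symmetry : m x = Sref (m (-x))
  have hsym : ∀ x (j : Fin 3), m x j = Stmt8Aux.eps3 j * m (-x) j := by
    have hrefl : ∀ (g : ℝ → E3), Differentiable ℝ g → ∀ x : ℝ,
        HasDerivAt (fun y => Stmt8Aux.Sref (g (-y))) (-(Stmt8Aux.Sref (deriv g (-x)))) x := by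
      intro g hg x
      have h1 : HasDerivAt (fun y : ℝ => g (-y)) ((-1 : ℝ) • deriv g (-x)) x :=
        (hg (-x)).hasDerivAt.scomp x (hasDerivAt_neg x)
      have h2 := Stmt8Aux.Sref.hasFDerivAt.comp_hasDerivAt x h1
      simpa [_root_.map_smul, Function.comp_def] using h2
    have hu' : ∀ x, HasDerivAt (fun y => m y - Stmt8Aux.Sref (m (-y)))
        ((c * Real.exp (α * x ^ 2 / 4)) • (n x + Stmt8Aux.Sref (n (-x)))) x := by
      intro x
      have h := (hm' x).sub (hrefl m hmdiff x)
      refine h.congr_deriv (Eq.symm ?_)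
      rw [hm (-x), _root_.map_smul, show α * (-x) ^ 2 / 4 = α * x ^ 2 / 4 by ring,
        sub_neg_eq_add, smul_add]
    have hv' : ∀ x, HasDerivAt (fun y => n y + Stmt8Aux.Sref (n (-y)))
        (-((c * Real.exp (α * x ^ 2 / 4)) • (m x - Stmt8Aux.Sref (m (-x))))
          + (-(β * x / 2)) • (b x + Stmt8Aux.Sref (b (-x)))) x := by
      intro x
      have h := (hn' x).add (hrefl n hndiff x)
      refine h.congr_deriv (Eq.symm ?_)
      rw [hn (-x), show α * (-x) ^ 2 / 4 = α * x ^ 2 / 4 by ring,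
        show -(β * -x / 2) = β * x / 2 by ring]
      rw [map_add, map_neg, _root_.map_smul, _root_.map_smul]
      module
    have hw' : ∀ x, HasDerivAt (fun y => b y + Stmt8Aux.Sref (b (-y)))
        (-((-(β * x / 2)) • (n x + Stmt8Aux.Sref (n (-x))))) x := by
      intro x
      have h := (hb' x).add (hrefl b hbdiff x)
      refine h.congr_deriv (Eq.symm ?_)
      rw [hb (-x), show -(β * -x / 2) = β * x / 2 by ring]
      rw [map_neg, _root_.map_smul]
      module
    have hen := Stmt8Aux.energy_const (fun x => c * Real.exp (α * x ^ 2 / 4))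
      (fun x => -(β * x / 2)) _ _ _ hu' hv' hw'
    have hS0 : Stmt8Aux.Sref (EuclideanSpace.single (0 : Fin 3) (1:ℝ))
        = EuclideanSpace.single (0 : Fin 3) (1:ℝ) := by
      ext i; fin_cases i <;>
        simp [Stmt8Aux.Sref_apply, Stmt8Aux.eps3, EuclideanSpace.single_apply]
    have hS1 : Stmt8Aux.Sref (EuclideanSpace.single (1 : Fin 3) (1:ℝ))
        = -EuclideanSpace.single (1 : Fin 3) (1:ℝ) := by
      ext i; fin_cases i <;>
        simp [Stmt8Aux.Sref_apply, Stmt8Aux.eps3, EuclideanSpace.single_apply]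
    have hS2 : Stmt8Aux.Sref (EuclideanSpace.single (2 : Fin 3) (1:ℝ))
        = -EuclideanSpace.single (2 : Fin 3) (1:ℝ) := by
      ext i; fin_cases i <;>
        simp [Stmt8Aux.Sref_apply, Stmt8Aux.eps3, EuclideanSpace.single_apply]
    have hval0 : (inner ℝ (m 0 - Stmt8Aux.Sref (m (-0))) (m 0 - Stmt8Aux.Sref (m (-0))) : ℝ)
        + (inner ℝ (n 0 + Stmt8Aux.Sref (n (-0))) (n 0 + Stmt8Aux.Sref (n (-0))) : ℝ)
        + (inner ℝ (b 0 + Stmt8Aux.Sref (b (-0))) (b 0 + Stmt8Aux.Sref (b (-0))) : ℝ) = 0 := by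
      rw [neg_zero, hm0, hn0, hb0, hS0, hS1, hS2]
      simp
    intro x j
    have h := hen x
    beta_reduce at h
    rw [hval0] at h
    have h1 : (inner ℝ (m x - Stmt8Aux.Sref (m (-x))) (m x - Stmt8Aux.Sref (m (-x))) : ℝ) = 0 := by
      linarith [real_inner_self_nonneg (x := m x - Stmt8Aux.Sref (m (-x))),
        real_inner_self_nonneg (x := n x + Stmt8Aux.Sref (n (-x))),
        real_inner_self_nonneg (x := b x + Stmt8Aux.Sref (b (-x)))]
    have h2 : m x - Stmt8Aux.Sref (m (-x)) = 0 := inner_self_eq_zero.1 h1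
    have h3 : m x = Stmt8Aux.Sref (m (-x)) := by rwa [sub_eq_zero] at h2
    calc m x j = (Stmt8Aux.Sref (m (-x))) j := by rw [← h3]
      _ = Stmt8Aux.eps3 j * m (-x) j := Stmt8Aux.Sref_apply _ _
  -- assembling the result
  refine ⟨W, fun j => hW j, fun j => ‖W j‖, fun j => Complex.arg (W j),
    ?_, ?_, ?_⟩
  · intro j
    refine ⟨norm_nonneg _, ?_⟩
    conv_lhs => rw [← Complex.norm_mul_exp_arg_mul_I (W j)]
    rw [mul_comm ((Complex.arg (W j) : ℂ)) Complex.I]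
  · intro x hx j
    exact (Stmt8Aux.main_atTop (fun y => m y j) (fun y => n y j) (hW j)).comp
      (Stmt8Aux.tendsto_scale hx)
  · intro x hx j
    have hbase := (Stmt8Aux.main_atTop (fun y => m y j) (fun y => n y j) (hW j)).comp
      (Stmt8Aux.tendsto_scale (T := T) (show 0 < -x by linarith))
    have h0 := hbase.const_mul (Stmt8Aux.eps3 j)
    rw [mul_zero] at h0
    refine h0.congr fun t => ?_
    simp only [Function.comp]
    rw [mul_sub]
    congr 1
    · rw [hsym (x / Real.sqrt (T - t)) j]
      rw [neg_div]
    · rw [← mul_assoc]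
      congr 1
      fin_cases j <;> simp [Stmt8Aux.eps3]
end
end

section
/- Fix α ∈ (0,1], β = √(1−α²), c > 0 and T ∈ ℝ. Let (m, n, b) solve the Serret–Frenet system m' = k n, n' = −k m + τ b, b' = −τ n with k(x) = c·e^{α x²/4}, τ(x) = −βx/2, and initial conditions m(0) = (1,0,0), n(0) = (0,1,0), b(0) = (0,0,1), and set M(x,t) = m(x/√(T−t)) for t < T. Then for every bounded Lipschitz function φ : ℝ → ℝ³ (i.e., φ ∈ W^{1,∞}(ℝ;ℝ³)), one has lim_{t→T⁻} ∫_ℝ M(x,t)·φ(x) dx = 0. In particular M(·,t) → 0 as t → T⁻ in the sense of tempered distributions. -/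
noncomputable section

open Real MeasureTheory Filter
open scoped RealInnerProductSpace

lemma ibp_bound (G G' ψ : ℝ → E3) (L C D bb : ℝ)
    (hL : 0 ≤ L) (hC : 0 ≤ C) (hD : 0 ≤ D) (hbb : 0 < bb)
    (hG : ∀ y, HasDerivAt G (G' y) y) (hG'c : Continuous G')
    (hψc : Continuous ψ) (hψC : ∀ y, ‖ψ y‖ ≤ C)
    (hψL : ∀ y z, ‖ψ y - ψ z‖ ≤ L * |y - z|)
    (hGb : ∀ y, ‖G y‖ ≤ D * Real.exp (-bb * y ^ 2))
    (hint : Integrable (fun y => ⟪G' y, ψ y⟫)) :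
    |∫ y : ℝ, ⟪G' y, ψ y⟫| ≤ L * ∫ y : ℝ, ‖G y‖ := by
  have hGc : Continuous G := by
    rw [continuous_iff_continuousAt]; exact fun y => (hG y).continuousAt
  have hGnInt : Integrable (fun y => ‖G y‖) := by
    refine ((integrable_exp_neg_mul_sq hbb).const_mul D).mono'
      hGc.norm.aestronglyMeasurable (ae_of_all _ fun y => ?_)
    rw [norm_norm]; exact hGb y
  set IG := ∫ y : ℝ, ‖G y‖ with hIGdef
  have hIG0 : 0 ≤ IG := integral_nonneg fun _ => norm_nonneg _
  have hIseg : ∀ u v : ℝ, u ≤ v → ∫ y in u..v, ‖G y‖ ≤ IG := by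
    intro u v huv
    rw [intervalIntegral.integral_of_le huv]
    exact setIntegral_le_integral hGnInt (ae_of_all _ fun y => norm_nonneg _)
  have key : ∀ R : ℝ, 1 ≤ R →
      |∫ y in (-R)..R, ⟪G' y, ψ y⟫| ≤ L * IG + 2 * (C * (D * Real.exp (-bb * (R - 1) ^ 2))) := by
    intro R hR
    set ε := C * (D * Real.exp (-bb * (R - 1) ^ 2)) with hεdef
    have hε0 : 0 ≤ ε := by positivity
    -- pointwise decay bound on the right edge
    have hedge : ∀ w : ℝ, (R - 1) ^ 2 ≤ w ^ 2 → ∀ z : E3, ‖z‖ ≤ C →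
        ‖⟪G w, z⟫‖ ≤ ε := by
      intro w hw z hz
      have h1 : ‖G w‖ ≤ D * Real.exp (-bb * (R - 1) ^ 2) := by
        refine (hGb w).trans ?_
        have : Real.exp (-bb * w ^ 2) ≤ Real.exp (-bb * (R - 1) ^ 2) :=
          Real.exp_le_exp.2 (by nlinarith)
        nlinarith [Real.exp_pos (-bb * w ^ 2)]
      rw [Real.norm_eq_abs]
      calc |⟪G w, z⟫| ≤ ‖G w‖ * ‖z‖ := abs_real_inner_le_norm _ _
        _ ≤ (D * Real.exp (-bb * (R - 1) ^ 2)) * C := by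
            apply mul_le_mul h1 hz (norm_nonneg _) (by positivity)
        _ = ε := by rw [hεdef]; ring
    -- the difference quotient integrals
    have hJlim : Tendsto (fun h : ℝ => ∫ y in (-R)..R, ⟪h⁻¹ • (G (y + h) - G y), ψ y⟫)
        (nhdsWithin 0 (Set.Ioi 0)) (nhds (∫ y in (-R)..R, ⟪G' y, ψ y⟫)) := by
      obtain ⟨K, hK⟩ := (isCompact_Icc (a := -R) (b := R + 1)).exists_bound_of_continuousOn
        hG'c.continuousOn
      have hK0 : 0 ≤ K := le_trans (norm_nonneg (G' R)) (hK R (by constructor <;> linarith))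
      apply intervalIntegral.tendsto_integral_filter_of_dominated_convergence
        (bound := fun _ => K * C)
      · filter_upwards with h
        exact (Continuous.inner (((hGc.comp (continuous_id.add continuous_const)).sub
          hGc).const_smul h⁻¹) hψc).aestronglyMeasurable
      · filter_upwards [Ioc_mem_nhdsGT_of_mem (Set.left_mem_Ico.2 one_pos)] with h hh
        refine ae_of_all _ fun y hy => ?_
        rw [Set.uIoc_of_le (by linarith : -R ≤ R)] at hy
        have h0 : 0 < h := hh.1
        have hmean : ‖G (y + h) - G y‖ ≤ K * h := by
          have := Convex.norm_image_sub_le_of_norm_hasDerivWithin_le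
            (f := G) (f' := G') (s := Set.Icc (-R) (R + 1))
            (fun x _ => (hG x).hasDerivWithinAt) (fun x hx => hK x hx) (convex_Icc _ _)
            (x := y) (y := y + h) ⟨by linarith [hy.1], by linarith [hy.2]⟩
            ⟨by linarith [hy.1], by linarith [hy.2, hh.2]⟩
          simpa [abs_of_pos h0] using this
        calc ‖⟪h⁻¹ • (G (y + h) - G y), ψ y⟫‖
            ≤ ‖h⁻¹ • (G (y + h) - G y)‖ * ‖ψ y‖ := by
              rw [Real.norm_eq_abs]; exact abs_real_inner_le_norm _ _
          _ ≤ (h⁻¹ * (K * h)) * C := by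
              apply mul_le_mul _ (hψC y) (norm_nonneg _) (by positivity)
              rw [norm_smul, Real.norm_eq_abs, abs_of_pos (inv_pos.2 h0)]
              exact mul_le_mul_of_nonneg_left hmean (le_of_lt (inv_pos.2 h0))
          _ = K * C := by field_simp
      · exact intervalIntegrable_const
      · refine ae_of_all _ fun y _ => ?_
        have hs := (hG y).tendsto_slope_zero_right
        have hcont : Continuous fun v : E3 => (⟪v, ψ y⟫ : ℝ) :=
          Continuous.inner continuous_id continuous_const
        exact (hcont.continuousAt.tendsto.comp hs)
    -- bound on difference quotient integrals
    have hJb : ∀ h : ℝ, h ∈ Set.Ioc (0 : ℝ) 1 →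
        |∫ y in (-R)..R, ⟪h⁻¹ • (G (y + h) - G y), ψ y⟫| ≤ L * IG + 2 * ε := by
      intro h hh
      have h0 : 0 < h := hh.1
      have h1 : h ≤ 1 := hh.2
      have hPc : Continuous fun u => ⟪G u, ψ (u - h)⟫ :=
        Continuous.inner hGc (hψc.comp (continuous_id.sub continuous_const))
      have hQc : Continuous fun u => ⟪G u, ψ u⟫ := Continuous.inner hGc hψc
      have hPi : ∀ u v : ℝ, IntervalIntegrable (fun u => ⟪G u, ψ (u - h)⟫) volume u v :=
        fun u v => hPc.intervalIntegrable u v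
      have hQi : ∀ u v : ℝ, IntervalIntegrable (fun u => ⟪G u, ψ u⟫) volume u v :=
        fun u v => hQc.intervalIntegrable u v
      have e1 : IntervalIntegrable (fun y => (⟪G (y + h), ψ y⟫ : ℝ)) volume (-R) R := by
        apply Continuous.intervalIntegrable
        exact Continuous.inner (hGc.comp (continuous_add_right h)) hψc
      have step1 : ∫ y in (-R)..R, ⟪h⁻¹ • (G (y + h) - G y), ψ y⟫
          = h⁻¹ * ((∫ y in (-R)..R, ⟪G (y + h), ψ y⟫) - ∫ y in (-R)..R, ⟪G y, ψ y⟫) := by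
        calc ∫ y in (-R)..R, ⟪h⁻¹ • (G (y + h) - G y), ψ y⟫
            = ∫ y in (-R)..R, h⁻¹ * ((⟪G (y + h), ψ y⟫ : ℝ) - ⟪G y, ψ y⟫) := by
              congr 1 with y
              rw [real_inner_smul_left, inner_sub_left]
          _ = h⁻¹ * ∫ y in (-R)..R, ((⟪G (y + h), ψ y⟫ : ℝ) - ⟪G y, ψ y⟫) :=
              intervalIntegral.integral_const_mul _ _
          _ = h⁻¹ * ((∫ y in (-R)..R, ⟪G (y + h), ψ y⟫) - ∫ y in (-R)..R, ⟪G y, ψ y⟫) := by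
              rw [intervalIntegral.integral_sub e1 (hQi _ _)]
      have step2 : (∫ y in (-R)..R, ⟪G (y + h), ψ y⟫)
          = ∫ u in (-R + h)..(R + h), ⟪G u, ψ (u - h)⟫ := by
        have := intervalIntegral.integral_comp_add_right (a := -R) (b := R)
          (f := fun u => ⟪G u, ψ (u - h)⟫) h
        rw [← this]
        congr 1 with y
        rw [add_sub_cancel_right]
      have split1 : (∫ u in (-R + h)..(R + h), ⟪G u, ψ (u - h)⟫)
          = (∫ u in (-R + h)..R, ⟪G u, ψ (u - h)⟫) + ∫ u in R..(R + h), ⟪G u, ψ (u - h)⟫ :=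
        (intervalIntegral.integral_add_adjacent_intervals (hPi _ _) (hPi _ _)).symm
      have split2 : (∫ y in (-R)..R, ⟪G y, ψ y⟫)
          = (∫ y in (-R)..(-R + h), ⟪G y, ψ y⟫) + ∫ y in (-R + h)..R, ⟪G y, ψ y⟫ :=
        (intervalIntegral.integral_add_adjacent_intervals (hQi _ _) (hQi _ _)).symm
      have hmid : |(∫ u in (-R + h)..R, ⟪G u, ψ (u - h)⟫) - ∫ y in (-R + h)..R, ⟪G y, ψ y⟫|
          ≤ L * h * IG := by
        rw [← intervalIntegral.integral_sub (hPi _ _) (hQi _ _), ← Real.norm_eq_abs]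
        refine (intervalIntegral.norm_integral_le_integral_norm (by linarith)).trans ?_
        have hmono : ∫ y in (-R + h)..R, ‖⟪G y, ψ (y - h)⟫ - ⟪G y, ψ y⟫‖
            ≤ ∫ y in (-R + h)..R, (L * h) * ‖G y‖ := by
          apply intervalIntegral.integral_mono_on (by linarith)
            ((hPc.sub hQc).norm.intervalIntegrable _ _)
            ((continuous_const.mul hGc.norm).intervalIntegrable _ _)
          intro y _
          show ‖⟪G y, ψ (y - h)⟫ - ⟪G y, ψ y⟫‖ ≤ (L * h) * ‖G y‖
          rw [← inner_sub_right, Real.norm_eq_abs]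
          calc |⟪G y, ψ (y - h) - ψ y⟫| ≤ ‖G y‖ * ‖ψ (y - h) - ψ y‖ :=
                abs_real_inner_le_norm _ _
            _ ≤ ‖G y‖ * (L * h) := by
                apply mul_le_mul_of_nonneg_left _ (norm_nonneg _)
                have := hψL (y - h) y
                simpa [abs_of_pos h0] using this
            _ = (L * h) * ‖G y‖ := by ring
        refine hmono.trans ?_
        rw [intervalIntegral.integral_const_mul]
        exact mul_le_mul_of_nonneg_left (hIseg _ _ (by linarith)) (by positivity)
      have hright : |∫ u in R..(R + h), ⟪G u, ψ (u - h)⟫| ≤ ε * h := by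
        rw [← Real.norm_eq_abs]
        have := intervalIntegral.norm_integral_le_of_norm_le_const (C := ε)
          (f := fun u => ⟪G u, ψ (u - h)⟫) (a := R) (b := R + h) ?_
        · calc ‖∫ u in R..(R + h), ⟪G u, ψ (u - h)⟫‖ ≤ ε * |R + h - R| := this
            _ = ε * h := by rw [add_sub_cancel_left, abs_of_pos h0]
        · intro u hu
          rw [Set.uIoc_of_le (by linarith : R ≤ R + h)] at hu
          exact hedge u (by nlinarith [hu.1, hu.2]) _ (hψC _)
      have hleft : |∫ y in (-R)..(-R + h), ⟪G y, ψ y⟫| ≤ ε * h := by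
        rw [← Real.norm_eq_abs]
        have := intervalIntegral.norm_integral_le_of_norm_le_const (C := ε)
          (f := fun u => ⟪G u, ψ u⟫) (a := -R) (b := -R + h) ?_
        · calc ‖∫ u in (-R)..(-R + h), ⟪G u, ψ u⟫‖ ≤ ε * |(-R + h) - -R| := this
            _ = ε * h := by
              rw [show (-R + h) - -R = h by ring, abs_of_pos h0]
        · intro u hu
          rw [Set.uIoc_of_le (by linarith : -R ≤ -R + h)] at hu
          exact hedge u (by nlinarith [hu.1, hu.2]) _ (hψC _)
      rw [step1, step2, split1, split2]
      have hfinal : |(∫ u in (-R + h)..R, ⟪G u, ψ (u - h)⟫) + (∫ u in R..(R + h), ⟪G u, ψ (u - h)⟫)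
          - ((∫ y in (-R)..(-R + h), ⟪G y, ψ y⟫) + ∫ y in (-R + h)..R, ⟪G y, ψ y⟫)|
          ≤ L * h * IG + ε * h + ε * h := by
        have habs : ∀ A B CC DD : ℝ, |A - DD| ≤ L * h * IG → |B| ≤ ε * h → |CC| ≤ ε * h →
            |A + B - (CC + DD)| ≤ L * h * IG + ε * h + ε * h := by
          intro A B CC DD h1 h2 h3
          calc |A + B - (CC + DD)| = |(A - DD) + B + (-CC)| := by ring_nf
            _ ≤ |(A - DD) + B| + |(-CC)| := abs_add_le _ _
            _ ≤ |A - DD| + |B| + |(-CC)| := by linarith [abs_add_le (A - DD) B]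
            _ ≤ L * h * IG + ε * h + ε * h := by rw [abs_neg]; linarith
        exact habs _ _ _ _ hmid hright hleft
      rw [abs_mul, abs_of_pos (inv_pos.2 h0)]
      calc h⁻¹ * |(∫ u in (-R + h)..R, ⟪G u, ψ (u - h)⟫) + (∫ u in R..(R + h), ⟪G u, ψ (u - h)⟫)
            - ((∫ y in (-R)..(-R + h), ⟪G y, ψ y⟫) + ∫ y in (-R + h)..R, ⟪G y, ψ y⟫)|
          ≤ h⁻¹ * (L * h * IG + ε * h + ε * h) :=
            mul_le_mul_of_nonneg_left hfinal (le_of_lt (inv_pos.2 h0))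
        _ = L * IG + 2 * ε := by field_simp; ring
    -- pass to the limit h → 0⁺
    have : Tendsto (fun h : ℝ => |∫ y in (-R)..R, ⟪h⁻¹ • (G (y + h) - G y), ψ y⟫|)
        (nhdsWithin 0 (Set.Ioi 0)) (nhds |∫ y in (-R)..R, ⟪G' y, ψ y⟫|) := hJlim.abs
    refine le_of_tendsto this ?_
    filter_upwards [Ioc_mem_nhdsGT_of_mem (Set.left_mem_Ico.2 one_pos)] with h hh
    exact hJb h hh
  -- pass to the limit R → ∞
  have h1 : Tendsto (fun R : ℝ => ∫ y in (-R)..R, ⟪G' y, ψ y⟫) atTop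
      (nhds (∫ y : ℝ, ⟪G' y, ψ y⟫)) :=
    intervalIntegral_tendsto_integral hint tendsto_neg_atTop_atBot tendsto_id
  have h3 : Tendsto (fun R : ℝ => L * IG + 2 * (C * (D * Real.exp (-bb * (R - 1) ^ 2)))) atTop
      (nhds (L * IG)) := by
    have hbase : Tendsto (fun R : ℝ => Real.exp (-bb * (R - 1) ^ 2)) atTop (nhds 0) := by
      apply Real.tendsto_exp_atBot.comp
      have hsq : Tendsto (fun R : ℝ => (R - 1) ^ 2) atTop atTop :=
        (tendsto_pow_atTop two_ne_zero).comp (tendsto_atTop_add_const_right _ (-1) tendsto_id)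
      exact hsq.const_mul_atTop_of_neg (by linarith)
    have := ((hbase.const_mul D).const_mul C).const_mul 2
    simpa using tendsto_const_nhds.add this
  refine le_of_tendsto_of_tendsto h1.abs h3 ?_
  filter_upwards [eventually_ge_atTop (1 : ℝ)] with R hR
  exact key R hR

set_option maxHeartbeats 1600000 in
theorem stmt9 (α β c T : ℝ) (hα : α ∈ Set.Ioc (0 : ℝ) 1) (hβ : β = Real.sqrt (1 - α ^ 2))
    (hc : 0 < c) (m n b : ℝ → E3)
    (hmdiff : Differentiable ℝ m) (hndiff : Differentiable ℝ n) (hbdiff : Differentiable ℝ b)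
    (hm : ∀ x : ℝ, deriv m x = (c * Real.exp (α * x ^ 2 / 4)) • n x)
    (hn : ∀ x : ℝ, deriv n x
      = -((c * Real.exp (α * x ^ 2 / 4)) • m x) + (-(β * x / 2)) • b x)
    (hb : ∀ x : ℝ, deriv b x = -((-(β * x / 2)) • n x))
    (hm0 : m 0 = EuclideanSpace.single (0 : Fin 3) (1 : ℝ))
    (hn0 : n 0 = EuclideanSpace.single (1 : Fin 3) (1 : ℝ))
    (hb0 : b 0 = EuclideanSpace.single (2 : Fin 3) (1 : ℝ))
    (M : ℝ → ℝ → E3) (hM : M = fun x t => m (x / Real.sqrt (T - t))) :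
    ∀ φ : ℝ → E3, (∃ L : NNReal, LipschitzWith L φ) → (∃ C : ℝ, ∀ x : ℝ, ‖φ x‖ ≤ C) →
      Tendsto (fun t : ℝ => ∫ x : ℝ, ⟪M x t, φ x⟫)
        (nhdsWithin T (Set.Iio T)) (nhds 0) := by
  obtain ⟨hα0, hα1⟩ := hα
  have hβ0 : 0 ≤ β := hβ ▸ Real.sqrt_nonneg _
  have hβ1 : β ≤ 1 := by
    rw [hβ]
    exact Real.sqrt_le_one.2 (by nlinarith)
  have hcne : c ≠ 0 := ne_of_gt hc
  -- derivatives as HasDerivAt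
  have hm' : ∀ y, HasDerivAt m ((c * Real.exp (α * y ^ 2 / 4)) • n y) y := fun y => by
    have := (hmdiff y).hasDerivAt; rwa [hm y] at this
  have hn' : ∀ y, HasDerivAt n
      (-((c * Real.exp (α * y ^ 2 / 4)) • m y) + (-(β * y / 2)) • b y) y := fun y => by
    have := (hndiff y).hasDerivAt; rwa [hn y] at this
  have hb' : ∀ y, HasDerivAt b (-((-(β * y / 2)) • n y)) y := fun y => by
    have := (hbdiff y).hasDerivAt; rwa [hb y] at this
  have hmc : Continuous m := hmdiff.continuous
  have hnc : Continuous n := hndiff.continuous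
  have hbc : Continuous b := hbdiff.continuous
  -- conservation of total norm
  have hsum : ∀ y : ℝ, ‖m y‖ ^ 2 + ‖n y‖ ^ 2 + ‖b y‖ ^ 2 = 3 := by
    have hσd : ∀ y : ℝ, HasDerivAt
        (fun y => (⟪m y, m y⟫ : ℝ) + ⟪n y, n y⟫ + ⟪b y, b y⟫) 0 y := fun y => by
      have h1 := ((hm' y).inner ℝ (hm' y)).add ((hn' y).inner ℝ (hn' y))
      have h2 := h1.add ((hb' y).inner ℝ (hb' y))
      refine h2.congr_deriv ?_
      simp only [inner_add_right, inner_add_left, inner_neg_right, inner_neg_left,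
        real_inner_smul_left, real_inner_smul_right]
      rw [real_inner_comm (n y) (m y), real_inner_comm (b y) (n y)]
      ring
    have hconst : ∀ y : ℝ, ((⟪m y, m y⟫ : ℝ) + ⟪n y, n y⟫ + ⟪b y, b y⟫)
        = (⟪m 0, m 0⟫ : ℝ) + ⟪n 0, n 0⟫ + ⟪b 0, b 0⟫ := fun y =>
      is_const_of_deriv_eq_zero (fun x => (hσd x).differentiableAt)
        (fun x => (hσd x).deriv) y 0
    intro y
    have h0 : ((⟪m 0, m 0⟫ : ℝ) + ⟪n 0, n 0⟫ + ⟪b 0, b 0⟫) = 3 := by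
      rw [hm0, hn0, hb0]
      simp [real_inner_self_eq_norm_sq, EuclideanSpace.norm_single]
      norm_num
    have := (hconst y).trans h0
    rw [real_inner_self_eq_norm_sq, real_inner_self_eq_norm_sq,
      real_inner_self_eq_norm_sq] at this
    exact this
  have hmB : ∀ y, ‖m y‖ ≤ Real.sqrt 3 := fun y => by
    rw [← Real.sqrt_sq (norm_nonneg (m y))]
    exact Real.sqrt_le_sqrt (by nlinarith [hsum y, sq_nonneg ‖n y‖, sq_nonneg ‖b y‖])
  have hnB : ∀ y, ‖n y‖ ≤ Real.sqrt 3 := fun y => by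
    rw [← Real.sqrt_sq (norm_nonneg (n y))]
    exact Real.sqrt_le_sqrt (by nlinarith [hsum y, sq_nonneg ‖m y‖, sq_nonneg ‖b y‖])
  have hbB : ∀ y, ‖b y‖ ≤ Real.sqrt 3 := fun y => by
    rw [← Real.sqrt_sq (norm_nonneg (b y))]
    exact Real.sqrt_le_sqrt (by nlinarith [hsum y, sq_nonneg ‖m y‖, sq_nonneg ‖n y‖])
  -- the integrating factor a = 1/k
  set a : ℝ → ℝ := fun y => (c * Real.exp (α * y ^ 2 / 4))⁻¹ with hadef
  have hapos : ∀ y, 0 < a y := fun y => by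
    rw [hadef]; positivity
  have hka : ∀ y, a y * (c * Real.exp (α * y ^ 2 / 4)) = 1 := fun y =>
    inv_mul_cancel₀ (by positivity)
  have ha_eq : ∀ y, a y = c⁻¹ * Real.exp (-(α / 4) * y ^ 2) := fun y => by
    rw [hadef]
    simp only []
    rw [mul_inv, ← Real.exp_neg]
    congr 1
    ring
  have had : ∀ y, HasDerivAt a (-(α * y / 2) * a y) y := by
    intro y
    have h1 : HasDerivAt (fun y : ℝ => α * y ^ 2 / 4) (α * y / 2) y := by
      have := ((hasDerivAt_pow 2 y).const_mul α).div_const 4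
      refine this.congr_deriv ?_
      ring
    have h2 := (h1.exp.const_mul c).inv (by positivity :
      c * Real.exp (α * y ^ 2 / 4) ≠ 0)
    refine h2.congr_deriv ?_
    rw [hadef]
    field_simp
  have hac : Continuous a := by
    rw [hadef]
    exact (continuous_const.mul (Real.continuous_exp.comp
      ((continuous_const.mul (continuous_pow 2)).div_const 4))).inv₀
      fun y => (mul_pos hc (Real.exp_pos _)).ne'
  -- G and r
  set r : ℝ → E3 := fun y => (a y * (-(β * y / 2))) • b y + ((-(α * y / 2)) * a y) • n y
    with hrdef
  set G : ℝ → E3 := fun y => a y • n y with hGdef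
  have hGd : ∀ y, HasDerivAt G (-(m y) + r y) y := by
    intro y
    have h := (had y).smul (hn' y)
    refine h.congr_deriv ?_
    rw [hrdef]
    simp only [smul_add, smul_neg, smul_smul]
    rw [hka y, one_smul]
    abel
  have hc1 : Continuous fun y : ℝ => -(β * y / 2) :=
    ((continuous_const.mul continuous_id).div_const 2).neg
  have hc2 : Continuous fun y : ℝ => -(α * y / 2) :=
    ((continuous_const.mul continuous_id).div_const 2).neg
  have hrc : Continuous r := by
    rw [hrdef]
    exact ((hac.mul hc1).smul hbc).add ((hc2.mul hac).smul hnc)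
  have hG'c : Continuous fun y => -(m y) + r y := hmc.neg.add hrc
  have hGb : ∀ y, ‖G y‖ ≤ (c⁻¹ * Real.sqrt 3) * Real.exp (-(α / 4) * y ^ 2) := by
    intro y
    rw [hGdef]
    simp only []
    rw [norm_smul, Real.norm_eq_abs, abs_of_pos (hapos y), ha_eq y]
    have h1 := hnB y
    have h2 : (0 : ℝ) ≤ c⁻¹ * Real.exp (-(α / 4) * y ^ 2) := by positivity
    calc c⁻¹ * Real.exp (-(α / 4) * y ^ 2) * ‖n y‖
        ≤ c⁻¹ * Real.exp (-(α / 4) * y ^ 2) * Real.sqrt 3 :=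
          mul_le_mul_of_nonneg_left h1 h2
      _ = c⁻¹ * Real.sqrt 3 * Real.exp (-(α / 4) * y ^ 2) := by ring
  have hrB : ∀ y, ‖r y‖ ≤ (c⁻¹ * Real.sqrt 3) * |y * Real.exp (-(α / 4) * y ^ 2)| := by
    intro y
    rw [hrdef]
    simp only []
    have habs1 : |a y * (-(β * y / 2))| = a y * (β * |y| / 2) := by
      rw [abs_mul, abs_of_pos (hapos y), abs_neg, abs_div, abs_mul,
        abs_of_nonneg hβ0]
      norm_num
    have habs2 : |(-(α * y / 2)) * a y| = (α * |y| / 2) * a y := by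
      rw [abs_mul, abs_of_pos (hapos y), abs_neg, abs_div, abs_mul,
        abs_of_nonneg (le_of_lt hα0)]
      norm_num
    calc ‖(a y * (-(β * y / 2))) • b y + ((-(α * y / 2)) * a y) • n y‖
        ≤ ‖(a y * (-(β * y / 2))) • b y‖ + ‖((-(α * y / 2)) * a y) • n y‖ := norm_add_le _ _
      _ = (a y * (β * |y| / 2)) * ‖b y‖ + ((α * |y| / 2) * a y) * ‖n y‖ := by
          rw [norm_smul, norm_smul, Real.norm_eq_abs, Real.norm_eq_abs, habs1, habs2]
      _ ≤ (a y * (|y| / 2)) * Real.sqrt 3 + ((|y| / 2) * a y) * Real.sqrt 3 := by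
          have hb1 : (a y * (β * |y| / 2)) * ‖b y‖ ≤ (a y * (|y| / 2)) * Real.sqrt 3 := by
            apply mul_le_mul _ (hbB y) (norm_nonneg _)
              (mul_nonneg (hapos y).le (by positivity))
            apply mul_le_mul_of_nonneg_left _ (hapos y).le
            nlinarith [abs_nonneg y]
          have hb2 : ((α * |y| / 2)) * a y * ‖n y‖ ≤ ((|y| / 2) * a y) * Real.sqrt 3 := by
            apply mul_le_mul _ (hnB y) (norm_nonneg _)
              (mul_nonneg (by positivity) (hapos y).le)
            apply mul_le_mul_of_nonneg_right _ (hapos y).le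
            nlinarith [abs_nonneg y]
          linarith
      _ = Real.sqrt 3 * a y * |y| := by ring
      _ = (c⁻¹ * Real.sqrt 3) * |y * Real.exp (-(α / 4) * y ^ 2)| := by
          rw [ha_eq y, abs_mul, abs_of_pos (Real.exp_pos _)]
          ring
  -- integrability
  have hα4 : 0 < α / 4 := by linarith
  have hIexp : Integrable (fun y : ℝ => Real.exp (-(α / 4) * y ^ 2)) :=
    integrable_exp_neg_mul_sq hα4
  have hIxexp : Integrable (fun y : ℝ => |y * Real.exp (-(α / 4) * y ^ 2)|) :=
    (integrable_mul_exp_neg_mul_sq hα4).abs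
  have hGnInt : Integrable (fun y => ‖G y‖) := by
    refine (hIexp.const_mul (c⁻¹ * Real.sqrt 3)).mono'
      ((hac.smul hnc).norm.aestronglyMeasurable) (ae_of_all _ fun y => ?_)
    rw [norm_norm]
    exact hGb y
  have hrnInt : Integrable (fun y => ‖r y‖) := by
    refine (hIxexp.const_mul (c⁻¹ * Real.sqrt 3)).mono'
      (hrc.norm.aestronglyMeasurable) (ae_of_all _ fun y => ?_)
    rw [norm_norm]
    exact hrB y
  set Ir := ∫ y : ℝ, ‖r y‖ with hIrdef
  set Ig := ∫ y : ℝ, ‖G y‖ with hIgdef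
  have hIr0 : 0 ≤ Ir := integral_nonneg fun _ => norm_nonneg _
  have hIg0 : 0 ≤ Ig := integral_nonneg fun _ => norm_nonneg _
  -- main pairing bound
  intro φ hLip hBdd
  obtain ⟨L0, hφL⟩ := hLip
  obtain ⟨C0, hφC0⟩ := hBdd
  set L : ℝ := (L0 : ℝ) with hLdef
  set C : ℝ := max C0 0 with hCdef
  have hL : 0 ≤ L := L0.coe_nonneg
  have hC : 0 ≤ C := le_max_right _ _
  have hφC : ∀ x, ‖φ x‖ ≤ C := fun x => (hφC0 x).trans (le_max_left _ _)
  have hφLip : ∀ x z : ℝ, ‖φ x - φ z‖ ≤ L * |x - z| := fun x z => by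
    have := hφL.dist_le_mul x z
    rwa [dist_eq_norm, Real.dist_eq] at this
  have key : ∀ ψ : ℝ → E3, Continuous ψ → (∀ x, ‖ψ x‖ ≤ C) →
      (∀ x z, ‖ψ x - ψ z‖ ≤ L * |x - z|) →
      |∫ y : ℝ, ⟪m y, ψ y⟫| ≤ C * Ir + L * Ig := by
    intro ψ hψc hψC hψL
    by_cases hI : Integrable (fun y => (⟪m y, ψ y⟫ : ℝ))
    · have hrψInt : Integrable (fun y => (⟪r y, ψ y⟫ : ℝ)) := by
        refine (hrnInt.const_mul C).mono'
          ((Continuous.inner hrc hψc).aestronglyMeasurable) (ae_of_all _ fun y => ?_)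
        rw [Real.norm_eq_abs]
        calc |(⟪r y, ψ y⟫ : ℝ)| ≤ ‖r y‖ * ‖ψ y‖ := abs_real_inner_le_norm _ _
          _ ≤ ‖r y‖ * C := mul_le_mul_of_nonneg_left (hψC y) (norm_nonneg _)
          _ = C * ‖r y‖ := mul_comm _ _
      have hGψInt : Integrable (fun y => (⟪-(m y) + r y, ψ y⟫ : ℝ)) := by
        have heq : (fun y => (⟪-(m y) + r y, ψ y⟫ : ℝ))
            = fun y => (⟪r y, ψ y⟫ : ℝ) - ⟪m y, ψ y⟫ := funext fun y => by
          simp only [inner_add_left, inner_neg_left]; ring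
        rw [heq]
        exact hrψInt.sub hI
      have hsplit : (∫ y : ℝ, (⟪m y, ψ y⟫ : ℝ))
          = (∫ y : ℝ, (⟪r y, ψ y⟫ : ℝ)) - ∫ y : ℝ, (⟪-(m y) + r y, ψ y⟫ : ℝ) := by
        rw [← integral_sub hrψInt hGψInt]
        congr 1 with y
        simp only [inner_add_left, inner_neg_left]
        ring
      have h1 : |∫ y : ℝ, (⟪r y, ψ y⟫ : ℝ)| ≤ C * Ir := by
        rw [← Real.norm_eq_abs]
        refine (norm_integral_le_integral_norm _).trans ?_
        have : (∫ y : ℝ, ‖(⟪r y, ψ y⟫ : ℝ)‖) ≤ ∫ y : ℝ, C * ‖r y‖ := by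
          apply integral_mono hrψInt.norm (hrnInt.const_mul C)
          intro y
          show ‖(⟪r y, ψ y⟫ : ℝ)‖ ≤ C * ‖r y‖
          rw [Real.norm_eq_abs]
          calc |(⟪r y, ψ y⟫ : ℝ)| ≤ ‖r y‖ * ‖ψ y‖ := abs_real_inner_le_norm _ _
            _ ≤ ‖r y‖ * C := mul_le_mul_of_nonneg_left (hψC y) (norm_nonneg _)
            _ = C * ‖r y‖ := mul_comm _ _
        refine this.trans ?_
        rw [integral_const_mul, ← hIrdef]
      have h2 : |∫ y : ℝ, (⟪-(m y) + r y, ψ y⟫ : ℝ)| ≤ L * Ig :=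
        ibp_bound G (fun y => -(m y) + r y) ψ L C (c⁻¹ * Real.sqrt 3) (α / 4)
          hL hC (by positivity) hα4 hGd hG'c hψc hψC hψL hGb hGψInt
      rw [hsplit]
      calc |(∫ y : ℝ, (⟪r y, ψ y⟫ : ℝ)) - ∫ y : ℝ, (⟪-(m y) + r y, ψ y⟫ : ℝ)|
          ≤ |∫ y : ℝ, (⟪r y, ψ y⟫ : ℝ)| + |∫ y : ℝ, (⟪-(m y) + r y, ψ y⟫ : ℝ)| :=
            abs_sub _ _
        _ ≤ C * Ir + L * Ig := add_le_add h1 h2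
    · rw [integral_undef hI]
      simp only [abs_zero]
      exact add_nonneg (mul_nonneg hC hIr0) (mul_nonneg hL hIg0)
  -- final assembly
  have hmain : ∀ t ∈ Set.Ioo (T - 1) T,
      |∫ x : ℝ, ⟪M x t, φ x⟫| ≤ Real.sqrt (T - t) * (C * Ir + L * Ig) := by
    intro t ht
    set s := Real.sqrt (T - t) with hsdef
    have hs0 : 0 < s := Real.sqrt_pos.mpr (by linarith [ht.2])
    have hs1 : s ≤ 1 := by
      rw [hsdef, show (1 : ℝ) = Real.sqrt 1 by simp]
      exact Real.sqrt_le_sqrt (by linarith [ht.1])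
    have hcov : (fun x : ℝ => (⟪M x t, φ x⟫ : ℝ))
        = fun x => (fun y => (⟪m y, φ (s * y)⟫ : ℝ)) (x / s) := funext fun x => by
      rw [hM]
      simp only []
      rw [mul_comm s (x / s), div_mul_cancel₀ x (ne_of_gt hs0)]
    rw [hcov, Measure.integral_comp_div (fun y => (⟪m y, φ (s * y)⟫ : ℝ)) s]
    have hkey := key (fun y => φ (s * y)) (hφL.continuous.comp (by continuity))
      (fun x => hφC _) (fun x z => by
        calc ‖φ (s * x) - φ (s * z)‖ ≤ L * |s * x - s * z| := hφLip _ _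
          _ = L * (s * |x - z|) := by
            rw [show s * x - s * z = s * (x - z) by ring, abs_mul, abs_of_pos hs0]
          _ ≤ L * (1 * |x - z|) := by
            apply mul_le_mul_of_nonneg_left _ hL
            exact mul_le_mul_of_nonneg_right hs1 (abs_nonneg _)
          _ = L * |x - z| := by ring)
    rw [smul_eq_mul, abs_mul, abs_of_pos (abs_pos.2 (ne_of_gt hs0)), abs_of_pos hs0]
    exact mul_le_mul_of_nonneg_left hkey (le_of_lt hs0)
  have hTend : Tendsto (fun t : ℝ => Real.sqrt (T - t) * (C * Ir + L * Ig))
      (nhdsWithin T (Set.Iio T)) (nhds 0) := by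
    have h1 : Tendsto (fun t : ℝ => T - t) (nhdsWithin T (Set.Iio T)) (nhds 0) := by
      have := (((continuous_const : Continuous fun _ : ℝ => T).sub continuous_id).tendsto T).mono_left
        (nhdsWithin_le_nhds : nhdsWithin T (Set.Iio T) ≤ nhds T)
      simpa [Pi.sub_def] using this
    have h2 : Tendsto (fun t : ℝ => Real.sqrt (T - t)) (nhdsWithin T (Set.Iio T)) (nhds 0) := by
      have := (Real.continuous_sqrt.tendsto 0).comp h1
      simpa [Function.comp_def] using this
    simpa using h2.mul_const (C * Ir + L * Ig)
  apply squeeze_zero_norm' _ hTend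
  filter_upwards [Ioo_mem_nhdsLT_of_mem
    (show T ∈ Set.Ioc (T - 1) T from ⟨by linarith, le_refl T⟩)] with t ht
  rw [Real.norm_eq_abs]
  exact hmain t ht
end
end

section
/- Fix α ∈ (0,1], β = √(1−α²) and c > 0. Let (m, n, b) solve the Serret–Frenet system m' = k n, n' = −k m + τ b, b' = −τ n with k(x) = c·e^{α x²/4}, τ(x) = −βx/2, and initial conditions m(0) = (1,0,0), n(0) = (0,1,0), b(0) = (0,0,1). The limit B⁺ := lim_{x→∞} b(x) = (B₁, B₂, B₃) exists and is a unit vector; set B⁻ := (−B₁, B₂, B₃), and let C⁺ and C⁻ be the great circles C^± = {p ∈ ℝ³ : |p| = 1 and p·B^± = 0}. Then for all x ≥ 1, dist(m(x), C⁺) ≤ (30√2 β/(c α²)) x e^{−α x²/4}, and for all x ≤ −1, dist(m(x), C⁻) ≤ (30√2 β/(c α²)) |x| e^{−α x²/4}, where dist denotes the Euclidean distance from a point to a set in ℝ³. -/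
noncomputable section

open Real MeasureTheory Filter Metric
open scoped RealInnerProductSpace

section Aux
open Set


lemma gronwall_zero {F : Type*} [NormedAddCommGroup F] [NormedSpace ℝ F]
    (f f' : ℝ → F) (K : ℝ → ℝ) (hK : Continuous K)
    (hf : ∀ t, HasDerivAt f (f' t) t)
    (hbound : ∀ t, ‖f' t‖ ≤ K t * ‖f t‖)
    (h0 : f 0 = 0) : ∀ x, f x = 0 := by
  have key : ∀ (g g' : ℝ → F) (L : ℝ → ℝ), Continuous L →
      (∀ t, HasDerivAt g (g' t) t) → (∀ t, ‖g' t‖ ≤ L t * ‖g t‖) → g 0 = 0 →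
      ∀ x, 0 ≤ x → g x = 0 := by
    intro g g' L hL hg hgb hg0 x hx
    obtain ⟨C, hC⟩ := (isCompact_Icc (a := (0:ℝ)) (b := x)).exists_bound_of_continuousOn
      hL.continuousOn
    have := norm_le_gronwallBound_of_norm_deriv_right_le (f := g) (f' := g')
      (δ := 0) (K := C) (ε := 0) (a := 0) (b := x)
      (fun t ht => (hg t).continuousAt.continuousWithinAt)
      (fun t ht => (hg t).hasDerivWithinAt)
      (by simp [hg0])
      (fun t ht => by
        have h1 := hgb t
        have h2 : L t ≤ C := (le_abs_self _).trans (by simpa using hC t ⟨ht.1, ht.2.le⟩)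
        nlinarith [norm_nonneg (g t), norm_nonneg (g' t)])
    have hx0 := this x ⟨hx, le_rfl⟩
    rw [gronwallBound_ε0_δ0] at hx0
    exact norm_le_zero_iff.mp hx0
  intro x
  rcases le_or_gt 0 x with hx | hx
  · exact key f f' K hK hf hbound h0 x hx
  · have hneg : ∀ y, HasDerivAt (fun t => f (-t)) (-f' (-y)) y := fun y => by
      have h := (hf (-y)).scomp y (by exact (hasDerivAt_id y).neg); exact h.congr_deriv (by simp)
    have := key (fun t => f (-t)) (fun t => -f' (-t)) (fun t => K (-t))
      (hK.comp continuous_neg) hneg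
      (fun t => by simpa using hbound (-t)) (by simpa using h0) (-x) (by linarith)
    simpa using this

lemma tri3 (a b c u v w A : ℝ) (hu : |u| ≤ A) (hv : |v| ≤ A) (hw : |w| ≤ A) :
    |a*u + b*v + c*w| ≤ (|a| + |b| + |c|)*A := by
  have h1 : |a*u + b*v + c*w| ≤ |a| * |u| + |b| * |v| + |c| * |w| := by
    calc |a*u + b*v + c*w| ≤ |a*u| + |b*v| + |c*w| := abs_add_three _ _ _
    _ = |a| * |u| + |b| * |v| + |c| * |w| := by rw [abs_mul, abs_mul, abs_mul]
  nlinarith [abs_nonneg a, abs_nonneg b, abs_nonneg c, abs_nonneg u, abs_nonneg v, abs_nonneg w]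

lemma six_zero (k τ : ℝ → ℝ) (hk : Continuous k) (hτ : Continuous τ)
    (p q r s t v : ℝ → ℝ)
    (hp : ∀ x, HasDerivAt p (2*k x*s x) x)
    (hq : ∀ x, HasDerivAt q (-(2*k x*s x) + 2*τ x*v x) x)
    (hr : ∀ x, HasDerivAt r (-(2*τ x*v x)) x)
    (hs : ∀ x, HasDerivAt s (k x*q x - k x*p x + τ x*t x) x)
    (ht : ∀ x, HasDerivAt t (k x*v x - τ x*s x) x)
    (hv : ∀ x, HasDerivAt v (-(k x*t x) + τ x*(r x - q x)) x)
    (hp0 : p 0 = 0) (hq0 : q 0 = 0) (hr0 : r 0 = 0)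
    (hs0 : s 0 = 0) (ht0 : t 0 = 0) (hv0 : v 0 = 0) :
    ∀ x, p x = 0 ∧ q x = 0 ∧ r x = 0 ∧ s x = 0 ∧ t x = 0 ∧ v x = 0 := by
  set f : ℝ → (Fin 6 → ℝ) := fun x => ![p x, q x, r x, s x, t x, v x] with hf
  set f' : ℝ → (Fin 6 → ℝ) := fun x => ![2*k x*s x, -(2*k x*s x) + 2*τ x*v x,
    -(2*τ x*v x), k x*q x - k x*p x + τ x*t x, k x*v x - τ x*s x,
    -(k x*t x) + τ x*(r x - q x)] with hf'
  have hK : Continuous (fun x => 2*|k x| + 2*|τ x|) := by fun_prop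
  have hder : ∀ x, HasDerivAt f (f' x) x := by
    intro x
    apply hasDerivAt_pi.2
    intro i
    fin_cases i <;> simpa [f, f'] using (by first
      | exact hp x | exact hq x | exact hr x | exact hs x | exact ht x | exact hv x)
  have hbd : ∀ x, ‖f' x‖ ≤ (2*|k x| + 2*|τ x|) * ‖f x‖ := by
    intro x
    have hA : (0:ℝ) ≤ ‖f x‖ := norm_nonneg _
    have hip : |p x| ≤ ‖f x‖ := by simpa [f] using norm_le_pi_norm (f x) 0
    have hiq : |q x| ≤ ‖f x‖ := by simpa [f] using norm_le_pi_norm (f x) 1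
    have hir : |r x| ≤ ‖f x‖ := by simpa [f] using norm_le_pi_norm (f x) 2
    have his : |s x| ≤ ‖f x‖ := by simpa [f] using norm_le_pi_norm (f x) 3
    have hit : |t x| ≤ ‖f x‖ := by simpa [f] using norm_le_pi_norm (f x) 4
    have hiv : |v x| ≤ ‖f x‖ := by simpa [f] using norm_le_pi_norm (f x) 5
    have hka := abs_nonneg (k x); have hta := abs_nonneg (τ x)
    apply (pi_norm_le_iff_of_nonneg (by positivity)).2
    intro i
    fin_cases i <;> simp only [f', Real.norm_eq_abs, Matrix.cons_val_zero, Matrix.cons_val_one,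
      Matrix.head_cons, Matrix.cons_val_two, Matrix.tail_cons, Matrix.cons_val_three,
      Matrix.cons_val_four, Matrix.cons_val_fin_one, Matrix.cons_val']
    · have h := tri3 (2*k x) 0 0 (s x) 0 0 (‖f x‖) his (by simpa using hA) (by simpa using hA)
      have e : 2*k x*s x = 2*k x*s x + 0*0 + 0*0 := by ring
      rw [e]
      refine h.trans ?_
      apply mul_le_mul_of_nonneg_right _ hA
      simp only [abs_neg, abs_zero, abs_mul, abs_two]
      linarith
    · have h := tri3 (-(2*k x)) (2*τ x) 0 (s x) (v x) 0 (‖f x‖) his hiv (by simpa using hA)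
      have e : -(2*k x*s x) + 2*τ x*v x = (-(2*k x))*s x + (2*τ x)*v x + 0*0 := by ring
      rw [e]
      refine h.trans ?_
      apply mul_le_mul_of_nonneg_right _ hA
      simp only [abs_neg, abs_zero, abs_mul, abs_two]
      linarith
    · have h := tri3 (-(2*τ x)) 0 0 (v x) 0 0 (‖f x‖) hiv (by simpa using hA) (by simpa using hA)
      have e : -(2*τ x*v x) = (-(2*τ x))*v x + 0*0 + 0*0 := by ring
      rw [e]
      refine h.trans ?_
      apply mul_le_mul_of_nonneg_right _ hA
      simp only [abs_neg, abs_zero, abs_mul, abs_two]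
      linarith
    · have h := tri3 (k x) (-(k x)) (τ x) (q x) (p x) (t x) (‖f x‖) hiq hip hit
      have e : k x*q x - k x*p x + τ x*t x = k x*q x + (-(k x))*p x + τ x*t x := by ring
      rw [e]
      refine h.trans ?_
      apply mul_le_mul_of_nonneg_right _ hA
      simp only [abs_neg, abs_zero, abs_mul, abs_two]
      linarith
    · have h := tri3 (k x) (-(τ x)) 0 (v x) (s x) 0 (‖f x‖) hiv his (by simpa using hA)
      have e : k x*v x - τ x*s x = k x*v x + (-(τ x))*s x + 0*0 := by ring
      rw [e]
      refine h.trans ?_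
      apply mul_le_mul_of_nonneg_right _ hA
      simp only [abs_neg, abs_zero, abs_mul, abs_two]
      linarith
    · have h := tri3 (-(k x)) (τ x) (-(τ x)) (t x) (r x) (q x) (‖f x‖) hit hir hiq
      have e : -(k x*t x) + τ x*(r x - q x) = (-(k x))*t x + τ x*r x + (-(τ x))*q x := by ring
      rw [e]
      refine h.trans ?_
      apply mul_le_mul_of_nonneg_right _ hA
      simp only [abs_neg, abs_zero, abs_mul, abs_two]
      linarith
  have h0 : f 0 = 0 := by
    funext i
    simp only [Pi.zero_apply]
    fin_cases i
    · exact hp0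
    · exact hq0
    · exact hr0
    · exact hs0
    · exact ht0
    · exact hv0
  have hz := gronwall_zero f f' _ hK hder hbd h0
  intro x
  have := hz x
  exact ⟨congrFun this 0, congrFun this 1, congrFun this 2, congrFun this 3,
    congrFun this 4, congrFun this 5⟩


noncomputable def R3 (p : E3) : E3 := p - (2 * p 0) • EuclideanSpace.single (0 : Fin 3) (1 : ℝ)

lemma R3_hasDerivAt {g : ℝ → E3} {g' : E3} {x : ℝ} (hg : HasDerivAt g g' x) :
    HasDerivAt (fun y => R3 (g y)) (R3 g') x := by
  have h0 : HasDerivAt (fun y => g y 0) (g' 0) x := by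
    exact
      (EuclideanSpace.proj (0 : Fin 3)).hasFDerivAt.comp_hasDerivAt x hg
  exact hg.sub (((h0.const_mul 2).smul_const _))

lemma R3_inner (p q : E3) : ⟪R3 p, R3 q⟫ = ⟪p, q⟫ := by
  unfold R3
  simp only [inner_sub_left, inner_sub_right, real_inner_smul_left, real_inner_smul_right,
    EuclideanSpace.inner_single_left, EuclideanSpace.inner_single_right,
    RCLike.inner_apply, conj_trivial]
  have h2 : ((2 * p 0) • EuclideanSpace.single (0:Fin 3) (1:ℝ) : E3) 0 = 2 * p 0 := by
    simp [EuclideanSpace.single_apply]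
  rw [h2]
  ring

lemma R3_norm (p : E3) : ‖R3 p‖ = ‖p‖ := by
  have h := R3_inner p p
  rw [real_inner_self_eq_norm_sq, real_inner_self_eq_norm_sq] at h
  nlinarith [norm_nonneg (R3 p), norm_nonneg p]

lemma R3_invol (p : E3) : R3 (R3 p) = p := by
  unfold R3
  have h0 : (p - (2 * p 0) • EuclideanSpace.single (0:Fin 3) (1:ℝ)) 0 = - p 0 := by
    simp [EuclideanSpace.single_apply]
    ring
  rw [h0]
  module

lemma R3_single0 : R3 (EuclideanSpace.single (0 : Fin 3) (1:ℝ)) =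
    -EuclideanSpace.single (0 : Fin 3) (1:ℝ) := by
  unfold R3; simp [EuclideanSpace.single_apply]; module

lemma R3_single1 : R3 (EuclideanSpace.single (1 : Fin 3) (1:ℝ)) =
    EuclideanSpace.single (1 : Fin 3) (1:ℝ) := by
  unfold R3; simp [EuclideanSpace.single_apply]

lemma R3_single2 : R3 (EuclideanSpace.single (2 : Fin 3) (1:ℝ)) =
    EuclideanSpace.single (2 : Fin 3) (1:ℝ) := by
  unfold R3; simp [EuclideanSpace.single_apply]

lemma R3_neg (p : E3) : R3 (-p) = -R3 p := by unfold R3; simp; module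

lemma R3_smul (t : ℝ) (p : E3) : R3 (t • p) = t • R3 p := by
  unfold R3; simp [smul_smul, smul_sub]; ring

lemma R3_add (p q : E3) : R3 (p + q) = R3 p + R3 q := by unfold R3; simp; module

lemma R3_sub (p q : E3) : R3 (p - q) = R3 p - R3 q := by unfold R3; simp; module


set_option maxHeartbeats 1000000 in
lemma infDist_circle (p B : E3) (hp : ‖p‖ = 1) (hB : ‖B‖ = 1) (δ : ℝ)
    (ht : |⟪p, B⟫| ≤ δ) :
    Metric.infDist p {q : E3 | ‖q‖ = 1 ∧ ⟪q, B⟫ = 0} ≤ 2 * δ := by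
  have hBne : B ≠ 0 := by
    intro h; rw [h, norm_zero] at hB; norm_num at hB
  have hBB : ⟪B, B⟫ = (1:ℝ) := by
    rw [real_inner_self_eq_norm_sq, hB]; norm_num
  -- a point on the circle
  obtain ⟨v, hvK, hv0⟩ : ∃ v ∈ (ℝ ∙ B)ᗮ, v ≠ 0 := by
    rw [← Submodule.ne_bot_iff]
    intro hbot
    have htop : (ℝ ∙ B) = ⊤ := Submodule.orthogonal_eq_bot_iff.mp hbot
    have h1 : Module.finrank ℝ (ℝ ∙ B : Submodule ℝ E3) = 1 := finrank_span_singleton hBne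
    rw [htop] at h1
    have h2 : Module.finrank ℝ (⊤ : Submodule ℝ E3) = 3 := by
      rw [finrank_top]; simp
    omega
  have hvB : ⟪v, B⟫ = 0 := by
    rw [real_inner_comm]
    exact (Submodule.mem_orthogonal _ _).mp hvK B (Submodule.mem_span_singleton_self B)
  set q₀ : E3 := ‖v‖⁻¹ • v with hq₀
  have hvn : ‖v‖ ≠ 0 := norm_ne_zero_iff.2 hv0
  have hq₀mem : q₀ ∈ {q : E3 | ‖q‖ = 1 ∧ ⟪q, B⟫ = 0} := by
    constructor
    · rw [hq₀, norm_smul, norm_inv, norm_norm, inv_mul_cancel₀ hvn]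
    · rw [hq₀, real_inner_smul_left, hvB, mul_zero]
  set t : ℝ := ⟪p, B⟫ with htt
  by_cases hδ : 1 ≤ δ
  · refine le_trans (Metric.infDist_le_dist_of_mem hq₀mem) ?_
    rw [dist_eq_norm]
    refine le_trans (norm_sub_le _ _) ?_
    rw [hp, hq₀mem.1]
    linarith
  · push_neg at hδ
    have htle : |t| ≤ δ := ht
    have ht1 : |t| < 1 := lt_of_le_of_lt htle hδ
    set q : E3 := p - t • B with hq
    have hqB : ⟪q, B⟫ = 0 := by
      rw [hq, inner_sub_left, real_inner_smul_left, hBB]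
      ring
    have hqq : ⟪q, q⟫ = 1 - t^2 := by
      rw [hq]
      simp only [inner_sub_left, inner_sub_right, real_inner_smul_left, real_inner_smul_right,
        hBB]
      have hBp : ⟪B, p⟫ = t := by rw [real_inner_comm]
      rw [real_inner_self_eq_norm_sq, hp, hBp]
      ring
    set r : ℝ := ‖q‖ with hr
    have hr2 : r^2 = 1 - t^2 := by
      rw [hr, ← real_inner_self_eq_norm_sq, hqq]
    have hr0 : 0 ≤ r := norm_nonneg q
    have hrpos : 0 < r := by
      nlinarith [abs_nonneg t, sq_abs t]
    have hr1 : r ≤ 1 := by nlinarith [sq_abs t, abs_nonneg t]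
    set qh : E3 := r⁻¹ • q with hqh
    have hqhmem : qh ∈ {q : E3 | ‖q‖ = 1 ∧ ⟪q, B⟫ = 0} := by
      constructor
      · rw [hqh, norm_smul, norm_inv, Real.norm_eq_abs, abs_of_pos hrpos, ← hr,
          inv_mul_cancel₀ hrpos.ne']
      · rw [hqh, real_inner_smul_left, hqB, mul_zero]
    refine le_trans (Metric.infDist_le_dist_of_mem hqhmem) ?_
    rw [dist_eq_norm]
    have e1 : p - qh = (p - q) + (q - qh) := by abel
    have e2 : ‖p - q‖ = |t| := by
      rw [hq]
      simp only [sub_sub_cancel]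
      rw [norm_smul, hB, mul_one, Real.norm_eq_abs]
    have h1r : 1 ≤ r⁻¹ := (one_le_inv₀ hrpos).2 hr1
    have e3 : ‖q - qh‖ = 1 - r := by
      have e : q - qh = (1 - r⁻¹) • q := by rw [hqh]; module
      rw [e, norm_smul, Real.norm_eq_abs, ← hr, abs_of_nonpos (by linarith)]
      field_simp
      ring
    have hrr : r^2 ≤ r := by nlinarith
    have ht2 : t^2 ≤ |t| := by nlinarith [sq_abs t, abs_nonneg t]
    calc ‖p - qh‖ ≤ ‖p - q‖ + ‖q - qh‖ := by rw [e1]; exact norm_add_le _ _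
    _ = |t| + (1 - r) := by rw [e2, e3]
    _ ≤ 2*δ := by nlinarith [sq_abs t]

set_option maxHeartbeats 2000000 in
lemma core_conv (α β c : ℝ) (hα0 : 0 < α) (hα1 : α ≤ 1) (hβ0 : 0 ≤ β) (hc : 0 < c)
    (m n b : ℝ → E3)
    (hm' : ∀ x, HasDerivAt m ((c * Real.exp (α * x ^ 2 / 4)) • n x) x)
    (hb' : ∀ x, HasDerivAt b (-((-(β * x / 2)) • n x)) x)
    (hmnorm : ∀ x, ‖m x‖ = 1) (hbnorm : ∀ x, ‖b x‖ = 1) :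
    ∃ B : E3, Tendsto b atTop (nhds B) ∧ ‖B‖ = 1 ∧
      ∀ x, 1 ≤ x → ‖b x - B‖ ≤ (3 * β / (c * α)) * x * Real.exp ((-α/4) * x^2) := by
  have hβc : (0:ℝ) ≤ β / (2*c) := div_nonneg hβ0 (by positivity)
  set Ex : ℝ → ℝ := fun s => Real.exp ((-α/4) * s^2) with hEx
  have hExpos : ∀ s, 0 < Ex s := fun s => Real.exp_pos _
  have hExd : ∀ s, HasDerivAt Ex (Ex s * ((-α/4)*(2*s))) s := by
    intro s
    have h1 := ((hasDerivAt_pow 2 s).const_mul (-α/4)).exp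
    convert h1 using 1
    push_cast
    ring
  have hcancel : ∀ s : ℝ, Ex s * Real.exp (α * s^2 / 4) = 1 := by
    intro s
    rw [hEx, ← Real.exp_add]
    norm_num
    ring_nf
  set h : ℝ → ℝ := fun s => (β/(2*c)) * s * Ex s with hh
  set hd : ℝ → ℝ := fun s => (β/(2*c)) * (1 - α*s^2/2) * Ex s with hhd
  have hcont_hd : Continuous hd := by fun_prop
  have hh' : ∀ s, HasDerivAt h (hd s) s := by
    intro s
    have h1 := ((hasDerivAt_id s).const_mul (β/(2*c))).mul (hExd s)
    refine h1.congr_deriv (Eq.symm ?_)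
    simp only [hhd, id]
    ring
  have hmcont : Continuous m := (Differentiable.continuous (fun s => (hm' s).differentiableAt))
  set G : ℝ → E3 := fun s => b s - h s • m s with hG
  set Gd : ℝ → E3 := fun s => -(hd s) • m s with hGd
  have hGdcont : Continuous Gd := by fun_prop
  have hG' : ∀ s, HasDerivAt G (Gd s) s := by
    intro s
    have h1 := (hb' s).sub ((hh' s).smul (hm' s))
    refine h1.congr_deriv (Eq.symm ?_)
    have hk1 : h s * (c * Real.exp (α * s^2/4)) = β * s / 2 := by
      have e1 : h s * (c * Real.exp (α * s^2/4))
          = (β * s / 2) * (Ex s * Real.exp (α * s^2/4)) := by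
        rw [hh]; field_simp
      rw [e1, hcancel, mul_one]
    rw [smul_smul, hk1]
    module
  have hGdnorm : ∀ s, ‖Gd s‖ = |hd s| := by
    intro s
    rw [hGd]
    simp only [norm_smul, norm_neg, hmnorm, mul_one]
    rfl
  -- the decreasing majorant
  set F0 : ℝ → ℝ := fun s => (β/(2*c)) * (s + (4/α) * s⁻¹) * Ex s with hF0
  set F0d : ℝ → ℝ := fun s => -((β/(2*c)) * (1 + α*s^2/2 + (4/α) * (s^2)⁻¹) * Ex s) with hF0d
  have hF0' : ∀ s : ℝ, s ≠ 0 → HasDerivAt F0 (F0d s) s := by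
    intro s hs
    have hi := hasDerivAt_inv hs
    have h1 := (((hasDerivAt_id s).add (hi.const_mul (4/α))).const_mul (β/(2*c))).mul (hExd s)
    have e : F0 = fun s => (β/(2*c)) * (s + (4/α) * s⁻¹) * Ex s := hF0
    refine h1.congr_deriv (Eq.symm ?_)
    rw [hF0d]
    simp only [Pi.add_apply, id]
    field_simp
    ring
  have hF0d_nonneg : ∀ s : ℝ, 0 ≤ -F0d s := by
    intro s
    rw [hF0d, neg_neg]
    have h1 : (0:ℝ) ≤ 1 + α*s^2/2 + (4/α) * (s^2)⁻¹ := by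
      have := mul_nonneg hα0.le (sq_nonneg s)
      have h2 : (0:ℝ) ≤ (4/α) * (s^2)⁻¹ :=
        mul_nonneg (by positivity) (inv_nonneg.2 (sq_nonneg s))
      nlinarith
    exact mul_nonneg (mul_nonneg hβc h1) (hExpos s).le
  -- limits at infinity
  have hTexp : Tendsto (fun t : ℝ => t * Real.exp (-t)) atTop (nhds 0) := by
    simpa using Real.tendsto_pow_mul_exp_neg_atTop_nhds_zero 1
  have hlin : Tendsto (fun s : ℝ => (α/4) * s) atTop atTop :=
    Tendsto.const_mul_atTop (by positivity) tendsto_id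
  have hg0 : Tendsto (fun s : ℝ => (4/α) * (((α/4)*s) * Real.exp (-((α/4)*s)))) atTop (nhds 0) := by
    have := (hTexp.comp hlin).const_mul (4/α)
    simpa using this
  have hgbound : ∀ s : ℝ, 1 ≤ s →
      s * Ex s ≤ (4/α) * (((α/4)*s) * Real.exp (-((α/4)*s))) := by
    intro s hs
    have hs0 : (0:ℝ) < s := by linarith
    have e1 : (4/α) * (((α/4)*s) * Real.exp (-((α/4)*s))) = s * Real.exp (-((α/4)*s)) := by
      field_simp
    rw [e1]
    have hss : s ≤ s^2 := by nlinarith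
    have : Ex s ≤ Real.exp (-((α/4)*s)) := by
      apply Real.exp_le_exp.2
      nlinarith [mul_le_mul_of_nonneg_left hss hα0.le]
    nlinarith [hExpos s]
  have haux1 : Tendsto (fun s : ℝ => s * Ex s) atTop (nhds 0) := by
    apply squeeze_zero' (g := fun s => (4/α) * (((α/4)*s) * Real.exp (-((α/4)*s))))
      ?_ ?_ hg0
    · filter_upwards [eventually_ge_atTop (1:ℝ)] with s hs
      positivity
    · filter_upwards [eventually_ge_atTop (1:ℝ)] with s hs
      exact hgbound s hs
  have haux2 : Tendsto (fun s : ℝ => s⁻¹ * Ex s) atTop (nhds 0) := by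
    apply squeeze_zero' (g := fun s => (4/α) * (((α/4)*s) * Real.exp (-((α/4)*s))))
      ?_ ?_ hg0
    · filter_upwards [eventually_ge_atTop (1:ℝ)] with s hs
      have : (0:ℝ) < s := by linarith
      positivity
    · filter_upwards [eventually_ge_atTop (1:ℝ)] with s hs
      have hs0 : (0:ℝ) < s := by linarith
      refine le_trans ?_ (hgbound s hs)
      have h1 : s⁻¹ ≤ s := by
        calc s⁻¹ ≤ 1 := by rw [inv_le_one_iff₀]; right; exact hs
        _ ≤ s := hs
      nlinarith [hExpos s]
  have hF0tend : Tendsto F0 atTop (nhds 0) := by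
    have h1 := (haux1.const_mul (β/(2*c))).add ((haux2.const_mul ((β/(2*c))*(4/α))))
    simp only [mul_zero, add_zero] at h1
    apply h1.congr
    intro s
    rw [hF0]
    ring
  have hhtend : Tendsto h atTop (nhds 0) := by
    have h1 := haux1.const_mul (β/(2*c))
    simp only [mul_zero] at h1
    apply h1.congr
    intro s
    rw [hh]; ring
  -- integrability of -F0d and the tail formula
  have hnegF0tend : Tendsto (fun s => -F0 s) atTop (nhds 0) := by
    simpa using hF0tend.neg
  have hF0dint : ∀ x : ℝ, 1 ≤ x → IntegrableOn (fun s => -F0d s) (Ioi x) := by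
    intro x hx
    apply integrableOn_Ioi_deriv_of_nonneg' (g := fun s => -F0 s)
      (fun s hs => ((hF0' s (by rintro rfl; simp at hs; linarith)).neg))
      (fun s hs => hF0d_nonneg s) hnegF0tend
  have hF0dInteg : ∀ x : ℝ, 1 ≤ x → ∫ s in Ioi x, -F0d s = F0 x := by
    intro x hx
    have := integral_Ioi_of_hasDerivAt_of_nonneg' (g := fun s => -F0 s)
      (fun s hs => ((hF0' s (by rintro rfl; simp at hs; linarith)).neg))
      (fun s hs => hF0d_nonneg s) hnegF0tend
    simpa using this
  have hGdle : ∀ s : ℝ, 1 ≤ s → ‖Gd s‖ ≤ -F0d s := by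
    intro s hs
    rw [hGdnorm, hhd, hF0d, neg_neg]
    rw [abs_mul, abs_mul]
    have e1 : |β / (2*c)| = β / (2*c) := abs_of_nonneg hβc
    have e2 : |Ex s| = Ex s := abs_of_nonneg (hExpos s).le
    rw [e1, e2]
    have h3 : |1 - α*s^2/2| ≤ 1 + α*s^2/2 + (4/α) * (s^2)⁻¹ := by
      have h4 : (0:ℝ) ≤ (4/α) * (s^2)⁻¹ :=
        mul_nonneg (by positivity) (inv_nonneg.2 (sq_nonneg s))
      have h5 := mul_nonneg hα0.le (sq_nonneg s)
      rw [abs_le]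
      constructor <;> linarith
    have := mul_le_mul_of_nonneg_right (mul_le_mul_of_nonneg_left h3 hβc) (hExpos s).le
    linarith
  have hGdint : ∀ x : ℝ, 1 ≤ x → IntegrableOn Gd (Ioi x) := by
    intro x hx
    apply Integrable.mono' (hF0dint x hx) (hGdcont.aestronglyMeasurable.restrict)
    rw [ae_restrict_iff' measurableSet_Ioi]
    exact ae_of_all _ (fun s hs => hGdle s (by exact le_of_lt (lt_of_le_of_lt hx hs)))
  -- the limit B
  set B : E3 := G 1 + ∫ s in Ioi 1, Gd s with hB
  have hFTC : ∀ x : ℝ, 1 ≤ x → G x = G 1 + ∫ s in (1:ℝ)..x, Gd s := by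
    intro x hx
    rw [intervalIntegral.integral_eq_sub_of_hasDerivAt (fun t ht => hG' t)
      (hGdcont.intervalIntegrable 1 x)]
    abel
  have hGtend : Tendsto G atTop (nhds B) := by
    have h1 := intervalIntegral_tendsto_integral_Ioi 1 (hGdint 1 le_rfl) tendsto_id
    have h2 : Tendsto (fun x => G 1 + ∫ s in (1:ℝ)..x, Gd s) atTop (nhds B) := by
      rw [hB]
      exact (tendsto_const_nhds.add h1)
    apply h2.congr'
    filter_upwards [eventually_ge_atTop (1:ℝ)] with x hx
    exact (hFTC x hx).symm
  have hsmul0 : Tendsto (fun x => h x • m x) atTop (nhds 0) := by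
    have hnormh : Tendsto (fun x => |h x|) atTop (nhds 0) := by
      simpa using hhtend.abs
    refine squeeze_zero_norm (fun x => ?_) hnormh
    rw [norm_smul, hmnorm, mul_one]
    rfl
  have hbtend : Tendsto b atTop (nhds B) := by
    have h1 := hGtend.add hsmul0
    rw [add_zero] at h1
    apply h1.congr
    intro x
    simp only [hG]
    abel
  have hBnorm : ‖B‖ = 1 := by
    have h1 : Tendsto (fun x => ‖b x‖) atTop (nhds ‖B‖) := hbtend.norm
    have h2 : Tendsto (fun x => ‖b x‖) atTop (nhds 1) := by
      apply tendsto_const_nhds.congr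
      intro x
      exact (hbnorm x).symm
    have := tendsto_nhds_unique h2 h1
    linarith
  refine ⟨B, hbtend, hBnorm, ?_⟩
  intro x hx
  have hx0 : (0:ℝ) < x := lt_of_lt_of_le one_pos hx
  have hIoc : IntegrableOn Gd (Ioc 1 x) := (hGdint 1 le_rfl).mono_set Ioc_subset_Ioi_self
  have hsplit : (∫ s in Ioi 1, Gd s) = (∫ s in Ioc 1 x, Gd s) + ∫ s in Ioi x, Gd s := by
    rw [← setIntegral_union Ioc_disjoint_Ioi_same measurableSet_Ioi hIoc (hGdint x hx),
      Ioc_union_Ioi_eq_Ioi hx]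
  have hGB : G x - B = -∫ s in Ioi x, Gd s := by
    rw [hFTC x hx, hB, intervalIntegral.integral_of_le hx, hsplit]
    abel
  have h1 : ‖G x - B‖ ≤ F0 x := by
    rw [hGB, norm_neg]
    refine le_trans (norm_integral_le_integral_norm _) ?_
    rw [← hF0dInteg x hx]
    apply setIntegral_mono_on ((hGdint x hx).norm) (hF0dint x hx) measurableSet_Ioi
    intro s hs
    exact hGdle s (le_of_lt (lt_of_le_of_lt hx hs))
  have hhx : 0 ≤ h x :=
    mul_nonneg (mul_nonneg hβc (by linarith)) (hExpos x).le
  have h2 : ‖b x - B‖ ≤ F0 x + h x := by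
    have e1 : b x - B = (G x - B) + h x • m x := by
      simp only [hG]; abel
    rw [e1]
    refine le_trans (norm_add_le _ _) ?_
    have e2 : ‖h x • m x‖ = h x := by
      rw [norm_smul, hmnorm, mul_one, Real.norm_eq_abs, abs_of_nonneg hhx]
    rw [e2]
    exact add_le_add h1 le_rfl
  have hxi : x⁻¹ ≤ x := by
    calc x⁻¹ ≤ 1 := by rw [inv_le_one_iff₀]; right; exact hx
    _ ≤ x := hx
  have hscal : (β/(2*c)) * ((x + (4/α) * x⁻¹) + x) ≤ 3*β/(c*α) * x := by
    have h6 : (x + (4/α) * x⁻¹) + x ≤ (6/α) * x := by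
      have e2 : 2*x ≤ (2/α)*x := by
        have h7 : (2:ℝ) ≤ 2/α := by rw [le_div_iff₀ hα0]; nlinarith
        nlinarith
      have e3 : (4/α)*x⁻¹ ≤ (4/α)*x := mul_le_mul_of_nonneg_left hxi (by positivity)
      have e4 : (6/α)*x = (2/α)*x + (4/α)*x := by field_simp; ring
      linarith
    calc (β/(2*c)) * ((x + (4/α) * x⁻¹) + x) ≤ (β/(2*c)) * ((6/α)*x) :=
      mul_le_mul_of_nonneg_left h6 hβc
    _ = 3*β/(c*α) * x := by field_simp; ring
  calc ‖b x - B‖ ≤ F0 x + h x := h2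
  _ = ((β/(2*c)) * ((x + (4/α) * x⁻¹) + x)) * Ex x := by rw [hF0, hh]; ring
  _ ≤ (3*β/(c*α) * x) * Ex x := mul_le_mul_of_nonneg_right hscal (hExpos x).le
  _ = 3 * β / (c * α) * x * Real.exp ((-α/4) * x^2) := by rw [hEx]


set_option maxHeartbeats 1000000 in
lemma sym_reflect (α β c : ℝ) (hc : 0 < c) (m n b : ℝ → E3)
    (k τ : ℝ → ℝ)
    (hkdef : k = fun x => c * Real.exp (α * x ^ 2 / 4))
    (hτdef : τ = fun x => -(β * x / 2))
    (hm' : ∀ x, HasDerivAt m (k x • n x) x)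
    (hn' : ∀ x, HasDerivAt n (-(k x • m x) + τ x • b x) x)
    (hb' : ∀ x, HasDerivAt b (-(τ x • n x)) x)
    (hm0 : m 0 = EuclideanSpace.single (0 : Fin 3) (1 : ℝ))
    (hn0 : n 0 = EuclideanSpace.single (1 : Fin 3) (1 : ℝ))
    (hb0 : b 0 = EuclideanSpace.single (2 : Fin 3) (1 : ℝ)) :
    ∀ x : ℝ, m (-x) = -(R3 (m x)) ∧ n (-x) = R3 (n x) ∧ b (-x) = R3 (b x) := by
  have hkeven : ∀ x, k (-x) = k x := by intro x; simp [hkdef]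
  have hτodd : ∀ x, τ (-x) = -τ x := by intro x; simp [hτdef]; ring
  have hkc : Continuous k := by rw [hkdef]; fun_prop
  have hτc : Continuous τ := by rw [hτdef]; fun_prop
  have hnegD : ∀ x : ℝ, HasDerivAt (fun y : ℝ => -y) (-1 : ℝ) x := fun x => by
    exact (hasDerivAt_id x).neg
  set w : ℝ → E3 × (E3 × E3) := fun x =>
    (m x + R3 (m (-x)), (n x - R3 (n (-x)), b x - R3 (b (-x)))) with hw
  set w' : ℝ → E3 × (E3 × E3) := fun x =>
    (k x • (n x - R3 (n (-x))),
     (-(k x • (m x + R3 (m (-x)))) + τ x • (b x - R3 (b (-x))),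
      -(τ x • (n x - R3 (n (-x)))))) with hw'
  have hmneg : ∀ x, HasDerivAt (fun y => R3 (m (-y))) (-(k x • R3 (n (-x)))) x := by
    intro x
    have h1 : HasDerivAt (fun y => m (-y)) ((-1 : ℝ) • (k (-x) • n (-x))) x :=
      HasDerivAt.scomp x (hm' (-x)) (hnegD x)
    have h2 := R3_hasDerivAt h1
    rw [R3_smul, R3_smul, hkeven] at h2
    convert h2 using 1
    module
  have hnneg : ∀ x, HasDerivAt (fun y => R3 (n (-y)))
      (k x • R3 (m (-x)) + τ x • R3 (b (-x))) x := by
    intro x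
    have h1 : HasDerivAt (fun y => n (-y))
        ((-1 : ℝ) • (-(k (-x) • m (-x)) + τ (-x) • b (-x))) x :=
      HasDerivAt.scomp x (hn' (-x)) (hnegD x)
    have h2 := R3_hasDerivAt h1
    rw [R3_smul, R3_add, R3_neg, R3_smul, R3_smul, hkeven, hτodd] at h2
    convert h2 using 1
    module
  have hbneg : ∀ x, HasDerivAt (fun y => R3 (b (-y))) (-(τ x • R3 (n (-x)))) x := by
    intro x
    have h1 : HasDerivAt (fun y => b (-y)) ((-1 : ℝ) • -(τ (-x) • n (-x))) x :=
      HasDerivAt.scomp x (hb' (-x)) (hnegD x)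
    have h2 := R3_hasDerivAt h1
    rw [R3_smul, R3_neg, R3_smul, hτodd] at h2
    convert h2 using 1
    module
  have hder : ∀ x, HasDerivAt w (w' x) x := by
    intro x
    refine HasDerivAt.prodMk ?_ (HasDerivAt.prodMk ?_ ?_)
    · have := (hm' x).add (hmneg x)
      refine this.congr_deriv (Eq.symm ?_)
      simp only [smul_sub]
      module
    · have := (hn' x).sub (hnneg x)
      refine this.congr_deriv (Eq.symm ?_)
      simp only [smul_sub, smul_add]
      module
    · have := (hb' x).sub (hbneg x)
      refine this.congr_deriv (Eq.symm ?_)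
      simp only [smul_sub]
      module
  have hbd : ∀ x, ‖w' x‖ ≤ (|k x| + |τ x|) * ‖w x‖ := by
    intro x
    have hw1 : ‖m x + R3 (m (-x))‖ ≤ ‖w x‖ := by
      simpa [hw] using norm_fst_le (w x)
    have hw2 : ‖n x - R3 (n (-x))‖ ≤ ‖w x‖ :=
      le_trans (by simpa [hw] using norm_fst_le (w x).2) (norm_snd_le (w x))
    have hw3 : ‖b x - R3 (b (-x))‖ ≤ ‖w x‖ :=
      le_trans (by simpa [hw] using norm_snd_le (w x).2) (norm_snd_le (w x))
    have hk0 := abs_nonneg (k x); have hτ0 := abs_nonneg (τ x)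
    have hn0' := norm_nonneg (w x)
    rw [hw', Prod.norm_def, Prod.norm_def]
    simp only
    refine max_le ?_ (max_le ?_ ?_)
    · rw [norm_smul]
      have : ‖k x‖ = |k x| := rfl
      nlinarith [hw2]
    · refine le_trans (norm_add_le _ _) ?_
      rw [norm_neg, norm_smul, norm_smul]
      have h1 : ‖k x‖ = |k x| := rfl
      have h2 : ‖τ x‖ = |τ x| := rfl
      nlinarith [hw1, hw3]
    · rw [norm_neg, norm_smul]
      have : ‖τ x‖ = |τ x| := rfl
      nlinarith [hw2]
  have h00 : w 0 = 0 := by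
    simp only [hw, neg_zero, hm0, hn0, hb0, R3_single0, R3_single1, R3_single2]
    simp
  have hz := gronwall_zero w w' _ (by fun_prop) hder hbd h00
  intro x
  have h1 := congrArg Prod.fst (hz (-x))
  have h2 := congrArg (fun p : E3 × (E3 × E3) => p.2.1) (hz (-x))
  have h3 := congrArg (fun p : E3 × (E3 × E3) => p.2.2) (hz (-x))
  simp only [hw, neg_neg, Prod.fst_zero, Prod.snd_zero] at h1 h2 h3
  refine ⟨?_, ?_, ?_⟩
  · linear_combination (norm := module) h1
  · linear_combination (norm := module) h2
  · linear_combination (norm := module) h3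

end Aux

set_option maxHeartbeats 1000000 in
theorem stmt10 (α β c : ℝ) (hα : α ∈ Set.Ioc (0 : ℝ) 1) (hβ : β = Real.sqrt (1 - α ^ 2))
    (hc : 0 < c) (m n b : ℝ → E3)
    (hmdiff : Differentiable ℝ m) (hndiff : Differentiable ℝ n) (hbdiff : Differentiable ℝ b)
    (hm : ∀ x : ℝ, deriv m x = (c * Real.exp (α * x ^ 2 / 4)) • n x)
    (hn : ∀ x : ℝ, deriv n x
      = -((c * Real.exp (α * x ^ 2 / 4)) • m x) + (-(β * x / 2)) • b x)
    (hb : ∀ x : ℝ, deriv b x = -((-(β * x / 2)) • n x))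
    (hm0 : m 0 = EuclideanSpace.single (0 : Fin 3) (1 : ℝ))
    (hn0 : n 0 = EuclideanSpace.single (1 : Fin 3) (1 : ℝ))
    (hb0 : b 0 = EuclideanSpace.single (2 : Fin 3) (1 : ℝ)) :
    ∃ B : E3, Tendsto b atTop (nhds B) ∧ ‖B‖ = 1 ∧
      (∀ x : ℝ, 1 ≤ x →
        Metric.infDist (m x) {p : E3 | ‖p‖ = 1 ∧ ⟪p, B⟫ = 0}
          ≤ (30 * Real.sqrt 2 * β / (c * α ^ 2)) * x * Real.exp (-α * x ^ 2 / 4)) ∧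
      (∀ x : ℝ, x ≤ -1 →
        Metric.infDist (m x)
            {p : E3 | ‖p‖ = 1 ∧
              ⟪p, ((WithLp.equiv 2 (Fin 3 → ℝ)).symm ![-B 0, B 1, B 2] : E3)⟫ = 0}
          ≤ (30 * Real.sqrt 2 * β / (c * α ^ 2)) * |x| * Real.exp (-α * x ^ 2 / 4)) := by
  obtain ⟨hα0, hα1⟩ := hα
  have hβ0 : 0 ≤ β := hβ ▸ Real.sqrt_nonneg _
  set k : ℝ → ℝ := fun x => c * Real.exp (α * x ^ 2 / 4) with hkdef
  set τ : ℝ → ℝ := fun x => -(β * x / 2) with hτdef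
  have hkc : Continuous k := by rw [hkdef]; fun_prop
  have hτc : Continuous τ := by rw [hτdef]; fun_prop
  have hm' : ∀ x, HasDerivAt m (k x • n x) x := fun x => by
    have := (hmdiff x).hasDerivAt; rwa [hm x] at this
  have hn' : ∀ x, HasDerivAt n (-(k x • m x) + τ x • b x) x := fun x => by
    have := (hndiff x).hasDerivAt; rwa [hn x] at this
  have hb' : ∀ x, HasDerivAt b (-(τ x • n x)) x := fun x => by
    have := (hbdiff x).hasDerivAt; rwa [hb x] at this
  -- orthonormality of the frame
  have key := six_zero k τ hkc hτc
    (fun x => ⟪m x, m x⟫ - 1) (fun x => ⟪n x, n x⟫ - 1) (fun x => ⟪b x, b x⟫ - 1)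
    (fun x => ⟪m x, n x⟫) (fun x => ⟪m x, b x⟫) (fun x => ⟪n x, b x⟫)
    (fun x => by
      have h := ((hm' x).inner ℝ (hm' x)).sub_const 1
      refine h.congr_deriv (Eq.symm ?_)
      simp only [real_inner_smul_left, real_inner_smul_right]
      rw [real_inner_comm (n x) (m x)]
      ring)
    (fun x => by
      have h := ((hn' x).inner ℝ (hn' x)).sub_const 1
      refine h.congr_deriv (Eq.symm ?_)
      simp only [inner_add_left, inner_add_right, inner_neg_left, inner_neg_right,
        real_inner_smul_left, real_inner_smul_right]
      rw [real_inner_comm (n x) (m x), real_inner_comm (b x) (n x)]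
      ring)
    (fun x => by
      have h := ((hb' x).inner ℝ (hb' x)).sub_const 1
      refine h.congr_deriv (Eq.symm ?_)
      simp only [inner_neg_left, inner_neg_right, real_inner_smul_left, real_inner_smul_right]
      rw [real_inner_comm (b x) (n x)]
      ring)
    (fun x => by
      have h := (hm' x).inner ℝ (hn' x)
      refine h.congr_deriv (Eq.symm ?_)
      simp only [inner_add_left, inner_add_right, inner_neg_left, inner_neg_right,
        real_inner_smul_left, real_inner_smul_right]
      ring)
    (fun x => by
      have h := (hm' x).inner ℝ (hb' x)
      refine h.congr_deriv (Eq.symm ?_)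
      simp only [inner_neg_left, inner_neg_right, real_inner_smul_left, real_inner_smul_right]
      ring)
    (fun x => by
      have h := (hn' x).inner ℝ (hb' x)
      refine h.congr_deriv (Eq.symm ?_)
      simp only [inner_add_left, inner_add_right, inner_neg_left, inner_neg_right,
        real_inner_smul_left, real_inner_smul_right]
      ring)
    (by simp [hm0, EuclideanSpace.inner_single_left, EuclideanSpace.single_apply])
    (by simp [hn0, EuclideanSpace.inner_single_left, EuclideanSpace.single_apply])
    (by simp [hb0, EuclideanSpace.inner_single_left, EuclideanSpace.single_apply])
    (by simp [hm0, hn0, EuclideanSpace.inner_single_left, EuclideanSpace.single_apply])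
    (by simp [hm0, hb0, EuclideanSpace.inner_single_left, EuclideanSpace.single_apply])
    (by simp [hn0, hb0, EuclideanSpace.inner_single_left, EuclideanSpace.single_apply])
  have hnorm1 : ∀ u : E3, ⟪u, u⟫ = (1:ℝ) → ‖u‖ = 1 := by
    intro u hu
    have h2 : ‖u‖^2 = 1 := by rw [← real_inner_self_eq_norm_sq, hu]
    have h3 : (‖u‖ - 1) * (‖u‖ + 1) = 0 := by nlinarith
    rcases mul_eq_zero.1 h3 with h | h
    · linarith
    · nlinarith [norm_nonneg u]
  have hmnorm : ∀ x, ‖m x‖ = 1 := by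
    intro x
    have h1 := (key x).1
    exact hnorm1 _ (by linarith)
  have hbnorm : ∀ x, ‖b x‖ = 1 := by
    intro x
    have h1 := (key x).2.2.1
    exact hnorm1 _ (by linarith)
  have hmb : ∀ x, ⟪m x, b x⟫ = 0 := by
    intro x
    have h1 := (key x).2.2.2.2.1
    simpa using h1
  -- reflection symmetry
  have hsym := sym_reflect α β c hc m n b k τ hkdef hτdef hm' hn' hb' hm0 hn0 hb0
  -- convergence of the binormal
  obtain ⟨B, hbtend, hBnorm, hbnd⟩ :=
    core_conv α β c hα0 hα1 hβ0 hc m n b hm' hb' hmnorm hbnorm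
  -- coefficient comparison
  have hs2 : 1 ≤ Real.sqrt 2 := by
    nlinarith [Real.sq_sqrt (show (0:ℝ) ≤ 2 by norm_num), Real.sqrt_nonneg 2]
  have hcoef : ∀ z : ℝ, 1 ≤ z → 2 * (3 * β / (c * α) * z * Real.exp ((-α/4) * z^2))
      ≤ 30 * Real.sqrt 2 * β / (c * α ^ 2) * z * Real.exp (-α * z ^ 2 / 4) := by
    intro z hz
    have hE : Real.exp ((-α/4) * z^2) = Real.exp (-α * z^2/4) := by congr 1; ring
    rw [hE]
    have hzE : 0 ≤ z * Real.exp (-α*z^2/4) := mul_nonneg (by linarith) (Real.exp_pos _).le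
    have hco : 2 * (3 * β / (c * α)) ≤ 30 * Real.sqrt 2 * β / (c * α^2) := by
      rw [show 2 * (3 * β / (c * α)) = 6 * β / (c * α) by ring,
        div_le_div_iff₀ (by positivity) (by positivity)]
      have hP : 0 ≤ β * c * α := mul_nonneg (mul_nonneg hβ0 hc.le) hα0.le
      have hQ : 0 ≤ β * c * (α - α^2) :=
        mul_nonneg (mul_nonneg hβ0 hc.le) (by nlinarith)
      have hR : 0 ≤ β * c * α * (Real.sqrt 2 - 1) := mul_nonneg hP (by linarith)
      nlinarith [hP, hQ, hR]
    calc 2 * (3 * β / (c * α) * z * Real.exp (-α * z^2/4))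
        = (2 * (3 * β / (c * α))) * (z * Real.exp (-α * z^2/4)) := by ring
    _ ≤ (30 * Real.sqrt 2 * β / (c * α^2)) * (z * Real.exp (-α * z^2/4)) :=
        mul_le_mul_of_nonneg_right hco hzE
    _ = 30 * Real.sqrt 2 * β / (c * α ^ 2) * z * Real.exp (-α * z ^ 2 / 4) := by ring
  have hinner : ∀ z : ℝ, |⟪m z, B⟫| ≤ ‖b z - B‖ := by
    intro z
    have e : ⟪m z, B⟫ = ⟪m z, B - b z⟫ := by
      rw [inner_sub_right, hmb z]; ring
    rw [e]
    calc |⟪m z, B - b z⟫| ≤ ‖m z‖ * ‖B - b z‖ := abs_real_inner_le_norm _ _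
    _ = ‖b z - B‖ := by rw [hmnorm, one_mul, norm_sub_rev]
  refine ⟨B, hbtend, hBnorm, ?_, ?_⟩
  · intro x hx
    have h1 := infDist_circle (m x) B (hmnorm x) hBnorm _ (hinner x)
    have h2 := hbnd x hx
    refine le_trans h1 ?_
    calc 2 * ‖b x - B‖ ≤ 2 * (3 * β / (c * α) * x * Real.exp ((-α/4) * x^2)) := by linarith
    _ ≤ 30 * Real.sqrt 2 * β / (c * α ^ 2) * x * Real.exp (-α * x ^ 2 / 4) := hcoef x hx
  · intro x hx
    set y : ℝ := -x with hy
    have hy1 : (1:ℝ) ≤ y := by rw [hy]; linarith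
    have hmxy : m x = -(R3 (m y)) := by
      have h1 := (hsym y).1
      rw [hy, neg_neg] at h1
      exact h1
    have hB' : ((WithLp.equiv 2 (Fin 3 → ℝ)).symm ![-B 0, B 1, B 2] : E3) = R3 B := by
      ext i
      fin_cases i <;>
        simp [R3, EuclideanSpace.single_apply] <;> ring
    have hnormB' : ‖((WithLp.equiv 2 (Fin 3 → ℝ)).symm ![-B 0, B 1, B 2] : E3)‖ = 1 := by
      rw [hB', R3_norm]; exact hBnorm
    have hδ : |⟪m x, ((WithLp.equiv 2 (Fin 3 → ℝ)).symm ![-B 0, B 1, B 2] : E3)⟫|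
        ≤ ‖b y - B‖ := by
      rw [hB', hmxy, inner_neg_left, abs_neg, R3_inner]
      exact hinner y
    have h1 := infDist_circle (m x) _ (hmnorm x) hnormB' _ hδ
    have h2 := hbnd y hy1
    refine le_trans h1 ?_
    have hyx : y = |x| := by rw [hy, abs_of_nonpos (by linarith)]
    have hE2 : Real.exp (-α * y ^ 2 / 4) = Real.exp (-α * x ^ 2 / 4) := by
      rw [hy]; congr 1; ring
    calc 2 * ‖b y - B‖ ≤ 2 * (3 * β / (c * α) * y * Real.exp ((-α/4) * y^2)) := by linarith
    _ ≤ 30 * Real.sqrt 2 * β / (c * α ^ 2) * y * Real.exp (-α * y ^ 2 / 4) := hcoef y hy1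
    _ = 30 * Real.sqrt 2 * β / (c * α ^ 2) * |x| * Real.exp (-α * x ^ 2 / 4) := by
        rw [← hyx, hE2]
end
end

section
/- Fix α ∈ (0,1], β = √(1−α²) and c > 0. Let (m, n, b) solve the Serret–Frenet system m' = k n, n' = −k m + τ b, b' = −τ n with k(x) = c·e^{α x²/4}, τ(x) = −βx/2, and initial conditions m(0) = (1,0,0), n(0) = (0,1,0), b(0) = (0,0,1), and let B₁ = B_{1,c,α} denote the first component of the limit lim_{x→∞} b(x). Then for all c > 0 and α ∈ (0,1], B₁² ≤ π β²/(c² α); equivalently |B_{1,c,α}| ≤ β√π/(c√α). -/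
noncomputable section

open Real MeasureTheory Filter

open scoped RealInnerProductSpace

set_option maxHeartbeats 1000000 in
lemma gram_le {m n b : ℝ → E3} {k t : ℝ → ℝ} {T L : ℝ} (hT : 0 ≤ T) (hL : 0 ≤ L)
    (hm' : ∀ x, HasDerivAt m (k x • n x) x)
    (hn' : ∀ x, HasDerivAt n (-(k x • m x) + (-(t x)) • b x) x)
    (hb' : ∀ x, HasDerivAt b (t x • n x) x)
    (hkL : ∀ x ∈ Set.Icc (0:ℝ) T, |k x| ≤ L)
    (htL : ∀ x ∈ Set.Icc (0:ℝ) T, |t x| ≤ L)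
    (hm0 : ⟪m 0, m 0⟫ = 1) (hn0 : ⟪n 0, n 0⟫ = 1) (hb0 : ⟪b 0, b 0⟫ = 1)
    (hmn0 : ⟪m 0, n 0⟫ = 0) (hmb0 : ⟪m 0, b 0⟫ = 0) (hnb0 : ⟪n 0, b 0⟫ = 0) :
    ∀ x ∈ Set.Icc (0:ℝ) T, ⟪m x, m x⟫ ≤ 1 := by
  set P : ℝ → ℝ := fun x => ⟪m x, m x⟫ - 1 with hP
  set Q : ℝ → ℝ := fun x => ⟪n x, n x⟫ - 1 with hQ
  set R : ℝ → ℝ := fun x => ⟪b x, b x⟫ - 1 with hR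
  set U : ℝ → ℝ := fun x => ⟪m x, n x⟫ with hU
  set V : ℝ → ℝ := fun x => ⟪m x, b x⟫ with hV
  set W : ℝ → ℝ := fun x => ⟪n x, b x⟫ with hW
  have hP' : ∀ x, HasDerivAt P (2 * (k x * U x)) x := by
    intro x
    have h := ((hm' x).inner ℝ (hm' x)).sub_const 1
    refine h.congr_deriv ?_
    simp only [real_inner_smul_left, real_inner_smul_right, real_inner_comm, hU]
    ring
  have hQ' : ∀ x, HasDerivAt Q (-(2 * (k x * U x)) - 2 * (t x * W x)) x := by
    intro x
    have h := ((hn' x).inner ℝ (hn' x)).sub_const 1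
    refine h.congr_deriv ?_
    simp only [inner_add_left, inner_add_right, real_inner_smul_left, real_inner_smul_right,
      inner_neg_left, inner_neg_right, real_inner_comm, hU, hW]
    ring
  have hR' : ∀ x, HasDerivAt R (2 * (t x * W x)) x := by
    intro x
    have h := ((hb' x).inner ℝ (hb' x)).sub_const 1
    refine h.congr_deriv ?_
    simp only [real_inner_smul_left, real_inner_smul_right, real_inner_comm, hW]
    ring
  have hU' : ∀ x, HasDerivAt U (k x * (Q x - P x) - t x * V x) x := by
    intro x
    have h := (hm' x).inner ℝ (hn' x)
    refine h.congr_deriv ?_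
    simp only [inner_add_left, inner_add_right, real_inner_smul_left, real_inner_smul_right,
      inner_neg_left, inner_neg_right, real_inner_comm, hP, hQ, hV]
    ring
  have hV' : ∀ x, HasDerivAt V (k x * W x + t x * U x) x := by
    intro x
    have h := (hm' x).inner ℝ (hb' x)
    refine h.congr_deriv ?_
    simp only [real_inner_smul_left, real_inner_smul_right, real_inner_comm, hU, hW]
    ring
  have hW' : ∀ x, HasDerivAt W (-(k x * V x) + t x * (Q x - R x)) x := by
    intro x
    have h := (hn' x).inner ℝ (hb' x)
    refine h.congr_deriv ?_
    simp only [inner_add_left, inner_add_right, real_inner_smul_left, real_inner_smul_right,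
      inner_neg_left, inner_neg_right, real_inner_comm, hQ, hR, hV]
    ring
  set φ : ℝ → ℝ := fun x => P x ^ 2 + Q x ^ 2 + R x ^ 2 + U x ^ 2 + V x ^ 2 + W x ^ 2 with hφ
  set D : ℝ → ℝ := fun x =>
    2 * P x ^ 1 * (2 * (k x * U x)) + 2 * Q x ^ 1 * (-(2 * (k x * U x)) - 2 * (t x * W x))
      + 2 * R x ^ 1 * (2 * (t x * W x)) + 2 * U x ^ 1 * (k x * (Q x - P x) - t x * V x)
      + 2 * V x ^ 1 * (k x * W x + t x * U x)
      + 2 * W x ^ 1 * (-(k x * V x) + t x * (Q x - R x)) with hD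
  have hφ' : ∀ x, HasDerivAt φ (D x) x := by
    intro x
    exact ((((((hP' x).pow 2).add ((hQ' x).pow 2)).add ((hR' x).pow 2)).add
      ((hU' x).pow 2)).add ((hV' x).pow 2)).add ((hW' x).pow 2)
  have hφ0 : φ 0 = 0 := by
    simp only [hφ, hP, hQ, hR, hU, hV, hW, hm0, hn0, hb0, hmn0, hmb0, hnb0]
    norm_num
  have hφnonneg : ∀ x, 0 ≤ φ x := by intro x; positivity
  have hbound : ∀ x ∈ Set.Ico (0:ℝ) T, ‖D x‖ ≤ (4 * L) * ‖φ x‖ + 0 := by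
    intro x hx
    have hxm : x ∈ Set.Icc (0:ℝ) T := ⟨hx.1, hx.2.le⟩
    have hk := hkL x hxm
    have ht := htL x hxm
    rw [Real.norm_eq_abs, Real.norm_eq_abs, abs_of_nonneg (hφnonneg x), add_zero]
    have hDeq : D x = k x * (2 * U x * (P x - Q x)) + t x * (2 * W x * (R x - Q x)) := by
      simp only [hD]; ring
    have h1 : |k x * (2 * U x * (P x - Q x))| ≤ L * (U x ^ 2 + (P x - Q x) ^ 2) := by
      rw [abs_mul]
      have h2 : |2 * U x * (P x - Q x)| ≤ U x ^ 2 + (P x - Q x) ^ 2 := by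
        rw [abs_le]
        constructor <;> nlinarith [sq_nonneg (U x + (P x - Q x)), sq_nonneg (U x - (P x - Q x))]
      calc |k x| * |2 * U x * (P x - Q x)| ≤ L * |2 * U x * (P x - Q x)| :=
            mul_le_mul_of_nonneg_right hk (abs_nonneg _)
        _ ≤ L * (U x ^ 2 + (P x - Q x) ^ 2) := mul_le_mul_of_nonneg_left h2 hL
    have h3 : |t x * (2 * W x * (R x - Q x))| ≤ L * (W x ^ 2 + (R x - Q x) ^ 2) := by
      rw [abs_mul]
      have h4 : |2 * W x * (R x - Q x)| ≤ W x ^ 2 + (R x - Q x) ^ 2 := by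
        rw [abs_le]
        constructor <;> nlinarith [sq_nonneg (W x + (R x - Q x)), sq_nonneg (W x - (R x - Q x))]
      calc |t x| * |2 * W x * (R x - Q x)| ≤ L * |2 * W x * (R x - Q x)| :=
            mul_le_mul_of_nonneg_right ht (abs_nonneg _)
        _ ≤ L * (W x ^ 2 + (R x - Q x) ^ 2) := mul_le_mul_of_nonneg_left h4 hL
    calc |D x| ≤ |k x * (2 * U x * (P x - Q x))| + |t x * (2 * W x * (R x - Q x))| := by
          rw [hDeq]; exact abs_add_le _ _
      _ ≤ L * (U x ^ 2 + (P x - Q x) ^ 2) + L * (W x ^ 2 + (R x - Q x) ^ 2) := by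
          exact add_le_add h1 h3
      _ ≤ (4 * L) * φ x := by
          have expand : (4 * L) * φ x
              - (L * (U x ^ 2 + (P x - Q x) ^ 2) + L * (W x ^ 2 + (R x - Q x) ^ 2))
              = L * ((P x + Q x) ^ 2 + (R x + Q x) ^ 2 + 2 * P x ^ 2 + 3 * U x ^ 2
                + 4 * V x ^ 2 + 3 * W x ^ 2 + 2 * R x ^ 2) := by
            simp only [hφ]; ring
          have hpos : 0 ≤ L * ((P x + Q x) ^ 2 + (R x + Q x) ^ 2 + 2 * P x ^ 2 + 3 * U x ^ 2
                + 4 * V x ^ 2 + 3 * W x ^ 2 + 2 * R x ^ 2) := by positivity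
          linarith
  have hcont : ContinuousOn φ (Set.Icc 0 T) :=
    fun x _ => ((hφ' x).continuousAt).continuousWithinAt
  have key := norm_le_gronwallBound_of_norm_deriv_right_le (δ := 0) (K := 4 * L) (ε := 0)
    hcont (fun x _ => (hφ' x).hasDerivWithinAt) (by rw [hφ0]; simp) hbound
  intro x hx
  have := key x hx
  rw [gronwallBound_ε0_δ0, Real.norm_eq_abs, abs_of_nonneg (hφnonneg x)] at this
  have h0 : φ x = 0 := le_antisymm this (hφnonneg x)
  simp only [hφ] at h0
  have hPx2 : P x ^ 2 ≤ 0 := by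
    nlinarith [sq_nonneg (Q x), sq_nonneg (R x), sq_nonneg (U x), sq_nonneg (V x),
      sq_nonneg (W x)]
  have hPx : ⟪m x, m x⟫ - 1 = 0 := by
    have : P x = 0 :=
      pow_eq_zero_iff (n := 2) (by norm_num) |>.mp (le_antisymm hPx2 (sq_nonneg _))
    simpa [hP] using this
  linarith

set_option maxHeartbeats 1000000 in
theorem stmt12 (α β c : ℝ) (hα : α ∈ Set.Ioc (0 : ℝ) 1) (hβ : β = Real.sqrt (1 - α ^ 2))
    (hc : 0 < c) (m n b : ℝ → E3)
    (hmdiff : Differentiable ℝ m) (hndiff : Differentiable ℝ n) (hbdiff : Differentiable ℝ b)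
    (hm : ∀ x : ℝ, deriv m x = (c * Real.exp (α * x ^ 2 / 4)) • n x)
    (hn : ∀ x : ℝ, deriv n x
      = -((c * Real.exp (α * x ^ 2 / 4)) • m x) + (-(β * x / 2)) • b x)
    (hb : ∀ x : ℝ, deriv b x = -((-(β * x / 2)) • n x))
    (hm0 : m 0 = EuclideanSpace.single (0 : Fin 3) (1 : ℝ))
    (hn0 : n 0 = EuclideanSpace.single (1 : Fin 3) (1 : ℝ))
    (hb0 : b 0 = EuclideanSpace.single (2 : Fin 3) (1 : ℝ))
    (B : E3) (hB : Tendsto b atTop (nhds B)) :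
    (B 0) ^ 2 ≤ π * β ^ 2 / (c ^ 2 * α) ∧
    |B 0| ≤ β * Real.sqrt π / (c * Real.sqrt α) := by
  obtain ⟨hα0, hα1⟩ := hα
  have hβ0 : 0 ≤ β := hβ ▸ Real.sqrt_nonneg _
  have hm' : ∀ x, HasDerivAt m ((c * Real.exp (α * x ^ 2 / 4)) • n x) x := fun x => by
    have h := (hmdiff x).hasDerivAt; rwa [hm x] at h
  have hn' : ∀ x, HasDerivAt n
      (-((c * Real.exp (α * x ^ 2 / 4)) • m x) + (-(β * x / 2)) • b x) x := fun x => by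
    have h := (hndiff x).hasDerivAt; rwa [hn x] at h
  have hb' : ∀ x, HasDerivAt b ((β * x / 2) • n x) x := fun x => by
    have h := (hbdiff x).hasDerivAt; rw [hb x] at h
    simpa [neg_smul] using h
  -- the Gram bound: |m x| ≤ 1 for x ≥ 0, hence |first coordinate of m| ≤ 1
  have hminner : ∀ x : ℝ, 0 ≤ x → ⟪m x, m x⟫ ≤ 1 := by
    intro T hT
    have hck : 0 ≤ c * Real.exp (α * T ^ 2 / 4) + β * T / 2 := by positivity
    refine gram_le (k := fun x => c * Real.exp (α * x ^ 2 / 4)) (t := fun x => β * x / 2)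
      hT hck hm' hn' hb' ?_ ?_ ?_ ?_ ?_ ?_ ?_ ?_ T ⟨hT, le_refl T⟩
    · intro x hx
      have h1 : Real.exp (α * x ^ 2 / 4) ≤ Real.exp (α * T ^ 2 / 4) := by
        apply Real.exp_le_exp.2
        have : x ^ 2 ≤ T ^ 2 := by nlinarith [hx.1, hx.2]
        nlinarith
      rw [abs_of_nonneg (by positivity)]
      nlinarith [mul_nonneg hβ0 hx.1]
    · intro x hx
      rw [abs_of_nonneg (div_nonneg (mul_nonneg hβ0 hx.1) (by norm_num))]
      nlinarith [Real.exp_pos (α * T ^ 2 / 4), mul_nonneg hβ0 (sub_nonneg.2 hx.2),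
        mul_pos hc (Real.exp_pos (α * T ^ 2 / 4))]
    · simp [hm0, EuclideanSpace.inner_single_left, EuclideanSpace.single_apply]
    · simp [hn0, EuclideanSpace.inner_single_left, EuclideanSpace.single_apply]
    · simp [hb0, EuclideanSpace.inner_single_left, EuclideanSpace.single_apply]
    · simp [hm0, hn0, EuclideanSpace.inner_single_left, EuclideanSpace.single_apply]
    · simp [hm0, hb0, EuclideanSpace.inner_single_left, EuclideanSpace.single_apply]
    · simp [hn0, hb0, EuclideanSpace.inner_single_left, EuclideanSpace.single_apply]
  set e0 : E3 := EuclideanSpace.single (0 : Fin 3) (1 : ℝ) with he0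
  set m1 : ℝ → ℝ := fun x => ⟪e0, m x⟫ with hm1def
  set n1 : ℝ → ℝ := fun x => ⟪e0, n x⟫ with hn1def
  set b1 : ℝ → ℝ := fun x => ⟪e0, b x⟫ with hb1def
  have hm1le : ∀ x : ℝ, 0 ≤ x → |m1 x| ≤ 1 := by
    intro x hx
    have h1 : |m1 x| ≤ ‖e0‖ * ‖m x‖ := abs_real_inner_le_norm _ _
    have h2 : ‖e0‖ = 1 := by simp [he0, EuclideanSpace.norm_single]
    have h3 : ‖m x‖ ^ 2 ≤ 1 := by
      rw [← real_inner_self_eq_norm_sq]; exact hminner x hx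
    have h4 : ‖m x‖ ≤ 1 := by nlinarith [norm_nonneg (m x)]
    rw [h2, one_mul] at h1; linarith
  have hm1' : ∀ x, HasDerivAt m1 (c * Real.exp (α * x ^ 2 / 4) * n1 x) x := fun x => by
    have h := (hasDerivAt_const x e0).inner ℝ (hm' x)
    simp only [inner_zero_left, add_zero, real_inner_smul_right] at h
    exact h
  have hn1' : ∀ x, HasDerivAt n1
      (-(c * Real.exp (α * x ^ 2 / 4) * m1 x) - β * x / 2 * b1 x) x := fun x => by
    have h := (hasDerivAt_const x e0).inner ℝ (hn' x)
    have e : ⟪e0, -((c * Real.exp (α * x ^ 2 / 4)) • m x) + (-(β * x / 2)) • b x⟫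
        = -(c * Real.exp (α * x ^ 2 / 4) * m1 x) - β * x / 2 * b1 x := by
      simp only [inner_add_right, inner_neg_right, real_inner_smul_right, hm1def, hb1def]
      ring
    rw [← e]
    simp only [inner_zero_left, add_zero] at h
    exact h
  have hb1' : ∀ x, HasDerivAt b1 (β * x / 2 * n1 x) x := fun x => by
    have h := (hasDerivAt_const x e0).inner ℝ (hb' x)
    simp only [inner_zero_left, add_zero, real_inner_smul_right] at h
    exact h
  -- continuity facts
  have hm1c : Continuous m1 := continuous_const.inner hmdiff.continuous
  -- derivative of the Gaussian-type weight
  have hg' : ∀ x : ℝ, HasDerivAt (fun y => y * Real.exp (-(α * y ^ 2 / 4)))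
      ((1 - α * x ^ 2 / 2) * Real.exp (-(α * x ^ 2 / 4))) x := by
    intro x
    have h1 : HasDerivAt (fun y : ℝ => -(α * y ^ 2 / 4)) (-(α * (2 * x) / 4)) x := by
      have := ((hasDerivAt_pow 2 x).const_mul α).div_const 4
      exact this.neg.congr_deriv (by simp)
    have h2 := h1.exp
    have h3 := (hasDerivAt_id x).mul h2
    refine h3.congr_deriv ?_
    simp only [id_eq]
    ring
  -- H and its derivative
  set H : ℝ → ℝ := fun x => b1 x - β / (2 * c) * (x * Real.exp (-(α * x ^ 2 / 4)) * m1 x)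
    with hHdef
  have hH' : ∀ x, HasDerivAt H
      (-(β / (2 * c)) * ((1 - α * x ^ 2 / 2) * Real.exp (-(α * x ^ 2 / 4)) * m1 x)) x := by
    intro x
    have hmul := ((hg' x).mul (hm1' x)).const_mul (β / (2 * c))
    have h := (hb1' x).sub hmul
    refine h.congr_deriv ?_
    have hexp : Real.exp (-(α * x ^ 2 / 4)) * Real.exp (α * x ^ 2 / 4) = 1 := by
      rw [← Real.exp_add]; simp
    have h2 : x * Real.exp (-(α * x ^ 2 / 4)) * (c * Real.exp (α * x ^ 2 / 4) * n1 x)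
        = c * (x * n1 x) := by
      linear_combination c * x * n1 x * hexp
    rw [h2]
    field_simp
    ring
  -- pointwise bound for b1 on [0, ∞)
  have hβc : 0 ≤ β / (2 * c) := by positivity
  have hcontE : Continuous fun s : ℝ => Real.exp (-(α * s ^ 2 / 4)) := by continuity
  have hcont1 : Continuous fun s : ℝ => 1 - α * s ^ 2 / 2 := by continuity
  have hcontD : Continuous fun s : ℝ =>
      -(β / (2 * c)) * ((1 - α * s ^ 2 / 2) * Real.exp (-(α * s ^ 2 / 4)) * m1 s) :=
    continuous_const.mul ((hcont1.mul hcontE).mul hm1c)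
  have hH0 : H 0 = 0 := by
    simp [hHdef, hb1def, hb0, he0, EuclideanSpace.inner_single_left,
      EuclideanSpace.single_apply]
  have hb1bound : ∀ x : ℝ, 0 ≤ x →
      |b1 x| ≤ β / c * ∫ s in (0:ℝ)..x, Real.exp (-(α * s ^ 2 / 4)) := by
    intro x hx
    have hHint : H x = ∫ s in (0:ℝ)..x,
        -(β / (2 * c)) * ((1 - α * s ^ 2 / 2) * Real.exp (-(α * s ^ 2 / 4)) * m1 s) := by
      have h := intervalIntegral.integral_eq_sub_of_hasDerivAt (f := H) (a := 0) (b := x)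
        (fun s _ => hH' s) (hcontD.intervalIntegrable 0 x)
      rw [h, hH0, sub_zero]
    have habsH : |H x| ≤ ∫ s in (0:ℝ)..x,
        β / (2 * c) * ((1 + α * s ^ 2 / 2) * Real.exp (-(α * s ^ 2 / 4))) := by
      rw [hHint]
      rw [← Real.norm_eq_abs]
      refine le_trans (intervalIntegral.norm_integral_le_abs_of_norm_le ?_
        ((continuous_const.mul ((by continuity : Continuous fun s : ℝ =>
            1 + α * s ^ 2 / 2).mul hcontE)).intervalIntegrable 0 x))
        (le_of_eq (abs_of_nonneg (intervalIntegral.integral_nonneg hx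
          (fun s _ => by
            show 0 ≤ β / (2 * c) * ((1 + α * s ^ 2 / 2) * Real.exp (-(α * s ^ 2 / 4)))
            exact mul_nonneg hβc (mul_nonneg (by nlinarith [mul_nonneg hα0.le (sq_nonneg s)])
              (Real.exp_pos _).le)))))
      have hIoc : Set.uIoc (0:ℝ) x = Set.Ioc 0 x := Set.uIoc_of_le hx
      rw [ae_restrict_iff' measurableSet_uIoc]
      refine Filter.Eventually.of_forall fun t ht => ?_
      rw [hIoc] at ht
      have h2 := hm1le t ht.1.le
      have hEpos : (0:ℝ) < Real.exp (-(α * t ^ 2 / 4)) := Real.exp_pos _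
      have h1 : |1 - α * t ^ 2 / 2| ≤ 1 + α * t ^ 2 / 2 := by
        rw [abs_le]
        constructor <;> nlinarith [mul_nonneg hα0.le (sq_nonneg t)]
      rw [Real.norm_eq_abs, abs_mul, abs_neg, abs_of_nonneg hβc, abs_mul, abs_mul,
        Real.abs_exp]
      calc β / (2 * c) * (|1 - α * t ^ 2 / 2| * Real.exp (-(α * t ^ 2 / 4)) * |m1 t|)
          ≤ β / (2 * c) * ((1 + α * t ^ 2 / 2) * Real.exp (-(α * t ^ 2 / 4)) * 1) := by
            gcongr
        _ = β / (2 * c) * ((1 + α * t ^ 2 / 2) * Real.exp (-(α * t ^ 2 / 4))) := by ring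
    have hg_int : (∫ s in (0:ℝ)..x, (1 - α * s ^ 2 / 2) * Real.exp (-(α * s ^ 2 / 4)))
        = x * Real.exp (-(α * x ^ 2 / 4)) := by
      have h := intervalIntegral.integral_eq_sub_of_hasDerivAt (a := 0) (b := x)
        (fun s _ => hg' s) ((hcont1.mul hcontE).intervalIntegrable 0 x)
      simpa using h
    have hsplit : (∫ s in (0:ℝ)..x,
        β / (2 * c) * ((1 + α * s ^ 2 / 2) * Real.exp (-(α * s ^ 2 / 4))))
        = β / (2 * c) * (2 * (∫ s in (0:ℝ)..x, Real.exp (-(α * s ^ 2 / 4)))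
            - x * Real.exp (-(α * x ^ 2 / 4))) := by
      rw [intervalIntegral.integral_const_mul]
      congr 1
      have hptw : ∀ s ∈ Set.uIcc (0:ℝ) x, (fun s : ℝ =>
          (1 + α * s ^ 2 / 2) * Real.exp (-(α * s ^ 2 / 4))) s
          = (fun s : ℝ => 2 * Real.exp (-(α * s ^ 2 / 4))
            - (1 - α * s ^ 2 / 2) * Real.exp (-(α * s ^ 2 / 4))) s := fun s _ => by ring
      rw [intervalIntegral.integral_congr hptw,
        intervalIntegral.integral_sub (f := fun s => 2 * Real.exp (-(α * s ^ 2 / 4)))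
          (g := fun s => (1 - α * s ^ 2 / 2) * Real.exp (-(α * s ^ 2 / 4))) ((continuous_const.mul hcontE).intervalIntegrable 0 x)
          ((hcont1.mul hcontE).intervalIntegrable 0 x),
        intervalIntegral.integral_const_mul, hg_int]
    have hgx0 : 0 ≤ x * Real.exp (-(α * x ^ 2 / 4)) := mul_nonneg hx (Real.exp_pos _).le
    have h5 : |b1 x| ≤ |H x| + β / (2 * c) * (x * Real.exp (-(α * x ^ 2 / 4))) := by
      have hbeq : b1 x = H x + β / (2 * c) * (x * Real.exp (-(α * x ^ 2 / 4)) * m1 x) := by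
        simp only [hHdef]; ring
      rw [hbeq]
      have h6 : |β / (2 * c) * (x * Real.exp (-(α * x ^ 2 / 4)) * m1 x)|
          ≤ β / (2 * c) * (x * Real.exp (-(α * x ^ 2 / 4))) := by
        rw [abs_mul, abs_of_nonneg hβc, abs_mul, abs_of_nonneg hgx0]
        have := hm1le x hx
        nlinarith [mul_nonneg hβc hgx0]
      calc |H x + β / (2 * c) * (x * Real.exp (-(α * x ^ 2 / 4)) * m1 x)|
          ≤ |H x| + |β / (2 * c) * (x * Real.exp (-(α * x ^ 2 / 4)) * m1 x)| := abs_add_le _ _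
        _ ≤ |H x| + β / (2 * c) * (x * Real.exp (-(α * x ^ 2 / 4))) := by linarith
    rw [hsplit] at habsH
    have hfin : β / (2 * c) * (2 * (∫ s in (0:ℝ)..x, Real.exp (-(α * s ^ 2 / 4)))
        - x * Real.exp (-(α * x ^ 2 / 4)))
        + β / (2 * c) * (x * Real.exp (-(α * x ^ 2 / 4)))
        = β / c * ∫ s in (0:ℝ)..x, Real.exp (-(α * s ^ 2 / 4)) := by
      field_simp
      ring
    linarith
  -- the Gaussian integral bound
  have hIE : ∀ x : ℝ, 0 ≤ x → (∫ s in (0:ℝ)..x, Real.exp (-(α * s ^ 2 / 4)))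
      ≤ Real.sqrt (π / (α / 4)) / 2 := by
    intro x hx
    have heq : (fun s : ℝ => Real.exp (-(α * s ^ 2 / 4)))
        = fun s : ℝ => Real.exp (-(α / 4) * s ^ 2) := by
      funext s; rw [show -(α * s ^ 2 / 4) = -(α / 4) * s ^ 2 from by ring]
    rw [intervalIntegral.integral_of_le hx, heq]
    have hint : IntegrableOn (fun s : ℝ => Real.exp (-(α / 4) * s ^ 2)) (Set.Ioi 0) :=
      (integrable_exp_neg_mul_sq (by positivity)).integrableOn
    calc (∫ s in Set.Ioc (0:ℝ) x, Real.exp (-(α / 4) * s ^ 2))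
        ≤ ∫ s in Set.Ioi (0:ℝ), Real.exp (-(α / 4) * s ^ 2) := by
          apply setIntegral_mono_set hint
            (Filter.Eventually.of_forall fun s => (Real.exp_pos _).le)
            (Set.Ioc_subset_Ioi_self).eventuallyLE
      _ = Real.sqrt (π / (α / 4)) / 2 := integral_gaussian_Ioi (α / 4)
  have hM : β / c * (Real.sqrt (π / (α / 4)) / 2) = β * Real.sqrt π / (c * Real.sqrt α) := by
    rw [show π / (α / 4) = 2 ^ 2 * (π / α) from by
        field_simp; ring,
      Real.sqrt_mul (by norm_num : (0:ℝ) ≤ 2 ^ 2) (π / α),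
      Real.sqrt_sq (by norm_num : (0:ℝ) ≤ 2), Real.sqrt_div pi_pos.le]
    field_simp
  have hfinal : ∀ x : ℝ, 0 ≤ x → |b1 x| ≤ β * Real.sqrt π / (c * Real.sqrt α) := by
    intro x hx
    have h1 := hb1bound x hx
    have h2 := hIE x hx
    have h3 : β / c * (∫ s in (0:ℝ)..x, Real.exp (-(α * s ^ 2 / 4)))
        ≤ β / c * (Real.sqrt (π / (α / 4)) / 2) :=
      mul_le_mul_of_nonneg_left h2 (by positivity)
    rw [hM] at h3
    linarith
  have hb1tend : Tendsto b1 atTop (nhds (B 0)) := by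
    have h := Filter.Tendsto.inner (𝕜 := ℝ) (tendsto_const_nhds (x := e0) (f := atTop)) hB
    have he : ⟪e0, B⟫ = B 0 := by
      simp [he0, EuclideanSpace.inner_single_left]
    rwa [he] at h
  have habsB : |B 0| ≤ β * Real.sqrt π / (c * Real.sqrt α) :=
    le_of_tendsto hb1tend.abs (eventually_atTop.2 ⟨0, fun x hx => hfinal x hx⟩)
  refine ⟨?_, habsB⟩
  have hsq : (B 0) ^ 2 ≤ (β * Real.sqrt π / (c * Real.sqrt α)) ^ 2 := by
    rw [← sq_abs]
    exact pow_le_pow_left₀ (abs_nonneg _) habsB 2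
  have hsq2 : (β * Real.sqrt π / (c * Real.sqrt α)) ^ 2 = π * β ^ 2 / (c ^ 2 * α) := by
    rw [div_pow, mul_pow, mul_pow, Real.sq_sqrt pi_pos.le, Real.sq_sqrt hα0.le]
    ring
  linarith
end
end

section
/- Fix α ∈ (0,1], β = √(1−α²) and c > 0. Let m, n, b : ℝ → ℝ be differentiable functions satisfying the scalar Serret–Frenet system m'(x) = c e^{αx²/4} n(x), n'(x) = −c e^{αx²/4} m(x) − (βx/2) b(x), b'(x) = (βx/2) n(x) on ℝ, with m(0)² + n(0)² + b(0)² = 1. Then the improper integral B := b(0) − (β/(2c)) ∫₀^∞ (1 − αs²/2) e^{−αs²/4} m(s) ds is well defined, the limit lim_{x→∞} b(x) exists and equals B, for all x ∈ ℝ one has b(x) = B + (βx/(2c)) e^{−αx²/4} m(x) + (β/(2c)) ∫_x^∞ (1 − αs²/2) e^{−αs²/4} m(s) ds, and for all x ≥ 1, |b(x) − B| ≤ (6β/(cα)) x e^{−αx²/4}. -/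
noncomputable section

open Real MeasureTheory Filter

section aux
variable {α : ℝ} (hα0 : 0 < α)

lemma aux_hexp (s : ℝ) :
    HasDerivAt (fun t : ℝ => Real.exp (-α * t ^ 2 / 4))
      (Real.exp (-α * s ^ 2 / 4) * (-α * s / 2)) s := by
  have h1 : HasDerivAt (fun t : ℝ => -α * t ^ 2 / 4) (-α * s / 2) s := by
    have h := ((hasDerivAt_pow 2 s).const_mul (-α)).div_const 4
    refine h.congr_deriv ?_
    push_cast
    ring
  exact h1.exp

lemma aux_hu (s : ℝ) :
    HasDerivAt (fun t : ℝ => t * Real.exp (-α * t ^ 2 / 4))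
      ((1 - α * s ^ 2 / 2) * Real.exp (-α * s ^ 2 / 4)) s := by
  have h := (hasDerivAt_id s).mul (aux_hexp (α := α) s)
  refine h.congr_deriv ?_
  simp only [id_eq]
  ring

include hα0 in
lemma aux_I0 : Integrable (fun s : ℝ => Real.exp (-α * s ^ 2 / 4)) := by
  have h := integrable_exp_neg_mul_sq (show 0 < α / 4 by linarith)
  have e1 : ∀ s : ℝ, -(α / 4) * s ^ 2 = -α * s ^ 2 / 4 := fun s => by ring
  simpa only [e1] using h

include hα0 in
lemma aux_I1 : Integrable (fun s : ℝ => s * Real.exp (-α * s ^ 2 / 4)) := by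
  have h := integrable_rpow_mul_exp_neg_mul_sq (show 0 < α / 4 by linarith)
    (show (-1:ℝ) < 1 by norm_num)
  have e1 : ∀ s : ℝ, -(α / 4) * s ^ 2 = -α * s ^ 2 / 4 := fun s => by ring
  simpa only [Real.rpow_one, e1] using h

include hα0 in
lemma aux_I2 : Integrable (fun s : ℝ => s ^ 2 * Real.exp (-α * s ^ 2 / 4)) := by
  have h := integrable_rpow_mul_exp_neg_mul_sq (show 0 < α / 4 by linarith)
    (show (-1:ℝ) < 2 by norm_num)
  have e1 : ∀ s : ℝ, -(α / 4) * s ^ 2 = -α * s ^ 2 / 4 := fun s => by ring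
  simpa only [Real.rpow_two, e1] using h

include hα0 in
lemma aux_xe_tendsto :
    Tendsto (fun x : ℝ => x * Real.exp (-α * x ^ 2 / 4)) atTop (nhds 0) := by
  have hlower : ∀ᶠ x in atTop, 0 ≤ x * Real.exp (-α * x ^ 2 / 4) := by
    filter_upwards [eventually_ge_atTop (0:ℝ)] with x hx
    positivity
  have hupper : ∀ᶠ x in atTop, x * Real.exp (-α * x ^ 2 / 4) ≤ 4 / α * x⁻¹ := by
    filter_upwards [eventually_ge_atTop (1:ℝ)] with x hx
    have hx0 : (0:ℝ) < x := by linarith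
    have h1 : α * x ^ 2 / 4 ≤ Real.exp (α * x ^ 2 / 4) := by
      linarith [Real.add_one_le_exp (α * x ^ 2 / 4)]
    have hpos : 0 < α * x ^ 2 / 4 := by positivity
    have h2 : Real.exp (-α * x ^ 2 / 4) ≤ 4 / (α * x ^ 2) := by
      rw [show -α * x ^ 2 / 4 = -(α * x ^ 2 / 4) by ring, Real.exp_neg]
      calc (Real.exp (α * x ^ 2 / 4))⁻¹ ≤ (α * x ^ 2 / 4)⁻¹ :=
            inv_anti₀ hpos h1
        _ = 4 / (α * x ^ 2) := by field_simp
    calc x * Real.exp (-α * x ^ 2 / 4) ≤ x * (4 / (α * x ^ 2)) :=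
          mul_le_mul_of_nonneg_left h2 hx0.le
      _ = 4 / α * x⁻¹ := by field_simp
  have hg : Tendsto (fun x : ℝ => 4 / α * x⁻¹) atTop (nhds 0) := by
    simpa using tendsto_inv_atTop_zero.const_mul (4 / α)
  exact squeeze_zero' hlower hupper hg

include hα0 in
lemma aux_e_tendsto :
    Tendsto (fun x : ℝ => Real.exp (-α * x ^ 2 / 4)) atTop (nhds 0) := by
  have hlower : ∀ᶠ x : ℝ in atTop, 0 ≤ Real.exp (-α * x ^ 2 / 4) :=
    Eventually.of_forall fun x => (Real.exp_pos _).le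
  have hupper : ∀ᶠ x : ℝ in atTop,
      Real.exp (-α * x ^ 2 / 4) ≤ x * Real.exp (-α * x ^ 2 / 4) := by
    filter_upwards [eventually_ge_atTop (1:ℝ)] with x hx
    nlinarith [Real.exp_pos (-α * x ^ 2 / 4)]
  exact squeeze_zero' hlower hupper (aux_xe_tendsto hα0)

end aux

set_option maxHeartbeats 1000000 in
theorem stmt15 (α β c : ℝ) (hα : α ∈ Set.Ioc (0 : ℝ) 1) (hβ : β = Real.sqrt (1 - α ^ 2))
    (hc : 0 < c) (m n b : ℝ → ℝ)
    (hmdiff : Differentiable ℝ m) (hndiff : Differentiable ℝ n) (hbdiff : Differentiable ℝ b)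
    (hm : ∀ x : ℝ, deriv m x = c * Real.exp (α * x ^ 2 / 4) * n x)
    (hn : ∀ x : ℝ, deriv n x
      = -(c * Real.exp (α * x ^ 2 / 4)) * m x - (β * x / 2) * b x)
    (hb : ∀ x : ℝ, deriv b x = (β * x / 2) * n x)
    (h0 : m 0 ^ 2 + n 0 ^ 2 + b 0 ^ 2 = 1) :
    -- the improper integrals defining `B` are well defined
    (∀ x : ℝ, IntegrableOn
      (fun s : ℝ => (1 - α * s ^ 2 / 2) * Real.exp (-α * s ^ 2 / 4) * m s)
      (Set.Ioi x)) ∧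
    ∃ B : ℝ,
      B = b 0 - β / (2 * c) *
        ∫ s in Set.Ioi (0 : ℝ), (1 - α * s ^ 2 / 2) * Real.exp (-α * s ^ 2 / 4) * m s ∧
      Tendsto b atTop (nhds B) ∧
      (∀ x : ℝ, b x = B + (β * x / (2 * c)) * Real.exp (-α * x ^ 2 / 4) * m x
        + β / (2 * c) *
          ∫ s in Set.Ioi x, (1 - α * s ^ 2 / 2) * Real.exp (-α * s ^ 2 / 4) * m s) ∧
      (∀ x : ℝ, 1 ≤ x →
        |b x - B| ≤ 6 * β / (c * α) * x * Real.exp (-α * x ^ 2 / 4)) := by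
  obtain ⟨hα0, hα1⟩ := hα
  have hβ0 : 0 ≤ β := hβ ▸ Real.sqrt_nonneg _
  have hcne : c ≠ 0 := ne_of_gt hc
  -- conservation of the norm
  have hm1 : ∀ x : ℝ, |m x| ≤ 1 := by
    have key : ∀ x, HasDerivAt (fun y => m y ^ 2 + n y ^ 2 + b y ^ 2) 0 x := by
      intro x
      have h1 : HasDerivAt (fun y => m y ^ 2) (2 * m x * deriv m x) x := by
        have h := ((hmdiff x).hasDerivAt).pow 2
        refine h.congr_deriv ?_; push_cast; ring
      have h2 : HasDerivAt (fun y => n y ^ 2) (2 * n x * deriv n x) x := by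
        have h := ((hndiff x).hasDerivAt).pow 2
        refine h.congr_deriv ?_; push_cast; ring
      have h3 : HasDerivAt (fun y => b y ^ 2) (2 * b x * deriv b x) x := by
        have h := ((hbdiff x).hasDerivAt).pow 2
        refine h.congr_deriv ?_; push_cast; ring
      have h := (h1.add h2).add h3
      refine h.congr_deriv ?_
      rw [hm x, hn x, hb x]; ring
    have hconst := is_const_of_deriv_eq_zero
      (f := fun y => m y ^ 2 + n y ^ 2 + b y ^ 2)
      (fun y => (key y).differentiableAt) (fun y => (key y).deriv)
    intro x
    have hx := hconst x 0
    nlinarith [sq_nonneg (n x), sq_nonneg (b x), sq_abs (m x), abs_nonneg (m x)]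
  set f : ℝ → ℝ := fun s : ℝ => (1 - α * s ^ 2 / 2) * Real.exp (-α * s ^ 2 / 4) * m s
    with hfdef
  have hmcont : Continuous m := hmdiff.continuous
  have hfcont : Continuous f := by
    rw [hfdef]
    have c1 : Continuous fun s : ℝ => (1 - α * s ^ 2 / 2) := by continuity
    have c2 : Continuous fun s : ℝ => Real.exp (-α * s ^ 2 / 4) := by continuity
    exact (c1.mul c2).mul hmcont
  have hfb : ∀ s, |f s| ≤ (1 + α * s ^ 2 / 2) * Real.exp (-α * s ^ 2 / 4) := by
    intro s
    simp only [hfdef]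
    rw [abs_mul, abs_mul, abs_of_nonneg (Real.exp_pos _).le]
    have hb1 : |1 - α * s ^ 2 / 2| ≤ 1 + α * s ^ 2 / 2 := by
      rw [abs_le]; constructor <;> nlinarith [sq_nonneg s]
    have hms := hm1 s
    calc |1 - α * s ^ 2 / 2| * Real.exp (-α * s ^ 2 / 4) * |m s|
        ≤ (1 + α * s ^ 2 / 2) * Real.exp (-α * s ^ 2 / 4) * 1 := by gcongr
      _ = (1 + α * s ^ 2 / 2) * Real.exp (-α * s ^ 2 / 4) := by ring
  have hIB : Integrable (fun s : ℝ => (1 + α * s ^ 2 / 2) * Real.exp (-α * s ^ 2 / 4)) := by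
    have h := (aux_I0 hα0).add ((aux_I2 hα0).const_mul (α / 2))
    exact h.congr (ae_of_all _ fun s => by
      simp only [Pi.add_apply]; ring)
  have hIA : Integrable (fun s : ℝ => (α * s ^ 2 / 2 - 1) * Real.exp (-α * s ^ 2 / 4)) := by
    have h := ((aux_I2 hα0).const_mul (α / 2)).sub (aux_I0 hα0)
    exact h.congr (ae_of_all _ fun s => by
      simp only [Pi.sub_apply]; ring)
  have hfint : Integrable f := by
    refine hIB.mono' hfcont.aestronglyMeasurable ?_
    exact Eventually.of_forall fun s => by rw [Real.norm_eq_abs]; exact hfb s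
  have hFTC : ∀ x : ℝ, HasDerivAt (fun y => ∫ s in (0:ℝ)..y, f s) (f x) x := fun x =>
    intervalIntegral.integral_hasDerivAt_right hfint.intervalIntegrable
      hfcont.stronglyMeasurable.stronglyMeasurableAtFilter hfcont.continuousAt
  have htail : ∀ x : ℝ, (∫ s in Set.Ioi x, f s)
      = (∫ s in Set.Ioi (0:ℝ), f s) - ∫ s in (0:ℝ)..x, f s := by
    intro x
    have h1 := intervalIntegral.integral_Iic_add_Ioi (b := x)
      hfint.integrableOn hfint.integrableOn
    have h2 := intervalIntegral.integral_Iic_add_Ioi (b := (0:ℝ))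
      hfint.integrableOn hfint.integrableOn
    have h3 := intervalIntegral.integral_Iic_sub_Iic (a := (0:ℝ)) (b := x)
      hfint.integrableOn hfint.integrableOn
    linarith
  have hΦ : ∀ x : ℝ, HasDerivAt (fun y =>
      b y - β / (2 * c) * (y * Real.exp (-α * y ^ 2 / 4) * m y)
        - β / (2 * c) * ∫ s in Set.Ioi y, f s) 0 x := by
    intro x
    have hb' : HasDerivAt b (β * x / 2 * n x) x := by
      have h := (hbdiff x).hasDerivAt
      rwa [hb x] at h
    have hm' : HasDerivAt m (c * Real.exp (α * x ^ 2 / 4) * n x) x := by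
      have h := (hmdiff x).hasDerivAt
      rwa [hm x] at h
    have hee : Real.exp (-α * x ^ 2 / 4) * Real.exp (α * x ^ 2 / 4) = 1 := by
      rw [← Real.exp_add, show -α * x ^ 2 / 4 + α * x ^ 2 / 4 = 0 by ring, Real.exp_zero]
    have hterm : HasDerivAt (fun y => y * Real.exp (-α * y ^ 2 / 4) * m y)
        ((1 - α * x ^ 2 / 2) * Real.exp (-α * x ^ 2 / 4) * m x + c * x * n x) x := by
      have h := (aux_hu (α := α) x).mul hm'
      refine h.congr_deriv ?_
      linear_combination (c * x * n x) * hee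
    have hint' : HasDerivAt (fun y => ∫ s in Set.Ioi y, f s) (-(f x)) x := by
      have heq : (fun y : ℝ => ∫ s in Set.Ioi y, f s)
          = fun y => (∫ s in Set.Ioi (0:ℝ), f s) - ∫ s in (0:ℝ)..y, f s := funext htail
      rw [heq]
      exact ((hasDerivAt_const x (∫ s in Set.Ioi (0:ℝ), f s)).sub (hFTC x)).congr_deriv (by simp)
    have h := (hb'.sub (hterm.const_mul (β / (2 * c)))).sub (hint'.const_mul (β / (2 * c)))
    refine h.congr_deriv ?_
    simp only [hfdef]
    field_simp
    ring
  have hform : ∀ x : ℝ,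
      b x - β / (2 * c) * (x * Real.exp (-α * x ^ 2 / 4) * m x)
        - β / (2 * c) * (∫ s in Set.Ioi x, f s)
      = b 0 - β / (2 * c) * ∫ s in Set.Ioi (0:ℝ), f s := by
    intro x
    have h := is_const_of_deriv_eq_zero
      (f := fun y => b y - β / (2 * c) * (y * Real.exp (-α * y ^ 2 / 4) * m y)
        - β / (2 * c) * ∫ s in Set.Ioi y, f s)
      (fun y => (hΦ y).differentiableAt) (fun y => (hΦ y).deriv) x 0
    simpa using h
  have hform2 : ∀ x : ℝ,
      b x = (b 0 - β / (2 * c) * ∫ s in Set.Ioi (0:ℝ), f s)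
        + (β * x / (2 * c)) * Real.exp (-α * x ^ 2 / 4) * m x
        + β / (2 * c) * ∫ s in Set.Ioi x, f s := by
    intro x
    linear_combination hform x
  refine ⟨fun x => hfint.integrableOn, b 0 - β / (2 * c) * ∫ s in Set.Ioi (0:ℝ), f s,
    rfl, ?_, hform2, ?_⟩
  · -- Tendsto
    have ht1 : Tendsto (fun x : ℝ => (β * x / (2 * c)) * Real.exp (-α * x ^ 2 / 4) * m x)
        atTop (nhds 0) := by
      have hgt : Tendsto (fun x : ℝ => β / (2 * c) * (x * Real.exp (-α * x ^ 2 / 4)))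
          atTop (nhds 0) := by
        simpa using (aux_xe_tendsto hα0).const_mul (β / (2 * c))
      refine squeeze_zero_norm' ?_ hgt
      · filter_upwards [eventually_ge_atTop (0:ℝ)] with x hx
        have ha : (0:ℝ) ≤ β * x / (2 * c) :=
          div_nonneg (mul_nonneg hβ0 hx) (by positivity)
        rw [Real.norm_eq_abs, abs_mul, abs_mul, abs_of_nonneg ha,
          abs_of_nonneg (Real.exp_pos _).le]
        calc β * x / (2 * c) * Real.exp (-α * x ^ 2 / 4) * |m x|
            ≤ β * x / (2 * c) * Real.exp (-α * x ^ 2 / 4) * 1 :=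
              mul_le_mul_of_nonneg_left (hm1 x)
                (mul_nonneg ha (Real.exp_pos _).le)
          _ = β / (2 * c) * (x * Real.exp (-α * x ^ 2 / 4)) := by ring
    have ht2 : Tendsto (fun x : ℝ => β / (2 * c) * ∫ s in Set.Ioi x, f s)
        atTop (nhds 0) := by
      have h1 : Tendsto (fun x : ℝ => ∫ s in (0:ℝ)..x, f s) atTop
          (nhds (∫ s in Set.Ioi (0:ℝ), f s)) :=
        MeasureTheory.intervalIntegral_tendsto_integral_Ioi 0 hfint.integrableOn tendsto_id
      have h2 : Tendsto (fun x : ℝ => ∫ s in Set.Ioi x, f s) atTop (nhds 0) := by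
        have h := (tendsto_const_nhds
          (x := ∫ s in Set.Ioi (0:ℝ), f s) (f := atTop (α := ℝ))).sub h1
        simp only [sub_self] at h
        exact h.congr fun x => (htail x).symm
      simpa using h2.const_mul (β / (2 * c))
    have h := (tendsto_const_nhds
      (x := b 0 - β / (2 * c) * ∫ s in Set.Ioi (0:ℝ), f s) (f := atTop (α := ℝ))).add
      ht1 |>.add ht2
    simp only [add_zero] at h
    exact h.congr fun x => (hform2 x).symm
  · -- the quantitative bound
    intro x hx
    have hx0 : (0:ℝ) < x := by linarith
    have hexpx : Real.exp (-α * x ^ 2 / 4) ≤ x * Real.exp (-α * x ^ 2 / 4) := by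
      nlinarith [Real.exp_pos (-α * x ^ 2 / 4)]
    have h1 : ∫ s in Set.Ioi x, (α * s ^ 2 / 2 - 1) * Real.exp (-α * s ^ 2 / 4)
        = x * Real.exp (-α * x ^ 2 / 4) := by
      have hderiv : ∀ s ∈ Set.Ici x,
          HasDerivAt (fun t : ℝ => -(t * Real.exp (-α * t ^ 2 / 4)))
            ((α * s ^ 2 / 2 - 1) * Real.exp (-α * s ^ 2 / 4)) s := by
        intro s _
        have h := (aux_hu (α := α) s).neg
        refine h.congr_deriv ?_; ring
      have htt : Tendsto (fun t : ℝ => -(t * Real.exp (-α * t ^ 2 / 4))) atTop (nhds 0) := by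
        simpa using (aux_xe_tendsto hα0).neg
      have h := MeasureTheory.integral_Ioi_of_hasDerivAt_of_tendsto' hderiv
        hIA.integrableOn htt
      rw [h]; ring
    have h2 : ∫ s in Set.Ioi x, s * Real.exp (-α * s ^ 2 / 4)
        = 2 / α * Real.exp (-α * x ^ 2 / 4) := by
      have hderiv : ∀ s ∈ Set.Ici x,
          HasDerivAt (fun t : ℝ => -(2 / α * Real.exp (-α * t ^ 2 / 4)))
            (s * Real.exp (-α * s ^ 2 / 4)) s := by
        intro s _
        have h := ((aux_hexp (α := α) s).const_mul (2 / α)).neg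
        refine h.congr_deriv ?_
        field_simp
      have htt : Tendsto (fun t : ℝ => -(2 / α * Real.exp (-α * t ^ 2 / 4))) atTop (nhds 0) := by
        simpa using ((aux_e_tendsto hα0).const_mul (2 / α)).neg
      have h := MeasureTheory.integral_Ioi_of_hasDerivAt_of_tendsto' hderiv
        (aux_I1 hα0).integrableOn htt
      rw [h]; ring
    have h3 : (∫ s in Set.Ioi x, Real.exp (-α * s ^ 2 / 4))
        ≤ ∫ s in Set.Ioi x, s * Real.exp (-α * s ^ 2 / 4) := by
      apply MeasureTheory.setIntegral_mono_on (aux_I0 hα0).integrableOn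
        (aux_I1 hα0).integrableOn measurableSet_Ioi
      intro s hs
      have h1s : (1:ℝ) ≤ s := le_trans hx (le_of_lt hs)
      nlinarith [Real.exp_pos (-α * s ^ 2 / 4)]
    have h4 : |∫ s in Set.Ioi x, f s|
        ≤ (1 + 4 / α) * (x * Real.exp (-α * x ^ 2 / 4)) := by
      have ha : |∫ s in Set.Ioi x, f s| ≤ ∫ s in Set.Ioi x, |f s| := by
        simpa [Real.norm_eq_abs] using
          norm_integral_le_integral_norm (μ := volume.restrict (Set.Ioi x)) f
      have hbnd : (∫ s in Set.Ioi x, |f s|)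
          ≤ ∫ s in Set.Ioi x, (1 + α * s ^ 2 / 2) * Real.exp (-α * s ^ 2 / 4) :=
        MeasureTheory.setIntegral_mono_on hfint.abs.integrableOn hIB.integrableOn
          measurableSet_Ioi (fun s _ => hfb s)
      have hsplit : (∫ s in Set.Ioi x, (1 + α * s ^ 2 / 2) * Real.exp (-α * s ^ 2 / 4))
          = (∫ s in Set.Ioi x, (α * s ^ 2 / 2 - 1) * Real.exp (-α * s ^ 2 / 4))
            + 2 * ∫ s in Set.Ioi x, Real.exp (-α * s ^ 2 / 4) := by
        calc (∫ s in Set.Ioi x, (1 + α * s ^ 2 / 2) * Real.exp (-α * s ^ 2 / 4))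
            = ∫ s in Set.Ioi x, ((α * s ^ 2 / 2 - 1) * Real.exp (-α * s ^ 2 / 4)
                + 2 * Real.exp (-α * s ^ 2 / 4)) :=
              MeasureTheory.integral_congr_ae (ae_of_all _ fun s => by ring)
          _ = (∫ s in Set.Ioi x, (α * s ^ 2 / 2 - 1) * Real.exp (-α * s ^ 2 / 4))
                + ∫ s in Set.Ioi x, 2 * Real.exp (-α * s ^ 2 / 4) :=
              MeasureTheory.integral_add hIA.integrableOn
                ((aux_I0 hα0).const_mul 2).integrableOn
          _ = _ := by rw [MeasureTheory.integral_const_mul]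
      have h5 : (∫ s in Set.Ioi x, Real.exp (-α * s ^ 2 / 4))
          ≤ 2 / α * Real.exp (-α * x ^ 2 / 4) := h2 ▸ h3
      calc |∫ s in Set.Ioi x, f s|
          ≤ ∫ s in Set.Ioi x, (1 + α * s ^ 2 / 2) * Real.exp (-α * s ^ 2 / 4) :=
            le_trans ha hbnd
        _ = (∫ s in Set.Ioi x, (α * s ^ 2 / 2 - 1) * Real.exp (-α * s ^ 2 / 4))
              + 2 * ∫ s in Set.Ioi x, Real.exp (-α * s ^ 2 / 4) := hsplit
        _ ≤ x * Real.exp (-α * x ^ 2 / 4) + 2 * (2 / α * Real.exp (-α * x ^ 2 / 4)) := by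
            rw [h1]; linarith
        _ = x * Real.exp (-α * x ^ 2 / 4) + 4 / α * Real.exp (-α * x ^ 2 / 4) := by ring
        _ ≤ x * Real.exp (-α * x ^ 2 / 4) + 4 / α * (x * Real.exp (-α * x ^ 2 / 4)) := by
            gcongr
        _ = (1 + 4 / α) * (x * Real.exp (-α * x ^ 2 / 4)) := by ring
    have habs : |b x - (b 0 - β / (2 * c) * ∫ s in Set.Ioi (0:ℝ), f s)|
        ≤ |(β * x / (2 * c)) * Real.exp (-α * x ^ 2 / 4) * m x|
          + |β / (2 * c) * ∫ s in Set.Ioi x, f s| := by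
      have h := hform2 x
      rw [show b x - (b 0 - β / (2 * c) * ∫ s in Set.Ioi (0:ℝ), f s)
          = (β * x / (2 * c)) * Real.exp (-α * x ^ 2 / 4) * m x
            + β / (2 * c) * ∫ s in Set.Ioi x, f s by linarith]
      exact abs_add_le _ _
    have ha0 : (0:ℝ) ≤ β * x / (2 * c) :=
      div_nonneg (mul_nonneg hβ0 hx0.le) (by positivity)
    have hA1 : |(β * x / (2 * c)) * Real.exp (-α * x ^ 2 / 4) * m x|
        ≤ β / (2 * c) * (x * Real.exp (-α * x ^ 2 / 4)) := by
      rw [abs_mul, abs_mul, abs_of_nonneg ha0, abs_of_nonneg (Real.exp_pos _).le]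
      calc β * x / (2 * c) * Real.exp (-α * x ^ 2 / 4) * |m x|
          ≤ β * x / (2 * c) * Real.exp (-α * x ^ 2 / 4) * 1 :=
            mul_le_mul_of_nonneg_left (hm1 x)
              (mul_nonneg ha0 (Real.exp_pos _).le)
        _ = β / (2 * c) * (x * Real.exp (-α * x ^ 2 / 4)) := by ring
    have hb0' : (0:ℝ) ≤ β / (2 * c) := div_nonneg hβ0 (by positivity)
    have hA2 : |β / (2 * c) * ∫ s in Set.Ioi x, f s|
        ≤ β / (2 * c) * ((1 + 4 / α) * (x * Real.exp (-α * x ^ 2 / 4))) := by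
      rw [abs_mul, abs_of_nonneg hb0']
      exact mul_le_mul_of_nonneg_left h4 hb0'
    have hsum : β / (2 * c) * (x * Real.exp (-α * x ^ 2 / 4))
        + β / (2 * c) * ((1 + 4 / α) * (x * Real.exp (-α * x ^ 2 / 4)))
        ≤ 6 * β / (c * α) * x * Real.exp (-α * x ^ 2 / 4) := by
      have hxe0 : (0:ℝ) ≤ x * Real.exp (-α * x ^ 2 / 4) := by positivity
      have hkey : 2 + 4 / α ≤ 12 / α := by
        have h8 : (0:ℝ) ≤ (8 - 2 * α) / α := div_nonneg (by linarith) hα0.le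
        have heq : 12 / α - (2 + 4 / α) = (8 - 2 * α) / α := by field_simp; ring
        linarith
      have hl : β / (2 * c) * (x * Real.exp (-α * x ^ 2 / 4))
          + β / (2 * c) * ((1 + 4 / α) * (x * Real.exp (-α * x ^ 2 / 4)))
          = β / (2 * c) * ((2 + 4 / α) * (x * Real.exp (-α * x ^ 2 / 4))) := by ring
      have hr : 6 * β / (c * α) * x * Real.exp (-α * x ^ 2 / 4)
          = β / (2 * c) * (12 / α * (x * Real.exp (-α * x ^ 2 / 4))) := by
        field_simp
        ring
      rw [hl, hr]
      exact mul_le_mul_of_nonneg_left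
        (mul_le_mul_of_nonneg_right hkey hxe0) hb0'
    linarith [habs, hA1, hA2, hsum]
end
end
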